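/- arXiv:1712.00066 — 4 statements merged into one kernel-verified Lean document; each statement's English description precedes it below -/
import Mathlib

section
/- Every orientation-preserving homeomorphism h of the real line has a square root: there exists an orientation-preserving homeomorphism ψ of the real line such that ψ ∘ ψ = h. -/
open Set

namespace SqrtAux

/-- `rel h x y`: no fixed point of `h` in the closed interval between `x` and `y`. -/
def rel (h : ℝ ≃o ℝ) (x y : ℝ) : Prop := ∀ z ∈ Set.uIcc x y, h z ≠ z

lemma rel_symm {h : ℝ ≃o ℝ} {x y : ℝ} (hr : rel h x y) : rel h y x := fun z hz =>
  hr z (by rwa [Set.uIcc_comm])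

lemma rel_trans {h : ℝ ≃o ℝ} {x y z : ℝ} (h1 : rel h x y) (h2 : rel h y z) : rel h x z :=
  fun w hw => (Set.uIcc_subset_uIcc_union_uIcc hw).elim (h1 w) (h2 w)

lemma rel_self {h : ℝ ≃o ℝ} {x : ℝ} (hx : h x ≠ x) : rel h x x := by
  intro z hz
  rw [Set.uIcc_self, Set.mem_singleton_iff] at hz
  subst hz; exact hx

lemma rel_inv {h : ℝ ≃o ℝ} {x y : ℝ} (hr : rel h x y) : rel h⁻¹ x y := by
  intro z hz hzf
  refine hr z hz ?_
  conv_lhs => rw [← hzf]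
  exact h.apply_symm_apply z

/-- fixed points of h and h⁻¹ agree -/
lemma fix_inv_iff (h : ℝ ≃o ℝ) (z : ℝ) : (h⁻¹ : ℝ ≃o ℝ) z = z ↔ h z = z := by
  constructor
  · intro hz; conv_lhs => rw [← hz]
    exact h.apply_symm_apply z
  · intro hz; conv_lhs => rw [← hz]
    exact h.symm_apply_apply z

def st (h : ℝ ≃o ℝ) : Setoid {x : ℝ // h x ≠ x} where
  r x y := rel h x.1 y.1
  iseqv := ⟨fun x => rel_self x.2, rel_symm, rel_trans⟩

noncomputable def base (h : ℝ ≃o ℝ) (x : {x : ℝ // h x ≠ x}) : ℝ :=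
  (Quotient.mk (st h) x).out.1

lemma base_rel (h : ℝ ≃o ℝ) (x : {x : ℝ // h x ≠ x}) : rel h (base h x) x.1 :=
  Quotient.exact ((Quotient.mk (st h) x).out_eq)

lemma base_nonfix (h : ℝ ≃o ℝ) (x : {x : ℝ // h x ≠ x}) : h (base h x) ≠ base h x :=
  (Quotient.mk (st h) x).out.2

lemma base_eq (h : ℝ ≃o ℝ) (x y : {x : ℝ // h x ≠ x}) (hr : rel h x.1 y.1) :
    base h x = base h y := by
  unfold base
  rw [Quotient.sound (a := x) (b := y) hr]

/-- constancy of the sign of `h x - x` on components -/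
lemma sign_rel {h : ℝ ≃o ℝ} {x y : ℝ} (hr : rel h x y) (hsx : x < h x) (hy : h y ≠ y) :
    y < h y := by
  by_contra hle
  have hy' : h y < y := lt_of_le_of_ne (not_lt.1 hle) hy
  have hc : ContinuousOn (fun z => h z - z) (Set.uIcc x y) :=
    (h.continuous.sub continuous_id).continuousOn
  have h0 : (0:ℝ) ∈ Set.uIcc (h x - x) (h y - y) := by
    rw [Set.mem_uIcc]; right
    constructor <;> linarith
  obtain ⟨z, hz, hz0⟩ := intermediate_value_uIcc hc h0
  exact hr z hz (by linarith [sub_eq_zero.1 hz0])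



lemma zpow_succ_apply (g : ℝ ≃o ℝ) (n : ℤ) (x : ℝ) : (g^(n+1)) x = (g^n) (g x) := by
  rw [zpow_add_one]; rfl

lemma zpow_succ_apply' (g : ℝ ≃o ℝ) (n : ℤ) (x : ℝ) : (g^(n+1)) x = g ((g^n) x) := by
  rw [add_comm, zpow_add, zpow_one]; rfl

lemma zpow_pred_apply (g : ℝ ≃o ℝ) (n : ℤ) (x : ℝ) : g.symm ((g^n) x) = (g^(n-1)) x := by
  apply g.injective
  rw [g.apply_symm_apply, ← zpow_succ_apply']
  norm_num

lemma zpow_neg_apply (g : ℝ ≃o ℝ) (n : ℤ) (x : ℝ) : (g^(-n)) ((g^n) x) = x := by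
  have : (g^(-n) * g^n) x = x := by rw [← zpow_add]; simp
  exact this

lemma zpow_neg_apply' (g : ℝ ≃o ℝ) (n : ℤ) (x : ℝ) : (g^n) ((g^(-n)) x) = x := by
  have : (g^n * g^(-n)) x = x := by rw [← zpow_add]; simp
  exact this

lemma p_strictMono (g : ℝ ≃o ℝ) {b : ℝ} (hb : b < g b) :
    StrictMono (fun n : ℤ => (g^n) b) := by
  apply strictMono_int_of_lt_succ
  intro n
  show (g^n) b < (g^(n+1)) b
  rw [zpow_succ_apply]
  exact (g^n).strictMono hb

noncomputable def u (g : ℝ ≃o ℝ) (b t : ℝ) : ℝ := (g ^ ⌊t⌋) (b + Int.fract t * (g b - b))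

lemma u_lb (g : ℝ ≃o ℝ) {b : ℝ} (hb : b < g b) (t : ℝ) : (g^⌊t⌋) b ≤ u g b t :=
  (g^⌊t⌋).monotone (le_add_of_nonneg_right
    (mul_nonneg (Int.fract_nonneg t) (by linarith)))

lemma u_ub (g : ℝ ≃o ℝ) {b : ℝ} (hb : b < g b) (t : ℝ) : u g b t < (g^(⌊t⌋+1)) b := by
  rw [zpow_succ_apply]
  apply (g^⌊t⌋).strictMono
  nlinarith [Int.fract_lt_one t, Int.fract_nonneg t]

lemma u_strictMono (g : ℝ ≃o ℝ) {b : ℝ} (hb : b < g b) : StrictMono (u g b) := by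
  intro t1 t2 hlt
  rcases eq_or_lt_of_le (Int.floor_le_floor hlt.le) with hfl | hfl
  · show (g ^ ⌊t1⌋) _ < (g ^ ⌊t2⌋) _
    rw [← hfl]
    apply (g^⌊t1⌋).strictMono
    have h1 : Int.fract t1 < Int.fract t2 := by
      unfold Int.fract; rw [← hfl]; linarith
    nlinarith
  · calc u g b t1 < (g^(⌊t1⌋+1)) b := u_ub g hb t1
      _ ≤ (g^⌊t2⌋) b := (p_strictMono g hb).monotone (by omega)
      _ ≤ u g b t2 := u_lb g hb t2

lemma u_succ (g : ℝ ≃o ℝ) (b t : ℝ) : u g b (t + 1) = g (u g b t) := by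
  unfold u
  rw [Int.floor_add_one, Int.fract_add_one, zpow_succ_apply']

lemma comm_apply_zpow {g h : ℝ ≃o ℝ} (hc : ∀ z, g (h z) = h (g z)) (n : ℤ) (z : ℝ) :
    (g^n) (h z) = h ((g^n) z) := by
  have hgh : Commute g h := DFunLike.ext _ _ fun z => hc z
  exact DFunLike.congr_fun (hgh.zpow_left n) z

lemma fix_zpow {g h : ℝ ≃o ℝ} (hc : ∀ z, g (h z) = h (g z)) (n : ℤ) {z : ℝ}
    (hz : h z ≠ z) : h ((g^n) z) ≠ (g^n) z := by
  rw [← comm_apply_zpow hc n z]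
  exact fun hf => hz ((g^n).injective hf)

lemma rel_map {g h : ℝ ≃o ℝ} (hc : ∀ z, g (h z) = h (g z)) {x y : ℝ}
    (hr : rel h x y) : rel h (g x) (g y) := by
  intro z hz hzf
  refine hr (g.symm z) ?_ ?_
  · rw [Set.mem_uIcc] at hz ⊢
    rcases hz with ⟨h1, h2⟩ | ⟨h1, h2⟩
    · left
      constructor
      · have := g.symm.monotone h1; rwa [g.symm_apply_apply] at this
      · have := g.symm.monotone h2; rwa [g.symm_apply_apply] at this
    · right
      constructor
      · have := g.symm.monotone h1; rwa [g.symm_apply_apply] at this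
      · have := g.symm.monotone h2; rwa [g.symm_apply_apply] at this
  · apply g.injective
    rw [hc, g.apply_symm_apply, hzf]


section Chart

variable {g h : ℝ ≃o ℝ} {b : ℝ}

lemma rel_b_gb (hb : b < g b) (hfix : ∀ z, g z = z ↔ h z = z) : rel h b (g b) := by
  intro z hz hzf
  rw [Set.mem_uIcc] at hz
  have hbz : b ≤ z ∧ z ≤ g b := by
    rcases hz with hz | hz
    · exact hz
    · exact ⟨le_trans hb.le hz.1, le_trans hz.2 hb.le⟩
  have hgz : g z = z := (hfix z).2 hzf
  have h1 : g b ≤ g z := g.monotone hbz.1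
  have h2 : z = g b := le_antisymm hbz.2 (by linarith [h1, hgz.le, hgz.ge])
  subst h2
  exact absurd (g.injective hgz) (ne_of_gt hb)

lemma step_rel (hb : b < g b) (hfix : ∀ z, g z = z ↔ h z = z)
    (hc : ∀ z, g (h z) = h (g z)) (n : ℤ) : rel h ((g^n) b) ((g^(n+1)) b) := by
  induction n using Int.induction_on with
  | zero => simpa using rel_b_gb hb hfix
  | succ i ih =>
    have := rel_map hc ih
    rwa [← zpow_succ_apply', ← zpow_succ_apply'] at this
  | pred i ih =>
    have hc' : ∀ z, g.symm (h z) = h (g.symm z) := by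
      intro z
      apply g.injective
      rw [hc, g.apply_symm_apply, g.apply_symm_apply]
    have hm := rel_map hc' ih
    rw [zpow_pred_apply, zpow_pred_apply] at hm
    have e2 : (-(i:ℤ)+1-1) = -(i:ℤ)-1+1 := by ring
    rw [e2] at hm
    exact hm

lemma rel_b_zpow (hb : b < g b) (hfix : ∀ z, g z = z ↔ h z = z)
    (hc : ∀ z, g (h z) = h (g z)) (n : ℤ) : rel h b ((g^n) b) := by
  have hbnf : h b ≠ b := fun hf => absurd ((hfix b).2 hf) (ne_of_gt hb)
  induction n using Int.induction_on with
  | zero => simpa using rel_self hbnf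
  | succ i ih => exact rel_trans ih (step_rel hb hfix hc i)
  | pred i ih =>
    refine rel_trans ih (rel_symm ?_)
    have hs := step_rel hb hfix hc (-(i:ℤ)-1)
    rwa [show -(i:ℤ)-1+1 = -(i:ℤ) from by ring] at hs

lemma rel_map_zpow (hc : ∀ z, g (h z) = h (g z)) {x y : ℝ} (hr : rel h x y) (n : ℤ) :
    rel h ((g^n) x) ((g^n) y) := by
  induction n using Int.induction_on with
  | zero => simpa using hr
  | succ i ih =>
    have := rel_map hc ih
    rwa [← zpow_succ_apply', ← zpow_succ_apply'] at this
  | pred i ih =>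
    have hc' : ∀ z, g.symm (h z) = h (g.symm z) := by
      intro z
      apply g.injective
      rw [hc, g.apply_symm_apply, g.apply_symm_apply]
    have hm := rel_map hc' ih
    rwa [zpow_pred_apply, zpow_pred_apply] at hm

lemma u_nonfix_rel (hb : b < g b) (hfix : ∀ z, g z = z ↔ h z = z)
    (hc : ∀ z, g (h z) = h (g z)) (t : ℝ) :
    h (u g b t) ≠ u g b t ∧ rel h b (u g b t) := by
  set w := b + Int.fract t * (g b - b) with hw
  have hbw : b ≤ w := le_add_of_nonneg_right (mul_nonneg (Int.fract_nonneg t) (by linarith))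
  have hwgb : w < g b := by
    nlinarith [Int.fract_lt_one t, Int.fract_nonneg t]
  have hwnf : h w ≠ w := by
    intro hf
    have hgw : g w = w := (hfix w).2 hf
    have h1 : g b ≤ g w := g.monotone hbw
    rw [hgw] at h1
    linarith
  have hrelbw : rel h b w := by
    intro z hz hzf
    rw [Set.uIcc_of_le hbw] at hz
    have hgz : g z = z := (hfix z).2 hzf
    have : g b ≤ g z := g.monotone hz.1
    rw [hgz] at this
    linarith [hz.2]
  constructor
  · exact fix_zpow hc ⌊t⌋ hwnf
  · exact rel_trans (rel_b_zpow hb hfix hc ⌊t⌋) (rel_map_zpow hc hrelbw ⌊t⌋)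


lemma exists_lt_zpow (hb : b < g b) (hfix : ∀ z, g z = z ↔ h z = z)
    {x : ℝ} (hrx : rel h b x) : ∃ n : ℤ, x < (g^n) b := by
  by_contra hcon
  push_neg at hcon
  set s : ℕ → ℝ := fun k => (g^(k:ℤ)) b with hs
  have hmono : Monotone s := fun k l hkl =>
    ((p_strictMono g hb).monotone (by exact_mod_cast hkl))
  have hbdd : BddAbove (Set.range s) := ⟨x, by rintro _ ⟨k, rfl⟩; exact hcon _⟩
  set L := ⨆ k, s k with hL
  have hconv : Filter.Tendsto s Filter.atTop (nhds L) := tendsto_atTop_ciSup hmono hbdd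
  have hconv2 : Filter.Tendsto (fun k => s (k+1)) Filter.atTop (nhds L) :=
    hconv.comp (Filter.tendsto_add_atTop_nat 1)
  have hgs : ∀ k, g (s k) = s (k+1) := by
    intro k
    show g ((g^(k:ℤ)) b) = (g^((k+1:ℕ):ℤ)) b
    rw [← zpow_succ_apply']
    norm_num
  have hconv3 : Filter.Tendsto (fun k => g (s k)) Filter.atTop (nhds (g L)) :=
    (g.continuous.tendsto L).comp hconv
  have hgL : g L = L := by
    refine tendsto_nhds_unique hconv3 ?_
    simpa only [hgs] using hconv2
  have hL0 : b ≤ L := by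
    have : s 0 ≤ L := le_ciSup hbdd 0
    simpa [hs] using this
  have hLx : L ≤ x := ciSup_le fun k => hcon _
  exact hrx L (Set.mem_uIcc.2 (Or.inl ⟨hL0, hLx⟩)) ((hfix L).1 hgL)

lemma exists_zpow_le (hb : b < g b) (hfix : ∀ z, g z = z ↔ h z = z)
    {x : ℝ} (hrx : rel h b x) : ∃ n : ℤ, (g^n) b ≤ x := by
  by_contra hcon
  push_neg at hcon
  set s : ℕ → ℝ := fun k => (g^(-(k:ℤ))) b with hs
  have hanti : Antitone s := fun k l hkl =>
    ((p_strictMono g hb).monotone (by simp; exact_mod_cast hkl))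
  have hbdd : BddBelow (Set.range s) := ⟨x, by rintro _ ⟨k, rfl⟩; exact (hcon _).le⟩
  set L := ⨅ k, s k with hL
  have hconv : Filter.Tendsto s Filter.atTop (nhds L) := tendsto_atTop_ciInf hanti hbdd
  have hconv2 : Filter.Tendsto (fun k => s (k+1)) Filter.atTop (nhds L) :=
    hconv.comp (Filter.tendsto_add_atTop_nat 1)
  have hgs : ∀ k, g (s (k+1)) = s k := by
    intro k
    show g ((g^(-((k+1:ℕ)):ℤ)) b) = (g^(-(k:ℤ))) b
    have e : (-((k+1:ℕ)):ℤ) + 1 = -(k:ℤ) := by push_cast; ring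
    rw [← zpow_succ_apply', e]
  have hconv3 : Filter.Tendsto (fun k => g (s (k+1))) Filter.atTop (nhds (g L)) :=
    (g.continuous.tendsto L).comp hconv2
  have hgL : g L = L := by
    refine tendsto_nhds_unique hconv3 ?_
    simpa only [hgs] using hconv
  have hL0 : L ≤ b := by
    have : L ≤ s 0 := ciInf_le hbdd 0
    simpa [hs] using this
  have hLx : x ≤ L := le_ciInf fun k => (hcon _).le
  exact hrx L (Set.mem_uIcc.2 (Or.inr ⟨hLx, hL0⟩)) ((hfix L).1 hgL)

/-- surjectivity of the chart onto the component of `b` -/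
lemma exists_chart (hb : b < g b) (hfix : ∀ z, g z = z ↔ h z = z)
    {x : ℝ} (hrx : rel h b x) : ∃ t, u g b t = x := by
  obtain ⟨n0, hn0⟩ := exists_lt_zpow hb hfix hrx
  obtain ⟨n, hn, hmax⟩ := Int.exists_greatest_of_bdd
    (P := fun n : ℤ => (g^n) b ≤ x)
    ⟨n0, fun z hz => ((p_strictMono g hb).lt_iff_lt.1 (lt_of_le_of_lt hz hn0)).le⟩
    (exists_zpow_le hb hfix hrx)
  have hx1 : x < (g^(n+1)) b := by
    by_contra hcon
    have := hmax (n+1) (not_lt.1 hcon)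
    omega
  set w := (g^(-n)) x with hw
  have hbw : b ≤ w := by
    have := (g^(-n)).monotone hn
    rwa [zpow_neg_apply] at this
  have hwgb : w < g b := by
    have := (g^(-n)).strictMono hx1
    rw [show ((g^(-n)) ((g^(n+1)) b)) = g b from ?_] at this
    · exact this
    · have : (g^(-n) * g^(n+1)) b = (g^(1:ℤ)) b := by rw [← zpow_add]; norm_num
      simpa using this
  have hd : (0:ℝ) < g b - b := by linarith
  set r := (w - b) / (g b - b) with hr
  have hr0 : 0 ≤ r := div_nonneg (by linarith) hd.le
  have hr1 : r < 1 := (div_lt_one hd).2 (by linarith)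
  refine ⟨(n:ℝ) + r, ?_⟩
  have hfl : ⌊(n:ℝ) + r⌋ = n := by
    rw [Int.floor_intCast_add, Int.floor_eq_zero_iff.2 ⟨hr0, hr1⟩, add_zero]
  have hfr : Int.fract ((n:ℝ) + r) = r := by
    rw [Int.fract_intCast_add]
    rw [Int.fract, Int.floor_eq_zero_iff.2 ⟨hr0, hr1⟩]
    simp
  show (g ^ ⌊(n:ℝ) + r⌋) (b + Int.fract ((n:ℝ)+r) * (g b - b)) = x
  rw [hfl, hfr, hr, div_mul_cancel₀ _ (ne_of_gt hd)]
  rw [show b + (w - b) = w from by ring, hw, zpow_neg_apply']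

open Classical in
noncomputable def invu (g : ℝ ≃o ℝ) (b x : ℝ) : ℝ :=
  if H : ∃ t, u g b t = x then H.choose else 0

lemma u_invu {x : ℝ} (H : ∃ t, u g b t = x) : u g b (invu g b x) = x := by
  classical
  unfold invu
  rw [dif_pos H]
  exact H.choose_spec

lemma invu_u (hb : b < g b) (t : ℝ) : invu g b (u g b t) = t :=
  (u_strictMono g hb).injective (u_invu ⟨t, rfl⟩)

end Chart


section Global

variable (h : ℝ ≃o ℝ)

lemma hfix_self : ∀ z, h z = z ↔ h z = z := fun _ => Iff.rfl

lemma hc_self : ∀ z, h (h z) = h (h z) := fun _ => rfl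

lemma hfix_inv : ∀ z, (h⁻¹ : ℝ ≃o ℝ) z = z ↔ h z = z := fix_inv_iff h

lemma hc_inv : ∀ z, (h⁻¹ : ℝ ≃o ℝ) (h z) = h ((h⁻¹ : ℝ ≃o ℝ) z) := by
  intro z
  show h.symm (h z) = h (h.symm z)
  rw [h.symm_apply_apply, h.apply_symm_apply]

lemma inv_base_lt {x : ℝ} (hx : h x ≠ x) (hbn : ¬ base h ⟨x, hx⟩ < h (base h ⟨x, hx⟩)) :
    base h ⟨x, hx⟩ < (h⁻¹ : ℝ ≃o ℝ) (base h ⟨x, hx⟩) := by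
  have hlt : h (base h ⟨x, hx⟩) < base h ⟨x, hx⟩ :=
    lt_of_le_of_ne (not_lt.1 hbn) (base_nonfix h ⟨x, hx⟩)
  have := h.symm.strictMono hlt
  rwa [h.symm_apply_apply] at this

noncomputable def f (h : ℝ ≃o ℝ) (x : ℝ) : ℝ :=
  if hx : h x = x then x
  else if base h ⟨x, hx⟩ < h (base h ⟨x, hx⟩) then
    u h (base h ⟨x, hx⟩) (invu h (base h ⟨x, hx⟩) x + 1/2)
  else
    u h⁻¹ (base h ⟨x, hx⟩) (invu h⁻¹ (base h ⟨x, hx⟩) x - 1/2)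

lemma f_fixed {x : ℝ} (hx : h x = x) : f h x = x := by
  unfold f; rw [dif_pos hx]

lemma f_eq_pos {x : ℝ} (hx : h x ≠ x) (hbp : base h ⟨x, hx⟩ < h (base h ⟨x, hx⟩)) :
    f h x = u h (base h ⟨x, hx⟩) (invu h (base h ⟨x, hx⟩) x + 1/2) := by
  unfold f; rw [dif_neg hx, if_pos hbp]

lemma f_eq_neg {x : ℝ} (hx : h x ≠ x) (hbn : ¬ base h ⟨x, hx⟩ < h (base h ⟨x, hx⟩)) :
    f h x = u h⁻¹ (base h ⟨x, hx⟩) (invu h⁻¹ (base h ⟨x, hx⟩) x - 1/2) := by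
  unfold f; rw [dif_neg hx, if_neg hbn]

lemma f_spec {x : ℝ} (hx : h x ≠ x) : h (f h x) ≠ f h x ∧ rel h x (f h x) := by
  have hrbx : rel h (base h ⟨x, hx⟩) x := base_rel h ⟨x, hx⟩
  by_cases hbp : base h ⟨x, hx⟩ < h (base h ⟨x, hx⟩)
  · rw [f_eq_pos h hx hbp]
    have hun := u_nonfix_rel hbp (hfix_self h) (hc_self h)
      (invu h (base h ⟨x, hx⟩) x + 1/2)
    exact ⟨hun.1, rel_trans (rel_symm hrbx) hun.2⟩
  · rw [f_eq_neg h hx hbp]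
    have hb := inv_base_lt h hx hbp
    have hun := u_nonfix_rel hb (hfix_inv h) (hc_inv h)
      (invu h⁻¹ (base h ⟨x, hx⟩) x - 1/2)
    exact ⟨hun.1, rel_trans (rel_symm hrbx) hun.2⟩

lemma u_pred_inv (b t : ℝ) : u h⁻¹ b (t - 1) = h (u h⁻¹ b t) := by
  have hs := u_succ h⁻¹ b (t - 1)
  rw [sub_add_cancel] at hs
  rw [hs]
  show u h⁻¹ b (t-1) = h (h.symm (u h⁻¹ b (t - 1)))
  rw [h.apply_symm_apply]

lemma base_f {x : ℝ} (hx : h x ≠ x) (hfx : h (f h x) ≠ f h x) :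
    base h ⟨f h x, hfx⟩ = base h ⟨x, hx⟩ :=
  base_eq h ⟨f h x, hfx⟩ ⟨x, hx⟩ (rel_symm (f_spec h hx).2)

lemma f_f (x : ℝ) : f h (f h x) = h x := by
  by_cases hx : h x = x
  · rw [f_fixed h hx, f_fixed h hx, hx]
  · have hrbx : rel h (base h ⟨x, hx⟩) x := base_rel h ⟨x, hx⟩
    have hfx : h (f h x) ≠ f h x := (f_spec h hx).1
    have hbase : base h ⟨f h x, hfx⟩ = base h ⟨x, hx⟩ := base_f h hx hfx
    by_cases hbp : base h ⟨x, hx⟩ < h (base h ⟨x, hx⟩)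
    · have hex : ∃ t, u h (base h ⟨x, hx⟩) t = x :=
        exists_chart hbp (hfix_self h) hrbx
      have h1 : f h x = u h (base h ⟨x, hx⟩) (invu h (base h ⟨x, hx⟩) x + 1/2) :=
        f_eq_pos h hx hbp
      have h2 : f h (f h x)
          = u h (base h ⟨x, hx⟩) (invu h (base h ⟨x, hx⟩) (f h x) + 1/2) := by
        rw [f_eq_pos h hfx (by rw [hbase]; exact hbp)]
        rw [hbase]
      rw [h2, h1, invu_u hbp]
      rw [show invu h (base h ⟨x, hx⟩) x + 1/2 + 1/2
          = invu h (base h ⟨x, hx⟩) x + 1 from by ring]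
      rw [u_succ, u_invu hex]
    · have hb := inv_base_lt h hx hbp
      have hex : ∃ t, u h⁻¹ (base h ⟨x, hx⟩) t = x :=
        exists_chart hb (hfix_inv h) hrbx
      have h1 : f h x = u h⁻¹ (base h ⟨x, hx⟩) (invu h⁻¹ (base h ⟨x, hx⟩) x - 1/2) :=
        f_eq_neg h hx hbp
      have h2 : f h (f h x)
          = u h⁻¹ (base h ⟨x, hx⟩) (invu h⁻¹ (base h ⟨x, hx⟩) (f h x) - 1/2) := by
        rw [f_eq_neg h hfx (by rw [hbase]; exact hbp)]
        rw [hbase]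
      rw [h2, h1, invu_u hb]
      rw [show invu h⁻¹ (base h ⟨x, hx⟩) x - 1/2 - 1/2
          = invu h⁻¹ (base h ⟨x, hx⟩) x - 1 from by ring]
      rw [u_pred_inv, u_invu hex]

lemma f_strictMono : StrictMono (f h) := by
  intro x y hxy
  by_cases hx : h x = x <;> by_cases hy : h y = y
  · rw [f_fixed h hx, f_fixed h hy]; exact hxy
  · rw [f_fixed h hx]
    by_contra hc
    push_neg at hc
    exact (f_spec h hy).2 x (Set.mem_uIcc.2 (Or.inr ⟨hc, hxy.le⟩)) hx
  · rw [f_fixed h hy]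
    by_contra hc
    push_neg at hc
    exact (f_spec h hx).2 y (Set.mem_uIcc.2 (Or.inl ⟨hxy.le, hc⟩)) hy
  · by_cases hr : rel h x y
    · have hbase : base h ⟨y, hy⟩ = base h ⟨x, hx⟩ :=
        base_eq h ⟨y, hy⟩ ⟨x, hx⟩ (rel_symm hr)
      have hrbx : rel h (base h ⟨x, hx⟩) x := base_rel h ⟨x, hx⟩
      have hrby : rel h (base h ⟨x, hx⟩) y := by
        rw [← hbase]; exact base_rel h ⟨y, hy⟩
      by_cases hbp : base h ⟨x, hx⟩ < h (base h ⟨x, hx⟩)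
      · rw [f_eq_pos h hx hbp, f_eq_pos h hy (by rw [hbase]; exact hbp), hbase]
        apply u_strictMono h hbp
        have hix : u h (base h ⟨x, hx⟩) (invu h (base h ⟨x, hx⟩) x) = x :=
          u_invu (exists_chart hbp (hfix_self h) hrbx)
        have hiy : u h (base h ⟨x, hx⟩) (invu h (base h ⟨x, hx⟩) y) = y :=
          u_invu (exists_chart hbp (hfix_self h) hrby)
        have : invu h (base h ⟨x, hx⟩) x < invu h (base h ⟨x, hx⟩) y :=
          (u_strictMono h hbp).lt_iff_lt.1 (by rw [hix, hiy]; exact hxy)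
        linarith
      · have hb := inv_base_lt h hx hbp
        rw [f_eq_neg h hx hbp, f_eq_neg h hy (by rw [hbase]; exact hbp), hbase]
        apply u_strictMono h⁻¹ hb
        have hix : u h⁻¹ (base h ⟨x, hx⟩) (invu h⁻¹ (base h ⟨x, hx⟩) x) = x :=
          u_invu (exists_chart hb (hfix_inv h) hrbx)
        have hiy : u h⁻¹ (base h ⟨x, hx⟩) (invu h⁻¹ (base h ⟨x, hx⟩) y) = y :=
          u_invu (exists_chart hb (hfix_inv h) hrby)
        have : invu h⁻¹ (base h ⟨x, hx⟩) x < invu h⁻¹ (base h ⟨x, hx⟩) y :=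
          (u_strictMono h⁻¹ hb).lt_iff_lt.1 (by rw [hix, hiy]; exact hxy)
        linarith
    · unfold rel at hr
      push_neg at hr
      obtain ⟨z, hzm, hzf⟩ := hr
      rw [Set.uIcc_of_le hxy.le] at hzm
      have hxz : x < z := lt_of_le_of_ne hzm.1 (fun e => hx (e ▸ hzf))
      have hzy : z < y := lt_of_le_of_ne hzm.2 (fun e => hy (e ▸ hzf))
      have h1 : f h x < z := by
        by_contra hc
        push_neg at hc
        exact (f_spec h hx).2 z (Set.mem_uIcc.2 (Or.inl ⟨hxz.le, hc⟩)) hzf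
      have h2 : z < f h y := by
        by_contra hc
        push_neg at hc
        exact (f_spec h hy).2 z (Set.mem_uIcc.2 (Or.inr ⟨hc, hzy.le⟩)) hzf
      linarith

lemma f_surjective : Function.Surjective (f h) := by
  intro y
  by_cases hy : h y = y
  · exact ⟨y, f_fixed h hy⟩
  · have hrby : rel h (base h ⟨y, hy⟩) y := base_rel h ⟨y, hy⟩
    by_cases hbp : base h ⟨y, hy⟩ < h (base h ⟨y, hy⟩)
    · set x := u h (base h ⟨y, hy⟩) (invu h (base h ⟨y, hy⟩) y - 1/2) with hxdef
      have hun := u_nonfix_rel hbp (hfix_self h) (hc_self h)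
        (invu h (base h ⟨y, hy⟩) y - 1/2)
      have hx : h x ≠ x := hun.1
      have hrxy : rel h x y := rel_trans (rel_symm hun.2) hrby
      have hbase : base h ⟨x, hx⟩ = base h ⟨y, hy⟩ := base_eq h ⟨x, hx⟩ ⟨y, hy⟩ hrxy
      refine ⟨x, ?_⟩
      rw [f_eq_pos h hx (by rw [hbase]; exact hbp), hbase, hxdef, invu_u hbp]
      rw [show invu h (base h ⟨y, hy⟩) y - 1/2 + 1/2
          = invu h (base h ⟨y, hy⟩) y from by ring]
      exact u_invu (exists_chart hbp (hfix_self h) hrby)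
    · have hb := inv_base_lt h hy hbp
      set x := u h⁻¹ (base h ⟨y, hy⟩) (invu h⁻¹ (base h ⟨y, hy⟩) y + 1/2) with hxdef
      have hun := u_nonfix_rel hb (hfix_inv h) (hc_inv h)
        (invu h⁻¹ (base h ⟨y, hy⟩) y + 1/2)
      have hx : h x ≠ x := hun.1
      have hrxy : rel h x y := rel_trans (rel_symm hun.2) hrby
      have hbase : base h ⟨x, hx⟩ = base h ⟨y, hy⟩ := base_eq h ⟨x, hx⟩ ⟨y, hy⟩ hrxy
      refine ⟨x, ?_⟩
      rw [f_eq_neg h hx (by rw [hbase]; exact hbp), hbase, hxdef, invu_u hb]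
      rw [show invu h⁻¹ (base h ⟨y, hy⟩) y + 1/2 - 1/2
          = invu h⁻¹ (base h ⟨y, hy⟩) y from by ring]
      exact u_invu (exists_chart hb (hfix_inv h) hrby)

end Global

end SqrtAux

/-- Every orientation-preserving homeomorphism of ℝ (encoded as an order
isomorphism of ℝ, which is automatically a homeomorphism) has a square root. -/
theorem square_root_exists (h : ℝ ≃o ℝ) : ∃ ψ : ℝ ≃o ℝ, ψ.trans ψ = h := by
  refine ⟨StrictMono.orderIsoOfSurjective (SqrtAux.f h)
    (SqrtAux.f_strictMono h) (SqrtAux.f_surjective h), ?_⟩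
  apply DFunLike.ext
  intro x
  show SqrtAux.f h (SqrtAux.f h x) = h x
  exact SqrtAux.f_f h x
end

section
/- Two orientation-preserving homeomorphisms φ₁, φ₂ of ℝ are conjugate in Homeo₊(ℝ) if there exists ψ ∈ Homeo₊(ℝ) with ψ(Fix(φ₁)) = Fix(φ₂) and ψ(Inc(φ₁)) = Inc(φ₂). -/
open Set
open scoped Classical

namespace WeakConjAux

/-- The non-fixed set of `φ`. -/
def Fc (φ : ℝ ≃o ℝ) : Set ℝ := {x | φ x ≠ x}

lemma mul_apply (f g : ℝ ≃o ℝ) (x : ℝ) : (f * g) x = f (g x) := rfl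

lemma iter_add (φ : ℝ ≃o ℝ) (n m : ℤ) (x : ℝ) : (φ ^ (n + m)) x = (φ ^ n) ((φ ^ m) x) := by
  rw [zpow_add, mul_apply]

lemma iter_cancel (φ : ℝ ≃o ℝ) (n : ℤ) (x : ℝ) : (φ ^ n) ((φ ^ (-n)) x) = x := by
  rw [← iter_add, add_neg_cancel, zpow_zero]; rfl

lemma iter_cancel' (φ : ℝ ≃o ℝ) (n : ℤ) (x : ℝ) : (φ ^ (-n)) ((φ ^ n) x) = x := by
  rw [← iter_add, neg_add_cancel, zpow_zero]; rfl

lemma iter_one (φ : ℝ ≃o ℝ) (x : ℝ) : (φ ^ (1 : ℤ)) x = φ x := by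
  rw [zpow_one]

lemma iter_comm (φ : ℝ ≃o ℝ) (n : ℤ) (x : ℝ) : φ ((φ ^ n) x) = (φ ^ n) (φ x) := by
  calc φ ((φ ^ n) x) = (φ ^ (1:ℤ)) ((φ ^ n) x) := (iter_one φ _).symm
    _ = (φ ^ (1 + n)) x := (iter_add φ 1 n x).symm
    _ = (φ ^ (n + 1)) x := by rw [add_comm]
    _ = (φ ^ n) ((φ ^ (1:ℤ)) x) := iter_add φ n 1 x
    _ = (φ ^ n) (φ x) := by rw [iter_one]

lemma iter_fix (φ : ℝ ≃o ℝ) {x : ℝ} (h : φ x = x) (n : ℤ) : (φ ^ n) x = x := by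
  have hnat : ∀ m : ℕ, (φ ^ (m : ℤ)) x = x := by
    intro m
    induction m with
    | zero => rfl
    | succ k ih =>
      have : ((k : ℤ) + 1) = (((k + 1 : ℕ)) : ℤ) := by push_cast; ring
      rw [← this, iter_add, iter_one, h, ih]
  rcases le_or_gt 0 n with hn | hn
  · obtain ⟨m, rfl⟩ := Int.eq_ofNat_of_zero_le hn
    exact hnat m
  · obtain ⟨m, hm⟩ := Int.eq_ofNat_of_zero_le (neg_nonneg.2 hn.le)
    have := hnat m
    rw [← hm] at this
    calc (φ ^ n) x = (φ ^ n) ((φ ^ (-n)) x) := by rw [this]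
      _ = x := iter_cancel φ n x

lemma iter_mem_Fc (φ : ℝ ≃o ℝ) {x : ℝ} (h : x ∈ Fc φ) (n : ℤ) : (φ ^ n) x ∈ Fc φ := by
  intro hfix
  apply h
  rw [iter_comm] at hfix
  exact (φ ^ n).injective hfix

/-- The interval between a non-fixed point and its image contains no fixed point. -/
lemma uIcc_img_subset (φ : ℝ ≃o ℝ) {x : ℝ} (hx : x ∈ Fc φ) : uIcc x (φ x) ⊆ Fc φ := by
  intro z hz hzfix
  rcases lt_or_gt_of_ne hx with hlt | hgt
  · rw [uIcc_of_ge hlt.le, mem_Icc] at hz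
    have h1 : z ≤ φ x := by
      have := φ.monotone hz.2
      rwa [hzfix] at this
    have h2 : z = φ x := le_antisymm h1 hz.1
    have h3 : φ (φ x) < φ x := φ.strictMono hlt
    rw [← h2, hzfix] at h3
    exact lt_irrefl _ h3
  · rw [uIcc_of_le hgt.le, mem_Icc] at hz
    have h1 : φ x ≤ z := by
      have := φ.monotone hz.1
      rwa [hzfix] at this
    have h2 : z = φ x := le_antisymm hz.2 h1
    have h3 : φ x < φ (φ x) := φ.strictMono hgt
    rw [← h2, hzfix] at h3
    exact lt_irrefl _ h3

/-- image of uIcc under an order iso -/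
lemma image_uIcc (e : ℝ ≃o ℝ) (a b : ℝ) : e '' uIcc a b = uIcc (e a) (e b) := by
  rcases le_total a b with h | h
  · rw [uIcc_of_le h, uIcc_of_le (e.monotone h), e.image_Icc]
  · rw [uIcc_of_ge h, uIcc_of_ge (e.monotone h), e.image_Icc]

/-- components of the non-fixed set are invariant under φ -/
lemma comp_apply_eq (φ : ℝ ≃o ℝ) {x : ℝ} (hx : x ∈ Fc φ) :
    (Fc φ).ordConnectedComponent (φ x) = (Fc φ).ordConnectedComponent x :=
  (ordConnectedComponent_eq (uIcc_img_subset φ hx)).symm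

lemma iter_mem_comp (φ : ℝ ≃o ℝ) {x y : ℝ} (hy : y ∈ (Fc φ).ordConnectedComponent x)
    (n : ℤ) : (φ ^ n) y ∈ (Fc φ).ordConnectedComponent ((φ ^ n) x) := by
  rw [mem_ordConnectedComponent] at hy ⊢
  rw [← image_uIcc]
  rintro - ⟨u, hu, rfl⟩
  exact iter_mem_Fc φ (hy hu) n

lemma iter_comp_eq (φ : ℝ ≃o ℝ) {x : ℝ} (hx : x ∈ Fc φ) (n : ℤ) :
    (Fc φ).ordConnectedComponent ((φ ^ n) x) = (Fc φ).ordConnectedComponent x := by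
  have h1 : (φ ^ n) x ∈ (Fc φ).ordConnectedComponent x := by
    induction n using Int.induction_on with
    | zero => simpa using self_mem_ordConnectedComponent.2 hx
    | succ k ih =>
        have h2 := iter_mem_comp φ ih 1
        rw [iter_one, iter_one, comp_apply_eq φ hx] at h2
        rwa [show ((k:ℤ)+1) = 1 + (k:ℤ) by ring, iter_add, iter_one]
    | pred k ih =>
        have h2 := iter_mem_comp φ ih (-1)
        have h4 : φ ((φ ^ (-1:ℤ)) x) = x := by rw [← iter_one, iter_cancel]
        have h5 : (Fc φ).ordConnectedComponent ((φ ^ (-1:ℤ)) x)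
            = (Fc φ).ordConnectedComponent x := by
          rw [← comp_apply_eq φ (iter_mem_Fc φ hx (-1:ℤ)), h4]
        rw [h5] at h2
        rwa [show (-(k:ℤ)-1) = (-1) + (-(k:ℤ)) by ring, iter_add]
  exact (ordConnectedComponent_eq (mem_ordConnectedComponent.1 h1)).symm

/-- A basepoint in each component of the non-fixed set. -/
noncomputable def base (φ : ℝ ≃o ℝ) (x : ℝ) : ℝ :=
  Classical.epsilon (fun p => p ∈ (Fc φ).ordConnectedComponent x)

lemma base_mem (φ : ℝ ≃o ℝ) {x : ℝ} (hx : x ∈ Fc φ) :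
    base φ x ∈ (Fc φ).ordConnectedComponent x :=
  Classical.epsilon_spec (⟨x, self_mem_ordConnectedComponent.2 hx⟩ :
    ∃ p, p ∈ (Fc φ).ordConnectedComponent x)

lemma base_congr (φ : ℝ ≃o ℝ) {x y : ℝ}
    (h : (Fc φ).ordConnectedComponent x = (Fc φ).ordConnectedComponent y) :
    base φ x = base φ y := by
  rw [base, base, h]

lemma base_mem_Fc (φ : ℝ ≃o ℝ) {x : ℝ} (hx : x ∈ Fc φ) : base φ x ∈ Fc φ :=
  ordConnectedComponent_subset (base_mem φ hx)

lemma mem_comp_base (φ : ℝ ≃o ℝ) {x : ℝ} (hx : x ∈ Fc φ) :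
    x ∈ (Fc φ).ordConnectedComponent (base φ x) :=
  mem_ordConnectedComponent_comm.1 (base_mem φ hx)

/-- the orbit of p is strictly monotone in n when φ p > p -/
lemma orbit_strictMono (φ : ℝ ≃o ℝ) {p : ℝ} (hp : p < φ p) :
    StrictMono (fun n : ℤ => (φ ^ n) p) := by
  apply strictMono_int_of_lt_succ
  intro n
  have : (φ ^ (n + 1)) p = (φ ^ n) (φ p) := by rw [iter_add, iter_one]
  simpa [this] using (φ ^ n).strictMono hp

lemma orbit_strictAnti (φ : ℝ ≃o ℝ) {p : ℝ} (hp : φ p < p) :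
    StrictAnti (fun n : ℤ => (φ ^ n) p) := by
  apply strictAnti_int_of_succ_lt
  intro n
  have : (φ ^ (n + 1)) p = (φ ^ n) (φ p) := by rw [iter_add, iter_one]
  simpa [this] using (φ ^ n).strictMono hp

/-- The orbit of the basepoint reaches below any point of the component. -/
lemma exists_orbit_le (φ : ℝ ≃o ℝ) {p w : ℝ}
    (hw : w ∈ (Fc φ).ordConnectedComponent p) : ∃ n : ℤ, (φ ^ n) p ≤ w := by
  by_contra hcon
  push_neg at hcon
  set S : Set ℝ := Set.range (fun n : ℤ => (φ ^ n) p) with hS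
  have hne : S.Nonempty := ⟨p, 0, rfl⟩
  have hbdd : BddBelow S := ⟨w, by rintro - ⟨n, rfl⟩; exact (hcon n).le⟩
  set i := sInf S with hi
  have himg : φ '' S = S := by
    ext z
    constructor
    · rintro ⟨-, ⟨n, rfl⟩, rfl⟩
      exact ⟨n + 1, by show (φ ^ (n+1)) p = φ ((φ ^ n) p); rw [add_comm, iter_add, iter_one]⟩
    · rintro ⟨n, rfl⟩
      refine ⟨(φ ^ (n - 1)) p, ⟨n - 1, rfl⟩, ?_⟩
      show φ ((φ ^ (n-1)) p) = (φ ^ n) p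
      rw [← iter_one φ ((φ ^ (n-1)) p), ← iter_add]; norm_num
  have hfix : φ i = i := by
    have h1 : φ i = sInf (φ '' S) := (OrderIso.map_csInf' φ hne hbdd)
    rw [himg] at h1
    exact h1
  have h2 : i ≤ p := csInf_le hbdd ⟨0, rfl⟩
  have h3 : w ≤ i := le_csInf hne (by rintro - ⟨n, rfl⟩; exact (hcon n).le)
  have h4 : i ∈ uIcc p w := by
    rw [uIcc_of_ge (h3.trans h2), mem_Icc]
    exact ⟨h3, h2⟩
  exact (mem_ordConnectedComponent.1 hw h4) hfix

lemma exists_lt_orbit (φ : ℝ ≃o ℝ) {p w : ℝ}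
    (hw : w ∈ (Fc φ).ordConnectedComponent p) : ∃ n : ℤ, w < (φ ^ n) p := by
  by_contra hcon
  push_neg at hcon
  set S : Set ℝ := Set.range (fun n : ℤ => (φ ^ n) p) with hS
  have hne : S.Nonempty := ⟨p, 0, rfl⟩
  have hbdd : BddAbove S := ⟨w, by rintro - ⟨n, rfl⟩; exact hcon n⟩
  set i := sSup S with hi
  have himg : φ '' S = S := by
    ext z
    constructor
    · rintro ⟨-, ⟨n, rfl⟩, rfl⟩
      exact ⟨n + 1, by show (φ ^ (n+1)) p = φ ((φ ^ n) p); rw [add_comm, iter_add, iter_one]⟩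
    · rintro ⟨n, rfl⟩
      refine ⟨(φ ^ (n - 1)) p, ⟨n - 1, rfl⟩, ?_⟩
      show φ ((φ ^ (n-1)) p) = (φ ^ n) p
      rw [← iter_one φ ((φ ^ (n-1)) p), ← iter_add]; norm_num
  have hfix : φ i = i := by
    have h1 : φ i = sSup (φ '' S) := (OrderIso.map_csSup' φ hne hbdd)
    rw [himg] at h1
    exact h1
  have h2 : p ≤ i := le_csSup hbdd ⟨0, rfl⟩
  have h3 : i ≤ w := csSup_le hne (by rintro - ⟨n, rfl⟩; exact hcon n)
  have h4 : i ∈ uIcc p w := by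
    rw [uIcc_of_le (h2.trans h3), mem_Icc]
    exact ⟨h2, h3⟩
  exact (mem_ordConnectedComponent.1 hw h4) hfix

/-- the fundamental domain at `p` -/
def D (φ : ℝ ≃o ℝ) (p : ℝ) : Set ℝ := uIcc p (φ p) \ {φ p}

lemma D_subset_Fc (φ : ℝ ≃o ℝ) {p : ℝ} (hp : p ∈ Fc φ) : D φ p ⊆ Fc φ :=
  fun _ hz => uIcc_img_subset φ hp hz.1

lemma D_eq_inc (φ : ℝ ≃o ℝ) {p : ℝ} (hp : p < φ p) : D φ p = Ico p (φ p) := by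
  rw [D, uIcc_of_le hp.le, Icc_sdiff_right]

lemma D_eq_dec (φ : ℝ ≃o ℝ) {p : ℝ} (hp : φ p < p) : D φ p = Ioc (φ p) p := by
  rw [D, uIcc_of_ge hp.le, Icc_diff_left]

lemma iter_le_iff (φ : ℝ ≃o ℝ) (n : ℤ) {a b : ℝ} : (φ ^ n) a ≤ (φ ^ n) b ↔ a ≤ b :=
  (φ ^ n).le_iff_le

lemma iter_lt_iff (φ : ℝ ≃o ℝ) (n : ℤ) {a b : ℝ} : (φ ^ n) a < (φ ^ n) b ↔ a < b :=
  (φ ^ n).lt_iff_lt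

lemma mem_D_iff_inc (φ : ℝ ≃o ℝ) {p : ℝ} (hp : p < φ p) (n : ℤ) (x : ℝ) :
    (φ ^ (-n)) x ∈ D φ p ↔ ((φ ^ n) p ≤ x ∧ x < (φ ^ (n + 1)) p) := by
  rw [D_eq_inc φ hp, mem_Ico]
  constructor
  · rintro ⟨h1, h2⟩
    constructor
    · have := (iter_le_iff φ n).2 h1
      rwa [iter_cancel] at this
    · have := (iter_lt_iff φ n).2 h2
      rwa [iter_cancel, ← iter_one φ p, ← iter_add] at this
  · rintro ⟨h1, h2⟩
    constructor
    · have := (iter_le_iff φ (-n)).2 h1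
      rwa [iter_cancel'] at this
    · have := (iter_lt_iff φ (-n)).2 h2
      rwa [← iter_add, show -n + (n+1) = (1:ℤ) by ring, iter_one] at this

lemma mem_D_iff_dec (φ : ℝ ≃o ℝ) {p : ℝ} (hp : φ p < p) (n : ℤ) (x : ℝ) :
    (φ ^ (-n)) x ∈ D φ p ↔ ((φ ^ (n + 1)) p < x ∧ x ≤ (φ ^ n) p) := by
  rw [D_eq_dec φ hp, mem_Ioc]
  constructor
  · rintro ⟨h1, h2⟩
    constructor
    · have := (iter_lt_iff φ n).2 h1
      rwa [iter_cancel, ← iter_one φ p, ← iter_add] at this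
    · have := (iter_le_iff φ n).2 h2
      rwa [iter_cancel] at this
  · rintro ⟨h1, h2⟩
    constructor
    · have := (iter_lt_iff φ (-n)).2 h1
      rwa [← iter_add, show -n + (n+1) = (1:ℤ) by ring, iter_one] at this
    · have := (iter_le_iff φ (-n)).2 h2
      rwa [iter_cancel'] at this

/-- Existence and uniqueness of the block index. -/
lemma block' (φ : ℝ ≃o ℝ) {p w : ℝ} (hp : p ∈ Fc φ)
    (hw : w ∈ (Fc φ).ordConnectedComponent p) :
    ∃! n : ℤ, (φ ^ (-n)) w ∈ D φ p := by
  rcases lt_or_gt_of_ne hp with hdec | hinc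
  · -- φ p < p, decreasing case
    have hmono := orbit_strictAnti φ hdec
    obtain ⟨m, hm⟩ := exists_orbit_le φ hw
    obtain ⟨k, hk⟩ := exists_lt_orbit φ hw
    obtain ⟨n, hn1, hn2⟩ := Int.exists_greatest_of_bdd
      (P := fun n : ℤ => w ≤ (φ ^ n) p)
      ⟨m, fun z hz => by
        by_contra hcon
        push_neg at hcon
        exact absurd (hmono hcon) (not_lt.2 (le_trans hm hz))⟩
      ⟨k, hk.le⟩
    refine ⟨n, (mem_D_iff_dec φ hdec n w).2 ⟨?_, hn1⟩, ?_⟩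
    · by_contra hcon
      push_neg at hcon
      exact absurd (hn2 (n+1) hcon) (by omega)
    · intro n' hn'
      rw [mem_D_iff_dec φ hdec] at hn'
      have h1 : n' ≤ n := hn2 n' hn'.2
      by_contra hne
      have h2 : n' + 1 ≤ n := by
        rcases lt_or_eq_of_le h1 with h | h
        · omega
        · exact absurd h hne
      have h3 := hmono.antitone h2
      exact lt_irrefl w ((hn1.trans h3).trans_lt hn'.1)
  · -- p < φ p, increasing case
    have hmono := orbit_strictMono φ hinc
    obtain ⟨m, hm⟩ := exists_orbit_le φ hw
    obtain ⟨k, hk⟩ := exists_lt_orbit φ hw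
    obtain ⟨n, hn1, hn2⟩ := Int.exists_greatest_of_bdd
      (P := fun n : ℤ => (φ ^ n) p ≤ w)
      ⟨k, fun z hz => by
        by_contra hcon
        push_neg at hcon
        exact absurd (hmono hcon) (not_lt.2 (le_trans hz hk.le))⟩
      ⟨m, hm⟩
    refine ⟨n, (mem_D_iff_inc φ hinc n w).2 ⟨hn1, ?_⟩, ?_⟩
    · by_contra hcon
      push_neg at hcon
      exact absurd (hn2 (n+1) hcon) (by omega)
    · intro n' hn'
      rw [mem_D_iff_inc φ hinc] at hn'
      have h1 : n' ≤ n := hn2 n' hn'.1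
      by_contra hne
      have h2 : n' + 1 ≤ n := by
        rcases lt_or_eq_of_le h1 with h | h
        · omega
        · exact absurd h hne
      have h3 := hmono.monotone h2
      exact lt_irrefl w (hn'.2.trans_le (h3.trans hn1))

/-- block index -/
noncomputable def nfun (φ : ℝ ≃o ℝ) (x : ℝ) : ℤ :=
  if hx : x ∈ Fc φ then
    (block' φ (base_mem_Fc φ hx) (mem_comp_base φ hx)).exists.choose else 0

lemma nfun_spec (φ : ℝ ≃o ℝ) {x : ℝ} (hx : x ∈ Fc φ) :
    (φ ^ (-(nfun φ x))) x ∈ D φ (base φ x) := by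
  rw [nfun, dif_pos hx]
  exact (block' φ (base_mem_Fc φ hx) (mem_comp_base φ hx)).exists.choose_spec

lemma nfun_unique (φ : ℝ ≃o ℝ) {x : ℝ} (hx : x ∈ Fc φ) {n : ℤ}
    (hn : (φ ^ (-n)) x ∈ D φ (base φ x)) : n = nfun φ x :=
  (block' φ (base_mem_Fc φ hx) (mem_comp_base φ hx)).unique hn (nfun_spec φ hx)

/-- positivization -/
noncomputable def pos' (t : ℝ) : ℝ := if 0 < t then t else 1

lemma pos'_pos (t : ℝ) : 0 < pos' t := by
  rw [pos']; split
  · assumption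
  · exact one_pos

lemma pos'_eq {t : ℝ} (h : 0 < t) : pos' t = t := if_pos h

/-- affine order isomorphism -/
noncomputable def affIso (p q c : ℝ) (hc : 0 < c) : ℝ ≃o ℝ :=
  ((OrderIso.addRight (-p)).trans (OrderIso.mulRight₀ c hc)).trans (OrderIso.addRight q)

lemma affIso_apply (p q c : ℝ) (hc : 0 < c) (y : ℝ) :
    affIso p q c hc y = (y - p) * c + q := by
  simp [affIso, sub_eq_add_neg]

noncomputable def slope (ψ φ₁ φ₂ : ℝ ≃o ℝ) (p : ℝ) : ℝ := (φ₂ (ψ p) - ψ p) / (φ₁ p - p)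

/-- the model map on the fundamental domain of the component of `p` -/
noncomputable def G (ψ φ₁ φ₂ : ℝ ≃o ℝ) (p : ℝ) : ℝ ≃o ℝ :=
  affIso p (ψ p) (pos' (slope ψ φ₁ φ₂ p)) (pos'_pos _)

lemma G_base (ψ φ₁ φ₂ : ℝ ≃o ℝ) (p : ℝ) : G ψ φ₁ φ₂ p p = ψ p := by
  rw [G, affIso_apply]; ring

/-- the conjugating map -/
noncomputable def chi (ψ φ₁ φ₂ : ℝ ≃o ℝ) (x : ℝ) : ℝ :=
  if x ∈ Fc φ₁ then
    (φ₂ ^ nfun φ₁ x) ((G ψ φ₁ φ₂ (base φ₁ x)) ((φ₁ ^ (-(nfun φ₁ x))) x))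
  else ψ x

lemma chi_fixed (ψ φ₁ φ₂ : ℝ ≃o ℝ) {x : ℝ} (h : φ₁ x = x) : chi ψ φ₁ φ₂ x = ψ x := by
  rw [chi, if_neg]
  simpa [Fc] using h

lemma chi_nonfixed (ψ φ₁ φ₂ : ℝ ≃o ℝ) {x : ℝ} (hx : x ∈ Fc φ₁) :
    chi ψ φ₁ φ₂ x = (φ₂ ^ nfun φ₁ x) ((G ψ φ₁ φ₂ (base φ₁ x)) ((φ₁ ^ (-(nfun φ₁ x))) x)) :=
  if_pos hx

section Transfer

variable {ψ φ₁ φ₂ : ℝ ≃o ℝ}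
variable (hFix : ψ '' {x | φ₁ x = x} = {x | φ₂ x = x})
variable (hInc : ψ '' {x | φ₁ x > x} = {x | φ₂ x > x})

include hFix in
lemma fix_transfer {x : ℝ} : φ₁ x = x ↔ φ₂ (ψ x) = ψ x := by
  constructor
  · intro h
    have : ψ x ∈ ψ '' {x | φ₁ x = x} := ⟨x, h, rfl⟩
    rw [hFix] at this
    exact this
  · intro h
    have : ψ x ∈ {x | φ₂ x = x} := h
    rw [← hFix] at this
    obtain ⟨y, hy, hyx⟩ := this
    rwa [← ψ.injective hyx]

include hFix in
lemma Fc_transfer {x : ℝ} : x ∈ Fc φ₁ ↔ ψ x ∈ Fc φ₂ :=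
  not_iff_not.2 (fix_transfer hFix)

include hInc in
lemma inc_transfer {x : ℝ} : x < φ₁ x ↔ ψ x < φ₂ (ψ x) := by
  constructor
  · intro h
    have : ψ x ∈ ψ '' {x | φ₁ x > x} := ⟨x, h, rfl⟩
    rw [hInc] at this
    exact this
  · intro h
    have : ψ x ∈ {x | φ₂ x > x} := h
    rw [← hInc] at this
    obtain ⟨y, hy, hyx⟩ := this
    rw [← ψ.injective hyx]
    exact hy

include hFix hInc in
lemma dec_transfer {x : ℝ} : φ₁ x < x ↔ φ₂ (ψ x) < ψ x := by
  constructor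
  · intro h
    rcases lt_trichotomy (φ₂ (ψ x)) (ψ x) with h' | h' | h'
    · exact h'
    · exact absurd ((fix_transfer hFix).2 h') (ne_of_lt h)
    · exact absurd ((inc_transfer hInc).2 h') (not_lt.2 h.le)
  · intro h
    rcases lt_trichotomy (φ₁ x) x with h' | h' | h'
    · exact h'
    · exact absurd ((fix_transfer hFix).1 h') (ne_of_lt h)
    · exact absurd ((inc_transfer hInc).1 h') (not_lt.2 h.le)

include hFix hInc in
lemma slope_pos {p : ℝ} (hp : p ∈ Fc φ₁) : 0 < slope ψ φ₁ φ₂ p := by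
  rw [slope]
  rcases lt_or_gt_of_ne hp with hdec | hinc
  · have h2 : φ₂ (ψ p) < ψ p := (dec_transfer hFix hInc).1 hdec
    apply div_pos_of_neg_of_neg <;> linarith
  · have h2 : ψ p < φ₂ (ψ p) := (inc_transfer hInc).1 hinc
    apply div_pos <;> linarith

include hFix hInc in
lemma G_top {p : ℝ} (hp : p ∈ Fc φ₁) : G ψ φ₁ φ₂ p (φ₁ p) = φ₂ (ψ p) := by
  rw [G, affIso_apply, pos'_eq (slope_pos hFix hInc hp), slope]
  have h : φ₁ p - p ≠ 0 := sub_ne_zero.2 hp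
  field_simp
  ring

end Transfer

section Main

variable {ψ φ₁ φ₂ : ℝ ≃o ℝ}
variable (hFix : ψ '' {x | φ₁ x = x} = {x | φ₂ x = x})
variable (hInc : ψ '' {x | φ₁ x > x} = {x | φ₂ x > x})

include hFix in
lemma chi_comm : ∀ x : ℝ, chi ψ φ₁ φ₂ (φ₁ x) = φ₂ (chi ψ φ₁ φ₂ x) := by
  intro x
  by_cases hx : x ∈ Fc φ₁
  · have hx' : φ₁ x ∈ Fc φ₁ := fun hfix => hx (φ₁.injective hfix)
    have hbase : base φ₁ (φ₁ x) = base φ₁ x := base_congr φ₁ (comp_apply_eq φ₁ hx)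
    set n := nfun φ₁ x with hn0
    have harg : (φ₁ ^ (-(n + 1))) (φ₁ x) = (φ₁ ^ (-n)) x := by
      rw [← iter_one φ₁ x, ← iter_add, show (-(n+1) + 1) = -n by ring]
    have hn : nfun φ₁ (φ₁ x) = n + 1 := by
      refine (nfun_unique φ₁ hx' ?_).symm
      rw [hbase, harg]
      exact nfun_spec φ₁ hx
    rw [chi_nonfixed _ _ _ hx', chi_nonfixed _ _ _ hx, hbase, hn, harg,
      show (n + 1) = 1 + n by ring, iter_add, iter_one]
  · have h : φ₁ x = x := by simpa [Fc] using hx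
    rw [h, chi_fixed _ _ _ h, (fix_transfer hFix).1 h]

include hFix hInc in
lemma chi_mem_comp {x : ℝ} (hx : x ∈ Fc φ₁) :
    chi ψ φ₁ φ₂ x ∈ (Fc φ₂).ordConnectedComponent (ψ x) := by
  set p := base φ₁ x with hp0
  have hp : p ∈ Fc φ₁ := base_mem_Fc φ₁ hx
  have hq : ψ p ∈ Fc φ₂ := (Fc_transfer hFix).1 hp
  set n := nfun φ₁ x with hn0
  set z := (φ₁ ^ (-n)) x with hz0
  have hzD : z ∈ D φ₁ p := nfun_spec φ₁ hx
  have hzI : z ∈ uIcc p (φ₁ p) := hzD.1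
  -- G z lies in the uIcc between ψ p and φ₂ (ψ p)
  have hG : G ψ φ₁ φ₂ p z ∈ uIcc (ψ p) (φ₂ (ψ p)) := by
    have := mem_image_of_mem (G ψ φ₁ φ₂ p) hzI
    rw [image_uIcc, G_base, G_top hFix hInc hp] at this
    exact this
  -- hence G z is in the component of ψ p
  have hGc : G ψ φ₁ φ₂ p z ∈ (Fc φ₂).ordConnectedComponent (ψ p) := by
    rw [mem_ordConnectedComponent]
    exact (uIcc_subset_uIcc_left hG).trans (uIcc_img_subset φ₂ hq)
  -- applying φ₂ ^ n stays in the component of ψ p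
  have h1 : (φ₂ ^ n) (G ψ φ₁ φ₂ p z) ∈ (Fc φ₂).ordConnectedComponent (ψ p) := by
    have h2 := iter_mem_comp φ₂ hGc n
    rwa [ordConnectedComponent_eq
      (mem_ordConnectedComponent.1 (mem_ordConnectedComponent_comm.1
        (self_mem_ordConnectedComponent.2 (iter_mem_Fc φ₂ hq n)))), iter_comp_eq φ₂ hq n] at h2
  -- the component of ψ p equals the component of ψ x
  have hcomp : (Fc φ₂).ordConnectedComponent (ψ p) = (Fc φ₂).ordConnectedComponent (ψ x) := by
    apply ordConnectedComponent_eq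
    rw [← image_uIcc]
    rintro - ⟨u, hu, rfl⟩
    exact (Fc_transfer hFix).1 (mem_ordConnectedComponent.1 (mem_comp_base φ₁ hx) hu)
  rw [chi_nonfixed _ _ _ hx, ← hp0, ← hn0, ← hz0, ← hcomp]
  exact h1

include hFix hInc in
lemma chi_lt_of_fixed_lt {x y : ℝ} (hxf : φ₁ x = x) (hy : y ∈ Fc φ₁) (hxy : x < y) :
    ψ x < chi ψ φ₁ φ₂ y := by
  by_contra h
  push_neg at h
  have hc := chi_mem_comp hFix hInc hy
  have hψ : ψ x < ψ y := ψ.strictMono hxy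
  have hmem : ψ x ∈ uIcc (ψ y) (chi ψ φ₁ φ₂ y) := by
    rw [uIcc_of_ge (h.trans hψ.le), mem_Icc]
    exact ⟨h, hψ.le⟩
  exact mem_ordConnectedComponent.1 hc hmem ((fix_transfer hFix).1 hxf)

include hFix hInc in
lemma chi_lt_of_lt_fixed {x y : ℝ} (hx : x ∈ Fc φ₁) (hyf : φ₁ y = y) (hxy : x < y) :
    chi ψ φ₁ φ₂ x < ψ y := by
  by_contra h
  push_neg at h
  have hc := chi_mem_comp hFix hInc hx
  have hψ : ψ x < ψ y := ψ.strictMono hxy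
  have hmem : ψ y ∈ uIcc (ψ x) (chi ψ φ₁ φ₂ x) := by
    rw [uIcc_of_le (hψ.le.trans h), mem_Icc]
    exact ⟨hψ.le, h⟩
  exact mem_ordConnectedComponent.1 hc hmem ((fix_transfer hFix).1 hyf)

include hFix hInc in
lemma chi_lt_same_comp {x y : ℝ} (hx : x ∈ Fc φ₁) (hy : y ∈ Fc φ₁)
    (hcomp : (Fc φ₁).ordConnectedComponent x = (Fc φ₁).ordConnectedComponent y)
    (hxy : x < y) : chi ψ φ₁ φ₂ x < chi ψ φ₁ φ₂ y := by
  set p := base φ₁ x with hp0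
  have hbase : base φ₁ y = p := base_congr φ₁ hcomp.symm
  have hp : p ∈ Fc φ₁ := base_mem_Fc φ₁ hx
  have hq : ψ p ∈ Fc φ₂ := (Fc_transfer hFix).1 hp
  set m := nfun φ₁ x with hm0
  set k := nfun φ₁ y with hk0
  have huD : (φ₁ ^ (-m)) x ∈ D φ₁ p := nfun_spec φ₁ hx
  have hvD : (φ₁ ^ (-k)) y ∈ D φ₁ p := by
    have := nfun_spec φ₁ hy
    rwa [hbase] at this
  have hchix : chi ψ φ₁ φ₂ x = (φ₂ ^ m) ((G ψ φ₁ φ₂ p) ((φ₁ ^ (-m)) x)) :=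
    chi_nonfixed _ _ _ hx
  have hchiy : chi ψ φ₁ φ₂ y = (φ₂ ^ k) ((G ψ φ₁ φ₂ p) ((φ₁ ^ (-k)) y)) := by
    rw [chi_nonfixed _ _ _ hy, hbase, ← hk0]
  have hGmono := (G ψ φ₁ φ₂ p).strictMono
  have heqcase : m = k → chi ψ φ₁ φ₂ x < chi ψ φ₁ φ₂ y := by
    intro hmk
    rw [hchix, hchiy, ← hmk]
    apply (φ₂ ^ m).strictMono
    apply hGmono
    exact (iter_lt_iff φ₁ (-m)).2 hxy
  rcases lt_or_gt_of_ne hp with hdec | hinc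
  · -- decreasing component
    have hq2 : φ₂ (ψ p) < ψ p := (dec_transfer hFix hInc).1 hdec
    have hux := (mem_D_iff_dec φ₁ hdec m x).1 huD
    have hvy := (mem_D_iff_dec φ₁ hdec k y).1 hvD
    have hmono₁ := orbit_strictAnti φ₁ hdec
    have hmono₂ := orbit_strictAnti φ₂ hq2
    have hkm : k ≤ m := by
      by_contra hcon
      push_neg at hcon
      have h1 : (φ₁ ^ k) p ≤ (φ₁ ^ (m+1)) p := hmono₁.antitone (by omega)
      exact absurd ((hvy.2.trans h1).trans_lt hux.1) (not_lt.2 hxy.le)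
    rcases eq_or_lt_of_le hkm with hmk | hlt
    · exact heqcase hmk.symm
    · -- k < m
      have hGu : (G ψ φ₁ φ₂ p) ((φ₁ ^ (-m)) x) ≤ ψ p := by
        rw [← G_base ψ φ₁ φ₂ p]
        apply hGmono.monotone
        rw [D_eq_dec φ₁ hdec] at huD
        exact huD.2
      have hGv : φ₂ (ψ p) < (G ψ φ₁ φ₂ p) ((φ₁ ^ (-k)) y) := by
        rw [← G_top hFix hInc hp]
        apply hGmono
        rw [D_eq_dec φ₁ hdec] at hvD
        exact hvD.1
      calc chi ψ φ₁ φ₂ x = (φ₂ ^ m) ((G ψ φ₁ φ₂ p) ((φ₁ ^ (-m)) x)) := hchix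
        _ ≤ (φ₂ ^ m) (ψ p) := (φ₂ ^ m).monotone hGu
        _ ≤ (φ₂ ^ (k+1)) (ψ p) := hmono₂.antitone (by omega)
        _ = (φ₂ ^ k) (φ₂ (ψ p)) := by rw [iter_add, iter_one]
        _ < (φ₂ ^ k) ((G ψ φ₁ φ₂ p) ((φ₁ ^ (-k)) y)) := (φ₂ ^ k).strictMono hGv
        _ = chi ψ φ₁ φ₂ y := hchiy.symm
  · -- increasing component
    have hq2 : ψ p < φ₂ (ψ p) := (inc_transfer hInc).1 hinc
    have hux := (mem_D_iff_inc φ₁ hinc m x).1 huD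
    have hvy := (mem_D_iff_inc φ₁ hinc k y).1 hvD
    have hmono₁ := orbit_strictMono φ₁ hinc
    have hmono₂ := orbit_strictMono φ₂ hq2
    have hmk : m ≤ k := by
      by_contra hcon
      push_neg at hcon
      have h1 : (φ₁ ^ (k+1)) p ≤ (φ₁ ^ m) p := hmono₁.monotone (by omega)
      exact absurd ((hvy.2.trans_le h1).trans_le hux.1) (not_lt.2 hxy.le)
    rcases eq_or_lt_of_le hmk with hmk' | hlt
    · exact heqcase hmk'
    · -- m < k
      have hGu : (G ψ φ₁ φ₂ p) ((φ₁ ^ (-m)) x) < φ₂ (ψ p) := by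
        rw [← G_top hFix hInc hp]
        apply hGmono
        rw [D_eq_inc φ₁ hinc] at huD
        exact huD.2
      have hGv : ψ p ≤ (G ψ φ₁ φ₂ p) ((φ₁ ^ (-k)) y) := by
        rw [← G_base ψ φ₁ φ₂ p]
        apply hGmono.monotone
        rw [D_eq_inc φ₁ hinc] at hvD
        exact hvD.1
      calc chi ψ φ₁ φ₂ x = (φ₂ ^ m) ((G ψ φ₁ φ₂ p) ((φ₁ ^ (-m)) x)) := hchix
        _ < (φ₂ ^ m) (φ₂ (ψ p)) := (φ₂ ^ m).strictMono hGu
        _ = (φ₂ ^ (m+1)) (ψ p) := by rw [iter_add, iter_one]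
        _ ≤ (φ₂ ^ k) (ψ p) := hmono₂.monotone (by omega)
        _ ≤ (φ₂ ^ k) ((G ψ φ₁ φ₂ p) ((φ₁ ^ (-k)) y)) := (φ₂ ^ k).monotone hGv
        _ = chi ψ φ₁ φ₂ y := hchiy.symm

include hFix hInc in
lemma chi_strictMono : StrictMono (chi ψ φ₁ φ₂) := by
  intro x y hxy
  by_cases hx : x ∈ Fc φ₁ <;> by_cases hy : y ∈ Fc φ₁
  · -- both non-fixed
    by_cases hcomp : y ∈ (Fc φ₁).ordConnectedComponent x
    · exact chi_lt_same_comp hFix hInc hx hy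
        (ordConnectedComponent_eq (mem_ordConnectedComponent.1 hcomp)) hxy
    · -- different components: find a fixed point in between
      rw [mem_ordConnectedComponent] at hcomp
      obtain ⟨z, hz1, hz2⟩ := not_subset.1 hcomp
      have hzf : φ₁ z = z := not_not.1 hz2
      rw [uIcc_of_le hxy.le, mem_Icc] at hz1
      have hzx : x < z := lt_of_le_of_ne hz1.1 (by rintro rfl; exact hx hzf)
      have hzy : z < y := lt_of_le_of_ne hz1.2 (by rintro rfl; exact hy hzf)
      calc chi ψ φ₁ φ₂ x < ψ z := chi_lt_of_lt_fixed hFix hInc hx hzf hzx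
        _ < chi ψ φ₁ φ₂ y := chi_lt_of_fixed_lt hFix hInc hzf hy hzy
  · have hyf : φ₁ y = y := not_not.1 hy
    rw [chi_fixed _ _ _ hyf]
    exact chi_lt_of_lt_fixed hFix hInc hx hyf hxy
  · have hxf : φ₁ x = x := not_not.1 hx
    rw [chi_fixed _ _ _ hxf]
    exact chi_lt_of_fixed_lt hFix hInc hxf hy hxy
  · have hxf : φ₁ x = x := not_not.1 hx
    have hyf : φ₁ y = y := not_not.1 hy
    rw [chi_fixed _ _ _ hxf, chi_fixed _ _ _ hyf]
    exact ψ.strictMono hxy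

include hFix hInc in
lemma chi_surjective : Function.Surjective (chi ψ φ₁ φ₂) := by
  intro w
  by_cases hw : w ∈ Fc φ₂
  · -- w is not fixed
    set y := ψ.symm w with hy0
    have hwy : ψ y = w := ψ.apply_symm_apply w
    have hy : y ∈ Fc φ₁ := (Fc_transfer hFix).2 (by rwa [hwy])
    set p := base φ₁ y with hp0
    have hp : p ∈ Fc φ₁ := base_mem_Fc φ₁ hy
    have hq : ψ p ∈ Fc φ₂ := (Fc_transfer hFix).1 hp
    have hwc : w ∈ (Fc φ₂).ordConnectedComponent (ψ p) := by
      rw [mem_ordConnectedComponent, ← hwy, ← image_uIcc]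
      rintro - ⟨t, ht, rfl⟩
      exact (Fc_transfer hFix).1 (mem_ordConnectedComponent.1 (mem_comp_base φ₁ hy) ht)
    obtain ⟨n, hn⟩ := (block' φ₂ hq hwc).exists
    set z := (φ₂ ^ (-n)) w with hz0
    have hz1 : z ∈ uIcc ((G ψ φ₁ φ₂ p) p) ((G ψ φ₁ φ₂ p) (φ₁ p)) := by
      rw [G_base, G_top hFix hInc hp]
      exact hn.1
    rw [← image_uIcc] at hz1
    obtain ⟨u, hu_uIcc, huz⟩ := hz1
    have hune : u ∉ ({φ₁ p} : Set ℝ) := by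
      intro hu
      apply hn.2
      rw [mem_singleton_iff] at hu
      rw [← huz, hu, G_top hFix hInc hp]
      rfl
    have huD : u ∈ D φ₁ p := ⟨hu_uIcc, hune⟩
    have huFc : u ∈ Fc φ₁ := D_subset_Fc φ₁ hp huD
    have hucomp : uIcc p u ⊆ Fc φ₁ :=
      (uIcc_subset_uIcc_left hu_uIcc).trans (uIcc_img_subset φ₁ hp)
    set x := (φ₁ ^ n) u with hx0
    have hx : x ∈ Fc φ₁ := iter_mem_Fc φ₁ huFc n
    have hbx : base φ₁ x = p := by
      have h1 : (Fc φ₁).ordConnectedComponent x = (Fc φ₁).ordConnectedComponent u :=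
        iter_comp_eq φ₁ huFc n
      have h2 : (Fc φ₁).ordConnectedComponent p = (Fc φ₁).ordConnectedComponent u :=
        ordConnectedComponent_eq hucomp
      have h3 : (Fc φ₁).ordConnectedComponent p = (Fc φ₁).ordConnectedComponent y := by
        apply ordConnectedComponent_eq
        rw [uIcc_comm]
        exact mem_ordConnectedComponent.1 (base_mem φ₁ hy)
      rw [hp0] at h3 ⊢
      exact (base_congr φ₁ ((h1.trans h2.symm).trans h3)).trans rfl
    have harg : (φ₁ ^ (-n)) x = u := iter_cancel' φ₁ n u
    have hnx : nfun φ₁ x = n := by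
      refine (nfun_unique φ₁ hx ?_).symm
      rw [hbx, harg]
      exact huD
    refine ⟨x, ?_⟩
    rw [chi_nonfixed _ _ _ hx, hbx, hnx, harg, huz, hz0, iter_cancel]
  · -- w is fixed
    have hwf : φ₂ w = w := not_not.1 hw
    have hmem : w ∈ {x | φ₂ x = x} := hwf
    rw [← hFix] at hmem
    obtain ⟨x, hxf, rfl⟩ := hmem
    exact ⟨x, chi_fixed _ _ _ hxf⟩

end Main

end WeakConjAux

open WeakConjAux in
/-- If there is a weak conjugation ψ from φ₁ to φ₂, i.e. ψ(Fix(φ₁)) = Fix(φ₂)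
and ψ(Inc(φ₁)) = Inc(φ₂), then φ₁ and φ₂ are conjugate in Homeo₊(ℝ). -/
theorem weak_conj_implies_conj (ψ φ₁ φ₂ : ℝ ≃o ℝ)
    (hFix : ψ '' {x | φ₁ x = x} = {x | φ₂ x = x})
    (hInc : ψ '' {x | φ₁ x > x} = {x | φ₂ x > x}) :
    ∃ χ : ℝ ≃o ℝ, ∀ x : ℝ, χ (φ₁ x) = φ₂ (χ x) := by
  have hmono := chi_strictMono hFix hInc
  have hsurj := chi_surjective hFix hInc
  refine ⟨StrictMono.orderIsoOfSurjective _ hmono hsurj, fun x => ?_⟩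
  have hcoe := StrictMono.coe_orderIsoOfSurjective (f := chi ψ φ₁ φ₂)
    (h_mono := hmono) (h_surj := hsurj)
  rw [show ((StrictMono.orderIsoOfSurjective _ hmono hsurj : ℝ ≃o ℝ) : ℝ → ℝ)
    = chi ψ φ₁ φ₂ from hcoe]
  exact chi_comm hFix x
end

section
/- Let ψ, φ₁, φ₂ ∈ Homeo₊(ℝ). If ψ is a weak conjugation from φ₁ to φ₂ that is strong on an interval I (i.e., ψφ₁(x) = φ₂ψ(x) for all x ∈ I), then there exists a conjugation ψ̄ from φ₁ to φ₂ (ψ̄φ₁ψ̄⁻¹ = φ₂) such that ψ̄ agrees with ψ on I ∪ φ₁(I) and on Fix(φ₁). -/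
open Set

namespace WCP

open scoped Classical

/-! ### zpow helpers for `ℝ ≃o ℝ` -/

lemma zp_add (φ : ℝ ≃o ℝ) (m n : ℤ) (x : ℝ) : (φ^(m+n)) x = (φ^m) ((φ^n) x) := by
  rw [zpow_add]; rfl

lemma zp_succ (φ : ℝ ≃o ℝ) (n : ℤ) (x : ℝ) : (φ^(n+1)) x = φ ((φ^n) x) := by
  rw [zpow_add_one, ((Commute.refl φ).zpow_left n).eq]; rfl

lemma zp_succ' (φ : ℝ ≃o ℝ) (n : ℤ) (x : ℝ) : (φ^(n+1)) x = (φ^n) (φ x) := by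
  rw [zpow_add_one]; rfl

lemma zp_zero (φ : ℝ ≃o ℝ) (x : ℝ) : (φ^(0:ℤ)) x = x := rfl

lemma zp_one (φ : ℝ ≃o ℝ) (x : ℝ) : (φ^(1:ℤ)) x = φ x := by
  rw [zpow_one]

lemma zp_cancel (φ : ℝ ≃o ℝ) (n : ℤ) (x : ℝ) : (φ^(-n)) ((φ^n) x) = x := by
  have h : (φ^(-n)) * (φ^n) = 1 := by group
  have := congrArg (fun g : ℝ ≃o ℝ => g x) h
  simpa using this

lemma zp_strictMono (φ : ℝ ≃o ℝ) (n : ℤ) : StrictMono ((φ^n : ℝ ≃o ℝ) : ℝ → ℝ) :=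
  (φ^n).strictMono

/-- If `x < φ x` and all iterates stay in the increasing region… actually we only need:
the orbit map is strictly monotone in the exponent whenever `x < φ x`. -/
lemma zp_orbit_strictMono (φ : ℝ ≃o ℝ) {x : ℝ} (hx : x < φ x) :
    StrictMono (fun n : ℤ => (φ^n) x) := by
  apply strictMono_int_of_lt_succ
  intro n
  have : (φ^n) x < (φ^n) (φ x) := (φ^n).strictMono hx
  simpa [zp_succ' φ n x] using this

/-! ### The moving set and its components -/

/-- The complement of the fixed-point set. -/
def USet (φ : ℝ ≃o ℝ) : Set ℝ := {x | φ x ≠ x}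

lemma isOpen_USet (φ : ℝ ≃o ℝ) : IsOpen (USet φ) :=
  isOpen_ne_fun φ.continuous continuous_id

lemma apply_inv (φ : ℝ ≃o ℝ) (x : ℝ) : φ (φ⁻¹ x) = x := φ.apply_symm_apply x

lemma inv_apply (φ : ℝ ≃o ℝ) (x : ℝ) : φ⁻¹ (φ x) = x := φ.symm_apply_apply x

lemma inv_fix_iff (φ : ℝ ≃o ℝ) (x : ℝ) : φ⁻¹ x = x ↔ φ x = x := by
  constructor
  · intro h; conv_lhs => rw [← h]
    exact apply_inv φ x
  · intro h; conv_lhs => rw [← h]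
    exact inv_apply φ x

lemma USet_inv (φ : ℝ ≃o ℝ) : USet φ⁻¹ = USet φ := by
  ext x
  simp only [USet, mem_setOf_eq, not_iff_not]
  exact inv_fix_iff φ x

lemma isOpen_inc (φ : ℝ ≃o ℝ) : IsOpen {x : ℝ | x < φ x} :=
  isOpen_lt continuous_id φ.continuous

lemma isOpen_dec (φ : ℝ ≃o ℝ) : IsOpen {x : ℝ | φ x < x} :=
  isOpen_lt φ.continuous continuous_id

lemma inv_lt_iff (φ : ℝ ≃o ℝ) (x : ℝ) : φ⁻¹ x < x ↔ x < φ x := by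
  constructor <;> intro h
  · simpa using φ.strictMono h
  · have := φ.symm.strictMono h; simp at this; exact this

lemma lt_inv_iff (φ : ℝ ≃o ℝ) (x : ℝ) : x < φ⁻¹ x ↔ φ x < x := by
  constructor <;> intro h
  · simpa using φ.strictMono h
  · have := φ.symm.strictMono h; simp at this; exact this

/-- the component of `x` in the moving set. -/
def comp (φ : ℝ ≃o ℝ) (x : ℝ) : Set ℝ := connectedComponentIn (USet φ) x

lemma comp_subset (φ : ℝ ≃o ℝ) (x : ℝ) : comp φ x ⊆ USet φ :=
  connectedComponentIn_subset _ _

lemma comp_preconnected (φ : ℝ ≃o ℝ) (x : ℝ) : IsPreconnected (comp φ x) :=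
  isPreconnected_connectedComponentIn

lemma comp_ordConnected (φ : ℝ ≃o ℝ) (x : ℝ) : (comp φ x).OrdConnected :=
  (comp_preconnected φ x).ordConnected

lemma mem_comp_self (φ : ℝ ≃o ℝ) {x : ℝ} (hx : x ∈ USet φ) : x ∈ comp φ x :=
  mem_connectedComponentIn hx

lemma comp_eq (φ : ℝ ≃o ℝ) {x y : ℝ} (h : y ∈ comp φ x) : comp φ x = comp φ y :=
  connectedComponentIn_eq h

/-- components have constant sign: if `x < φ x` then the whole component is increasing. -/
lemma comp_subset_inc (φ : ℝ ≃o ℝ) {x : ℝ} (hx : x < φ x) :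
    comp φ x ⊆ {y : ℝ | y < φ y} := by
  have hdisj : Disjoint {y : ℝ | y < φ y} {y : ℝ | φ y < y} := by
    rw [Set.disjoint_left]; intro a ha hb; exact absurd (lt_trans ha hb) (lt_irrefl a)
  have hsub : comp φ x ⊆ {y : ℝ | y < φ y} ∪ {y : ℝ | φ y < y} := by
    intro a ha
    rcases lt_or_gt_of_ne (comp_subset φ x ha) with h | h
    · exact Or.inr h
    · exact Or.inl h
  rcases (comp_preconnected φ x).subset_or_subset (isOpen_inc φ) (isOpen_dec φ) hdisj hsub with
    h | h
  · exact h
  · exact absurd (h (mem_comp_self φ (ne_of_gt hx))) (not_lt.mpr (le_of_lt hx))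

lemma apply_mem_comp (φ : ℝ ≃o ℝ) {x : ℝ} (hx : x < φ x) : φ x ∈ comp φ x := by
  have hIcc : Icc x (φ x) ⊆ USet φ := by
    intro z hz
    intro hfz
    rcases hz with ⟨h1, h2⟩
    have : φ x ≤ φ z := φ.monotone h1
    rw [hfz] at this
    have hz2 : z = φ x := le_antisymm h2 this
    rw [hz2] at hfz
    have : x = φ x := φ.injective (by rw [hfz])
    exact absurd this (ne_of_lt hx)
  exact (isPreconnected_Icc.subset_connectedComponentIn ⟨le_refl x, le_of_lt hx⟩ hIcc)
    ⟨le_of_lt hx, le_refl _⟩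

lemma inv_apply_mem_comp (φ : ℝ ≃o ℝ) {x : ℝ} (hx : x < φ x) : φ⁻¹ x ∈ comp φ x := by
  have h1 : φ⁻¹ x < x := (inv_lt_iff φ x).mpr hx
  have h2 : φ⁻¹ x < φ (φ⁻¹ x) := by
    rw [apply_inv]; exact h1
  have h3 : φ (φ⁻¹ x) ∈ comp φ (φ⁻¹ x) := apply_mem_comp φ h2
  have h4 : x ∈ comp φ (φ⁻¹ x) := by
    rwa [apply_inv] at h3
  rw [← comp_eq φ h4]
  exact mem_comp_self φ (ne_of_gt h2)

lemma zpow_mem_comp (φ : ℝ ≃o ℝ) {x : ℝ} (hx : x < φ x) (n : ℤ) : (φ^n) x ∈ comp φ x := by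
  induction n using Int.induction_on with
  | zero => exact mem_comp_self φ (ne_of_gt hx)
  | succ k ih =>
      have hk : (φ^(k:ℤ)) x ∈ comp φ x := ih
      have hsign : (φ^(k:ℤ)) x < φ ((φ^(k:ℤ)) x) := comp_subset_inc φ hx hk
      have : φ ((φ^(k:ℤ)) x) ∈ comp φ ((φ^(k:ℤ)) x) := apply_mem_comp φ hsign
      rw [← comp_eq φ hk] at this
      rw [zp_succ]
      exact this
  | pred k ih =>
      have hk : (φ^(-(k:ℤ))) x ∈ comp φ x := ih
      have hsign : (φ^(-(k:ℤ))) x < φ ((φ^(-(k:ℤ))) x) := comp_subset_inc φ hx hk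
      have : φ⁻¹ ((φ^(-(k:ℤ))) x) ∈ comp φ ((φ^(-(k:ℤ))) x) := inv_apply_mem_comp φ hsign
      rw [← comp_eq φ hk] at this
      have heq : (φ^(-(k:ℤ)-1)) x = φ⁻¹ ((φ^(-(k:ℤ))) x) := by
        have : (φ^(-(k:ℤ)-1)) = φ⁻¹ * (φ^(-(k:ℤ))) := by group
        rw [this]; rfl
      rw [heq]
      exact this

/-! ### escape lemmas -/

lemma escape_up (φ : ℝ ≃o ℝ) {x z : ℝ} (hU : Icc x z ⊆ USet φ) (hx : x < φ x) :
    ∃ n : ℕ, z < (φ^(n:ℤ)) x := by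
  by_contra hcon
  push_neg at hcon
  have hxz : x ≤ z := by simpa [zp_zero] using hcon 0
  have hdisj : Disjoint {y : ℝ | y < φ y} {y : ℝ | φ y < y} := by
    rw [Set.disjoint_left]; intro a ha hb; exact absurd (lt_trans ha hb) (lt_irrefl a)
  have hsub : Icc x z ⊆ {y : ℝ | y < φ y} ∪ {y : ℝ | φ y < y} := by
    intro a ha
    rcases lt_or_gt_of_ne (hU ha) with h | h
    · exact Or.inr h
    · exact Or.inl h
  have hinc : Icc x z ⊆ {y : ℝ | y < φ y} := by
    rcases isPreconnected_Icc.subset_or_subset (isOpen_inc φ) (isOpen_dec φ) hdisj hsub with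
      h | h
    · exact h
    · exact absurd (h ⟨le_refl x, hxz⟩) (not_lt.mpr (le_of_lt hx))
  set f : ℕ → ℝ := fun n => (φ^(n:ℤ)) x with hf
  have hmono : Monotone f := fun n m hnm =>
    (zp_orbit_strictMono φ hx).monotone (by exact_mod_cast hnm)
  have hbdd : BddAbove (Set.range f) := ⟨z, by rintro _ ⟨n, rfl⟩; exact hcon n⟩
  set s : ℝ := ⨆ n, f n with hs
  have htend : Filter.Tendsto f Filter.atTop (nhds s) := tendsto_atTop_ciSup hmono hbdd
  have htend1 : Filter.Tendsto (fun n => f (n+1)) Filter.atTop (nhds s) :=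
    htend.comp (Filter.tendsto_add_atTop_nat 1)
  have hfsucc : ∀ n : ℕ, f (n+1) = φ (f n) := by
    intro n
    have : ((n+1 : ℕ) : ℤ) = (n : ℤ) + 1 := by push_cast; ring
    rw [hf]; simp only [this]
    exact zp_succ φ n x
  have htend2 : Filter.Tendsto (fun n => φ (f n)) Filter.atTop (nhds (φ s)) :=
    (φ.continuous.tendsto s).comp htend
  have hfix : φ s = s := by
    refine tendsto_nhds_unique htend2 ?_
    simpa only [hfsucc] using htend1
  have hsx : x ≤ s := by
    have h0 : f 0 = x := by simp [hf, zp_zero]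
    have := le_ciSup hbdd 0
    rwa [h0] at this
  have hsz : s ≤ z := ciSup_le hcon
  have h2 : s < φ s := hinc ⟨hsx, hsz⟩
  rw [hfix] at h2
  exact lt_irrefl s h2

lemma escape_down (φ : ℝ ≃o ℝ) {x z : ℝ} (hU : Icc z x ⊆ USet φ) (hx : x < φ x) :
    ∃ n : ℕ, (φ^(-(n:ℤ))) x < z := by
  by_contra hcon
  push_neg at hcon
  have hzx : z ≤ x := by simpa [zp_zero] using hcon 0
  have hdisj : Disjoint {y : ℝ | y < φ y} {y : ℝ | φ y < y} := by
    rw [Set.disjoint_left]; intro a ha hb; exact absurd (lt_trans ha hb) (lt_irrefl a)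
  have hsub : Icc z x ⊆ {y : ℝ | y < φ y} ∪ {y : ℝ | φ y < y} := by
    intro a ha
    rcases lt_or_gt_of_ne (hU ha) with h | h
    · exact Or.inr h
    · exact Or.inl h
  have hinc : Icc z x ⊆ {y : ℝ | y < φ y} := by
    rcases isPreconnected_Icc.subset_or_subset (isOpen_inc φ) (isOpen_dec φ) hdisj hsub with
      h | h
    · exact h
    · exact absurd (h ⟨hzx, le_refl x⟩) (not_lt.mpr (le_of_lt hx))
  set f : ℕ → ℝ := fun n => (φ^(-(n:ℤ))) x with hf
  have hanti : Antitone f := fun n m hnm =>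
    (zp_orbit_strictMono φ hx).monotone (by simp; exact_mod_cast hnm)
  have hbdd : BddBelow (Set.range f) := ⟨z, by rintro _ ⟨n, rfl⟩; exact hcon n⟩
  set s : ℝ := ⨅ n, f n with hs
  have htend : Filter.Tendsto f Filter.atTop (nhds s) := tendsto_atTop_ciInf hanti hbdd
  have htend1 : Filter.Tendsto (fun n => f (n+1)) Filter.atTop (nhds s) :=
    htend.comp (Filter.tendsto_add_atTop_nat 1)
  have hfsucc : ∀ n : ℕ, f n = φ (f (n+1)) := by
    intro n
    have h1 : -(n:ℤ) = (-((n+1:ℕ):ℤ)) + 1 := by push_cast; ring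
    rw [hf]; simp only []
    rw [h1, zp_succ]
  have htend2 : Filter.Tendsto (fun n => φ (f (n+1))) Filter.atTop (nhds (φ s)) :=
    (φ.continuous.tendsto s).comp htend1
  have hfix : φ s = s := by
    refine tendsto_nhds_unique htend2 ?_
    have : (fun n => φ (f (n+1))) = f := by
      funext n; exact (hfsucc n).symm
    rw [this]; exact htend
  have hsx : s ≤ x := by
    have h0 : f 0 = x := by simp [hf, zp_zero]
    have := ciInf_le hbdd 0
    rwa [h0] at this
  have hsz : z ≤ s := le_ciInf hcon
  have h2 : s < φ s := hinc ⟨hsz, hsx⟩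
  rw [hfix] at h2
  exact lt_irrefl s h2

/-! ### the index of a point relative to a base point of its component -/

def idxSet (φ : ℝ ≃o ℝ) (c x : ℝ) : Set ℤ := {k : ℤ | c ≤ (φ^k) x}

noncomputable def idx (φ : ℝ ≃o ℝ) (c x : ℝ) : ℤ := sInf (idxSet φ c x)

lemma idxSet_nonempty (φ : ℝ ≃o ℝ) {c x : ℝ} (hx : x < φ x) (hc : c ∈ comp φ x) :
    (idxSet φ c x).Nonempty := by
  rcases le_or_gt c x with h | h
  · exact ⟨0, by simpa [idxSet, zp_zero] using h⟩
  · have hIcc : Icc x c ⊆ USet φ := by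
      refine subset_trans ?_ (comp_subset φ x)
      exact (comp_ordConnected φ x).out (mem_comp_self φ (ne_of_gt hx)) hc
    obtain ⟨n, hn⟩ := escape_up φ hIcc hx
    exact ⟨(n:ℤ), le_of_lt hn⟩

lemma idxSet_bddBelow (φ : ℝ ≃o ℝ) {c x : ℝ} (hx : x < φ x) (hc : c ∈ comp φ x) :
    BddBelow (idxSet φ c x) := by
  have : ∃ m : ℤ, (φ^m) x < c := by
    rcases lt_or_ge x c with h | h
    · exact ⟨0, by simpa [zp_zero] using h⟩
    · have hIcc : Icc c x ⊆ USet φ := by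
        refine subset_trans ?_ (comp_subset φ x)
        exact (comp_ordConnected φ x).out hc (mem_comp_self φ (ne_of_gt hx))
      obtain ⟨n, hn⟩ := escape_down φ hIcc hx
      exact ⟨-(n:ℤ), hn⟩
  obtain ⟨m, hm⟩ := this
  refine ⟨m + 1, fun k hk => ?_⟩
  by_contra hcon
  push_neg at hcon
  have hkm : k ≤ m := by omega
  have : (φ^k) x ≤ (φ^m) x := (zp_orbit_strictMono φ hx).monotone hkm
  exact absurd (le_trans hk this) (not_le.mpr hm)

lemma idx_spec (φ : ℝ ≃o ℝ) {c x : ℝ} (hx : x < φ x) (hc : c ∈ comp φ x) :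
    c ≤ (φ^(idx φ c x)) x ∧ (φ^(idx φ c x)) x < φ c := by
  have hne := idxSet_nonempty φ hx hc
  have hbdd := idxSet_bddBelow φ hx hc
  have hmem : idx φ c x ∈ idxSet φ c x := Int.csInf_mem hne hbdd
  refine ⟨hmem, ?_⟩
  have hnot : idx φ c x - 1 ∉ idxSet φ c x := by
    intro hmem'
    have h3 : idx φ c x ≤ idx φ c x - 1 := csInf_le hbdd hmem'
    omega
  have hlt : (φ^(idx φ c x - 1)) x < c := not_le.mp hnot
  have := φ.strictMono hlt
  rwa [← zp_succ, sub_add_cancel] at this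

lemma idx_unique (φ : ℝ ≃o ℝ) {c x : ℝ} (hx : x < φ x) (hc : c ∈ comp φ x) (m : ℤ)
    (h1 : c ≤ (φ^m) x) (h2 : (φ^m) x < φ c) : idx φ c x = m := by
  have hbdd := idxSet_bddBelow φ hx hc
  have hle : idx φ c x ≤ m := csInf_le hbdd h1
  have hmem : idx φ c x ∈ idxSet φ c x :=
    Int.csInf_mem (idxSet_nonempty φ hx hc) hbdd
  by_contra hne
  have hlt : idx φ c x ≤ m - 1 := Int.le_sub_one_iff.mpr (lt_of_le_of_ne hle hne)
  have : (φ^(idx φ c x)) x ≤ (φ^(m-1)) x := (zp_orbit_strictMono φ hx).monotone hlt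
  have hcle : c ≤ (φ^(m-1)) x := le_trans hmem this
  have := φ.monotone hcle
  rw [← zp_succ, sub_add_cancel] at this
  exact absurd h2 (not_lt.mpr this)

/-! ### basepoints and the fundamental-domain map -/

noncomputable def bp (I S : Set ℝ) : ℝ :=
  if h : (S ∩ I).Nonempty then h.choose else if h2 : S.Nonempty then h2.choose else 0

lemma bp_mem_inter {I S : Set ℝ} (h : (S ∩ I).Nonempty) : bp I S ∈ S ∩ I := by
  rw [bp, dif_pos h]; exact h.choose_spec

lemma bp_mem {S : Set ℝ} (h : S.Nonempty) (I : Set ℝ) : bp I S ∈ S := by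
  by_cases h1 : (S ∩ I).Nonempty
  · exact (bp_mem_inter h1).1
  · rw [bp, dif_neg h1, dif_pos h]; exact h.choose_spec

noncomputable def base (φ₁ : ℝ ≃o ℝ) (I : Set ℝ) (x : ℝ) : ℝ := bp I (comp φ₁ x)

noncomputable def fd (ψ φ₁ φ₂ : ℝ ≃o ℝ) (I : Set ℝ) (x : ℝ) : ℝ → ℝ :=
  if (comp φ₁ x ∩ I).Nonempty then (ψ : ℝ → ℝ)
  else fun t => ψ (base φ₁ I x) +
    (φ₂ (ψ (base φ₁ I x)) - ψ (base φ₁ I x)) * (t - base φ₁ I x) /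
      (φ₁ (base φ₁ I x) - base φ₁ I x)

noncomputable def build (ψ φ₁ φ₂ : ℝ ≃o ℝ) (I : Set ℝ) (x : ℝ) : ℝ :=
  (φ₂ ^ (-(idx φ₁ (base φ₁ I x) x))) (fd ψ φ₁ φ₂ I x ((φ₁ ^ (idx φ₁ (base φ₁ I x) x)) x))

lemma base_congr (φ₁ : ℝ ≃o ℝ) (I : Set ℝ) {x y : ℝ} (h : y ∈ comp φ₁ x) :
    base φ₁ I y = base φ₁ I x := by
  rw [base, base, comp_eq φ₁ h]

lemma fd_congr (ψ φ₁ φ₂ : ℝ ≃o ℝ) (I : Set ℝ) {x y : ℝ} (h : y ∈ comp φ₁ x) :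
    fd ψ φ₁ φ₂ I y = fd ψ φ₁ φ₂ I x := by
  rw [fd, fd, comp_eq φ₁ h, base_congr φ₁ I h]

lemma base_mem (φ₁ : ℝ ≃o ℝ) (I : Set ℝ) {x : ℝ} (hx : x ∈ USet φ₁) :
    base φ₁ I x ∈ comp φ₁ x := by
  by_cases h1 : (comp φ₁ x ∩ I).Nonempty
  · exact (bp_mem_inter h1).1
  · exact bp_mem ⟨x, mem_comp_self φ₁ hx⟩ I

lemma base_mem_I (φ₁ : ℝ ≃o ℝ) {I : Set ℝ} {x : ℝ} (h : (comp φ₁ x ∩ I).Nonempty) :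
    base φ₁ I x ∈ I := (bp_mem_inter h).2

/-! ### pointwise consequences of the weak conjugation hypotheses -/

lemma psi_inc {ψ φ₁ φ₂ : ℝ ≃o ℝ}
    (hInc : ψ '' {x | φ₁ x > x} = {x | φ₂ x > x}) {x : ℝ} (h : x < φ₁ x) :
    ψ x < φ₂ (ψ x) := by
  have : ψ x ∈ {y : ℝ | φ₂ y > y} := by rw [← hInc]; exact ⟨x, h, rfl⟩
  exact this

lemma psi_fix {ψ φ₁ φ₂ : ℝ ≃o ℝ}
    (hFix : ψ '' {x | φ₁ x = x} = {x | φ₂ x = x}) {x : ℝ} (h : φ₁ x = x) :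
    φ₂ (ψ x) = ψ x := by
  have : ψ x ∈ {y : ℝ | φ₂ y = y} := by rw [← hFix]; exact ⟨x, h, rfl⟩
  exact this

lemma psi_U {ψ φ₁ φ₂ : ℝ ≃o ℝ}
    (hFix : ψ '' {x | φ₁ x = x} = {x | φ₂ x = x}) {x : ℝ} (h : x ∈ USet φ₁) :
    ψ x ∈ USet φ₂ := by
  intro hfix
  have : ψ x ∈ {y : ℝ | φ₂ y = y} := hfix
  rw [← hFix] at this
  obtain ⟨z, hz, hzx⟩ := this
  have : z = x := ψ.injective hzx
  rw [this] at hz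
  exact h hz

lemma psi_dec {ψ φ₁ φ₂ : ℝ ≃o ℝ}
    (hFix : ψ '' {x | φ₁ x = x} = {x | φ₂ x = x})
    (hInc : ψ '' {x | φ₁ x > x} = {x | φ₂ x > x}) :
    ψ '' {x | φ₁ x < x} = {x | φ₂ x < x} := by
  ext y
  constructor
  · rintro ⟨x, hx, rfl⟩
    have hU : ψ x ∈ USet φ₂ := psi_U hFix (ne_of_lt hx)
    rcases lt_or_gt_of_ne hU with h | h
    · exact h
    · exfalso
      have : ψ x ∈ {y : ℝ | φ₂ y > y} := h
      rw [← hInc] at this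
      obtain ⟨z, hz, hzx⟩ := this
      rw [ψ.injective hzx] at hz
      have hz' : x < φ₁ x := hz
      have hx' : φ₁ x < x := hx
      exact lt_asymm hz' hx' 
  · intro hy
    refine ⟨ψ.symm y, ?_, ψ.apply_symm_apply y⟩
    have hU : ψ.symm y ∈ USet φ₁ := by
      intro hfix
      have : ψ (ψ.symm y) ∈ ψ '' {x : ℝ | φ₁ x = x} := ⟨ψ.symm y, hfix, rfl⟩
      rw [hFix, ψ.apply_symm_apply] at this
      have h' : φ₂ y = y := this
      have hy' : φ₂ y < y := hy
      rw [h'] at hy'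
      exact lt_irrefl y hy' 
    rcases lt_or_gt_of_ne hU with h | h
    · exact h
    · exfalso
      have : ψ (ψ.symm y) ∈ ψ '' {x : ℝ | φ₁ x > x} := ⟨ψ.symm y, h, rfl⟩
      rw [hInc, ψ.apply_symm_apply] at this
      have this' : y < φ₂ y := this
      have hy' : φ₂ y < y := hy
      exact lt_asymm this' hy' 

lemma psi_comp {ψ φ₁ φ₂ : ℝ ≃o ℝ}
    (hFix : ψ '' {x | φ₁ x = x} = {x | φ₂ x = x}) {x y : ℝ}
    (hxU : x ∈ USet φ₁) (hy : y ∈ comp φ₁ x) :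
    ψ y ∈ comp φ₂ (ψ x) := by
  have hpre : IsPreconnected ((ψ : ℝ → ℝ) '' comp φ₁ x) :=
    (comp_preconnected φ₁ x).image _ ψ.continuous.continuousOn
  have hsub : (ψ : ℝ → ℝ) '' comp φ₁ x ⊆ USet φ₂ := by
    rintro _ ⟨z, hz, rfl⟩
    exact psi_U hFix (comp_subset φ₁ x hz)
  have hmem : ψ x ∈ (ψ : ℝ → ℝ) '' comp φ₁ x := ⟨x, mem_comp_self φ₁ hxU, rfl⟩
  exact hpre.subset_connectedComponentIn hmem hsub ⟨y, hy, rfl⟩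

/-! ### properties of the fundamental-domain map -/

lemma fd_strictMono {ψ φ₁ φ₂ : ℝ ≃o ℝ} {I : Set ℝ}
    (hInc : ψ '' {x | φ₁ x > x} = {x | φ₂ x > x}) {x : ℝ} (hx : x < φ₁ x) :
    StrictMono (fd ψ φ₁ φ₂ I x) := by
  have hc : base φ₁ I x < φ₁ (base φ₁ I x) :=
    comp_subset_inc φ₁ hx (base_mem φ₁ I (ne_of_gt hx))
  have hc2 : ψ (base φ₁ I x) < φ₂ (ψ (base φ₁ I x)) := psi_inc hInc hc
  rw [fd]
  split_ifs with h
  · exact ψ.strictMono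
  · intro a b hab
    set c := base φ₁ I x with hcdef
    set B := φ₂ (ψ c) - ψ c with hBdef
    set D := φ₁ c - c with hDdef
    have hBpos : (0:ℝ) < B := by rw [hBdef]; linarith
    have hDpos : (0:ℝ) < D := by rw [hDdef]; linarith
    have hD' : (0:ℝ) < D⁻¹ := inv_pos.mpr hDpos
    simp only [div_eq_mul_inv]
    have h1 : B * (a - c) < B * (b - c) := by nlinarith
    have h2 := mul_lt_mul_of_pos_right h1 hD'
    linarith

lemma fd_base {ψ φ₁ φ₂ : ℝ ≃o ℝ} {I : Set ℝ} (x : ℝ) :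
    fd ψ φ₁ φ₂ I x (base φ₁ I x) = ψ (base φ₁ I x) := by
  rw [fd]
  split_ifs with h
  · rfl
  · simp

lemma fd_top {ψ φ₁ φ₂ : ℝ ≃o ℝ} {I : Set ℝ}
    (hstrong : ∀ x ∈ I, ψ (φ₁ x) = φ₂ (ψ x)) {x : ℝ} (hx : x < φ₁ x) :
    fd ψ φ₁ φ₂ I x (φ₁ (base φ₁ I x)) = φ₂ (ψ (base φ₁ I x)) := by
  have hc : base φ₁ I x < φ₁ (base φ₁ I x) :=
    comp_subset_inc φ₁ hx (base_mem φ₁ I (ne_of_gt hx))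
  rw [fd]
  split_ifs with h
  · exact hstrong _ (base_mem_I φ₁ h)
  · have hD : φ₁ (base φ₁ I x) - base φ₁ I x ≠ 0 := by linarith
    field_simp
    ring

lemma fd_surjOn {ψ φ₁ φ₂ : ℝ ≃o ℝ} {I : Set ℝ}
    (hInc : ψ '' {x | φ₁ x > x} = {x | φ₂ x > x})
    (hstrong : ∀ x ∈ I, ψ (φ₁ x) = φ₂ (ψ x)) {x : ℝ} (hx : x < φ₁ x)
    {w : ℝ} (h1 : ψ (base φ₁ I x) ≤ w) (h2 : w < φ₂ (ψ (base φ₁ I x))) :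
    ∃ t, base φ₁ I x ≤ t ∧ t < φ₁ (base φ₁ I x) ∧ fd ψ φ₁ φ₂ I x t = w := by
  have hc : base φ₁ I x < φ₁ (base φ₁ I x) :=
    comp_subset_inc φ₁ hx (base_mem φ₁ I (ne_of_gt hx))
  have hc2 : ψ (base φ₁ I x) < φ₂ (ψ (base φ₁ I x)) := psi_inc hInc hc
  rw [fd]
  split_ifs with h
  · refine ⟨ψ.symm w, ?_, ?_, ψ.apply_symm_apply w⟩
    · have := ψ.symm.monotone h1
      simpa using this
    · have htop : ψ (φ₁ (base φ₁ I x)) = φ₂ (ψ (base φ₁ I x)) := hstrong _ (base_mem_I φ₁ h)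
      rw [← htop] at h2
      have := ψ.symm.strictMono h2
      simpa using this
  · set c := base φ₁ I x with hcdef
    set B := φ₂ (ψ c) - ψ c with hBdef
    set D := φ₁ c - c with hDdef
    have hBpos : (0:ℝ) < B := by rw [hBdef]; linarith
    have hDpos : (0:ℝ) < D := by rw [hDdef]; linarith
    have hB0 : B ≠ 0 := ne_of_gt hBpos
    have hD0 : D ≠ 0 := ne_of_gt hDpos
    refine ⟨c + (w - ψ c) * D / B, ?_, ?_, ?_⟩
    · have h3 : 0 ≤ (w - ψ c) * D / B :=
        div_nonneg (mul_nonneg (by linarith) hDpos.le) hBpos.le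
      linarith
    · have h3 : (w - ψ c) * D < B * D := mul_lt_mul_of_pos_right (by linarith) hDpos
      have h4 : (w - ψ c) * D / B < D := by
        rw [div_lt_iff₀ hBpos]; nlinarith
      have h5 : φ₁ c = c + D := by rw [hDdef]; ring
      rw [h5]; linarith
    · show ψ c + B * ((c + (w - ψ c) * D / B) - c) / D = w
      field_simp
      ring

/-! ### the key properties of `build` -/

lemma build_equivariant (ψ φ₁ φ₂ : ℝ ≃o ℝ) (I : Set ℝ) {x : ℝ} (hx : x < φ₁ x) :
    build ψ φ₁ φ₂ I (φ₁ x) = φ₂ (build ψ φ₁ φ₂ I x) := by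
  have hxU : x ∈ USet φ₁ := ne_of_gt hx
  have hmemφ : φ₁ x ∈ comp φ₁ x := apply_mem_comp φ₁ hx
  have hφx : φ₁ x < φ₁ (φ₁ x) := comp_subset_inc φ₁ hx hmemφ
  have hbase : base φ₁ I (φ₁ x) = base φ₁ I x := base_congr φ₁ I hmemφ
  have hfd : fd ψ φ₁ φ₂ I (φ₁ x) = fd ψ φ₁ φ₂ I x := fd_congr ψ φ₁ φ₂ I hmemφ
  set c := base φ₁ I x with hc
  have hcmem : c ∈ comp φ₁ x := base_mem φ₁ I hxU
  have hcmem' : c ∈ comp φ₁ (φ₁ x) := by rw [← comp_eq φ₁ hmemφ]; exact hcmem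
  set n := idx φ₁ c x with hn
  obtain ⟨hs1, hs2⟩ := idx_spec φ₁ hx hcmem
  have heq : (φ₁^(n-1)) (φ₁ x) = (φ₁^n) x := by
    rw [← zp_succ' φ₁ (n-1) x, sub_add_cancel]
  have hidx : idx φ₁ c (φ₁ x) = n - 1 :=
    idx_unique φ₁ hφx hcmem' (n-1) (by rw [heq]; exact hs1) (by rw [heq]; exact hs2)
  simp only [build, hbase, hfd, ← hc, ← hn, hidx, heq]
  have hexp : -(n-1) = -n + 1 := by ring
  rw [hexp, zp_succ φ₂ (-n)]

lemma build_mem_comp {ψ φ₁ φ₂ : ℝ ≃o ℝ} {I : Set ℝ}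
    (hFix : ψ '' {x | φ₁ x = x} = {x | φ₂ x = x})
    (hInc : ψ '' {x | φ₁ x > x} = {x | φ₂ x > x})
    (hstrong : ∀ x ∈ I, ψ (φ₁ x) = φ₂ (ψ x))
    {x : ℝ} (hx : x < φ₁ x) :
    build ψ φ₁ φ₂ I x ∈ comp φ₂ (ψ x) := by
  have hxU : x ∈ USet φ₁ := ne_of_gt hx
  set c := base φ₁ I x with hc
  have hcmem : c ∈ comp φ₁ x := base_mem φ₁ I hxU
  have hcinc : c < φ₁ c := comp_subset_inc φ₁ hx hcmem
  have hψc : ψ c ∈ comp φ₂ (ψ x) := psi_comp hFix hxU hcmem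
  have hψcinc : ψ c < φ₂ (ψ c) := psi_inc hInc hcinc
  have hφψc : φ₂ (ψ c) ∈ comp φ₂ (ψ x) := by
    have h1 : φ₂ (ψ c) ∈ comp φ₂ (ψ c) := apply_mem_comp φ₂ hψcinc
    rwa [← comp_eq φ₂ hψc] at h1
  obtain ⟨hs1, hs2⟩ := idx_spec φ₁ hx hcmem
  set n := idx φ₁ c x with hn
  have hfdc : fd ψ φ₁ φ₂ I x c = ψ c := by rw [hc]; exact fd_base x
  have hfdtop : fd ψ φ₁ φ₂ I x (φ₁ c) = φ₂ (ψ c) := by rw [hc]; exact fd_top hstrong hx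
  have hy1 : ψ c ≤ fd ψ φ₁ φ₂ I x ((φ₁^n) x) := by
    rw [← hfdc]; exact (fd_strictMono hInc hx).monotone hs1
  have hy2 : fd ψ φ₁ φ₂ I x ((φ₁^n) x) ≤ φ₂ (ψ c) := by
    rw [← hfdtop]; exact (fd_strictMono hInc hx).monotone hs2.le
  have hymem : fd ψ φ₁ φ₂ I x ((φ₁^n) x) ∈ comp φ₂ (ψ x) :=
    (comp_ordConnected φ₂ (ψ x)).out hψc hφψc ⟨hy1, hy2⟩
  have hψxinc : ψ x < φ₂ (ψ x) := psi_inc hInc hx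
  have hysign : fd ψ φ₁ φ₂ I x ((φ₁^n) x) < φ₂ (fd ψ φ₁ φ₂ I x ((φ₁^n) x)) :=
    comp_subset_inc φ₂ hψxinc hymem
  have hfin := zpow_mem_comp φ₂ hysign (-n)
  rw [← comp_eq φ₂ hymem] at hfin
  simpa only [build, ← hc, ← hn] using hfin

lemma build_lt {ψ φ₁ φ₂ : ℝ ≃o ℝ} {I : Set ℝ}
    (hInc : ψ '' {x | φ₁ x > x} = {x | φ₂ x > x})
    (hstrong : ∀ x ∈ I, ψ (φ₁ x) = φ₂ (ψ x))
    {x y : ℝ} (hx : x < φ₁ x) (hy : y ∈ comp φ₁ x) (hxy : x < y) :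
    build ψ φ₁ φ₂ I x < build ψ φ₁ φ₂ I y := by
  have hxU : x ∈ USet φ₁ := ne_of_gt hx
  have hysign : y < φ₁ y := comp_subset_inc φ₁ hx hy
  have hbase : base φ₁ I y = base φ₁ I x := base_congr φ₁ I hy
  have hfd : fd ψ φ₁ φ₂ I y = fd ψ φ₁ φ₂ I x := fd_congr ψ φ₁ φ₂ I hy
  set c := base φ₁ I x with hc
  have hcmem : c ∈ comp φ₁ x := base_mem φ₁ I hxU
  have hcmemy : c ∈ comp φ₁ y := by rw [← comp_eq φ₁ hy]; exact hcmem
  have hcinc : c < φ₁ c := comp_subset_inc φ₁ hx hcmem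
  have hψcinc : ψ c < φ₂ (ψ c) := psi_inc hInc hcinc
  obtain ⟨hx1, hx2⟩ := idx_spec φ₁ hx hcmem
  obtain ⟨hy1, hy2⟩ := idx_spec φ₁ hysign hcmemy
  set n := idx φ₁ c x with hn
  set m := idx φ₁ c y with hm
  have hmn : m ≤ n := by
    have h' : sInf (idxSet φ₁ c y) ≤ sInf (idxSet φ₁ c x) := by
      apply csInf_le_csInf (idxSet_bddBelow φ₁ hysign hcmemy) (idxSet_nonempty φ₁ hx hcmem)
      intro k hk
      exact le_trans hk (le_of_lt ((φ₁^k).strictMono hxy))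
    exact h'
  have hfdc : fd ψ φ₁ φ₂ I x c = ψ c := by rw [hc]; exact fd_base x
  have hfdtop : fd ψ φ₁ φ₂ I x (φ₁ c) = φ₂ (ψ c) := by rw [hc]; exact fd_top hstrong hx
  simp only [build, hbase, hfd, ← hc, ← hn, ← hm]
  rcases eq_or_lt_of_le hmn with heq | hlt
  · rw [← heq]
    apply (φ₂^(-m)).strictMono
    apply fd_strictMono hInc hx
    exact (φ₁^m).strictMono hxy
  · have a1 : fd ψ φ₁ φ₂ I x ((φ₁^n) x) < φ₂ (ψ c) := by
      rw [← hfdtop]; exact fd_strictMono hInc hx hx2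
    have b1 : (φ₂^(-n)) (fd ψ φ₁ φ₂ I x ((φ₁^n) x)) < (φ₂^(-n)) (φ₂ (ψ c)) :=
      (φ₂^(-n)).strictMono a1
    have b1' : (φ₂^(-n)) (φ₂ (ψ c)) = (φ₂^(-n+1)) (ψ c) := (zp_succ' φ₂ (-n) (ψ c)).symm
    have b2 : (φ₂^(-n+1)) (ψ c) ≤ (φ₂^(-m)) (ψ c) :=
      (zp_orbit_strictMono φ₂ hψcinc).monotone (by omega)
    have b3 : (φ₂^(-m)) (ψ c) ≤ (φ₂^(-m)) (fd ψ φ₁ φ₂ I x ((φ₁^m) y)) := by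
      apply (φ₂^(-m)).monotone
      rw [← hfdc]
      exact (fd_strictMono hInc hx).monotone hy1
    calc (φ₂^(-n)) (fd ψ φ₁ φ₂ I x ((φ₁^n) x)) < (φ₂^(-n+1)) (ψ c) := by rw [← b1']; exact b1
      _ ≤ (φ₂^(-m)) (ψ c) := b2
      _ ≤ (φ₂^(-m)) (fd ψ φ₁ φ₂ I x ((φ₁^m) y)) := b3

lemma build_surj {ψ φ₁ φ₂ : ℝ ≃o ℝ} {I : Set ℝ}
    (hFix : ψ '' {x | φ₁ x = x} = {x | φ₂ x = x})
    (hInc : ψ '' {x | φ₁ x > x} = {x | φ₂ x > x})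
    (hstrong : ∀ x ∈ I, ψ (φ₁ x) = φ₂ (ψ x))
    {x : ℝ} (hx : x < φ₁ x) {w : ℝ} (hw : w ∈ comp φ₂ (ψ x)) :
    ∃ y, y < φ₁ y ∧ y ∈ comp φ₁ x ∧ build ψ φ₁ φ₂ I y = w := by
  have hxU : x ∈ USet φ₁ := ne_of_gt hx
  set c := base φ₁ I x with hc
  have hcmem : c ∈ comp φ₁ x := base_mem φ₁ I hxU
  have hcinc : c < φ₁ c := comp_subset_inc φ₁ hx hcmem
  have hψx : ψ x < φ₂ (ψ x) := psi_inc hInc hx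
  have hwsign : w < φ₂ w := comp_subset_inc φ₂ hψx hw
  have hψc : ψ c ∈ comp φ₂ (ψ x) := psi_comp hFix hxU hcmem
  have hψcw : ψ c ∈ comp φ₂ w := by rw [← comp_eq φ₂ hw]; exact hψc
  obtain ⟨hm1, hm2⟩ := idx_spec φ₂ hwsign hψcw
  set m := idx φ₂ (ψ c) w with hm
  obtain ⟨t, ht1, ht2, ht3⟩ := fd_surjOn hInc hstrong hx hm1 hm2
  have hφc : φ₁ c ∈ comp φ₁ x := by
    have h1 := apply_mem_comp φ₁ hcinc
    rwa [← comp_eq φ₁ hcmem] at h1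
  have htmem : t ∈ comp φ₁ x :=
    (comp_ordConnected φ₁ x).out hcmem hφc ⟨ht1, ht2.le⟩
  have htsign : t < φ₁ t := comp_subset_inc φ₁ hx htmem
  have hymem : (φ₁^(-m)) t ∈ comp φ₁ x := by
    have h1 := zpow_mem_comp φ₁ htsign (-m)
    rwa [← comp_eq φ₁ htmem] at h1
  have hysign : (φ₁^(-m)) t < φ₁ ((φ₁^(-m)) t) := comp_subset_inc φ₁ hx hymem
  have hmt : (φ₁^m) ((φ₁^(-m)) t) = t := by
    have h1 := zp_cancel φ₁ (-m) t
    rwa [neg_neg] at h1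
  have hcmem2 : c ∈ comp φ₁ ((φ₁^(-m)) t) := by
    rw [← comp_eq φ₁ hymem]; exact hcmem
  have hidx : idx φ₁ c ((φ₁^(-m)) t) = m :=
    idx_unique φ₁ hysign hcmem2 m (by rw [hmt]; exact ht1) (by rw [hmt]; exact ht2)
  refine ⟨(φ₁^(-m)) t, hysign, hymem, ?_⟩
  have hbase : base φ₁ I ((φ₁^(-m)) t) = base φ₁ I x := base_congr φ₁ I hymem
  have hfd : fd ψ φ₁ φ₂ I ((φ₁^(-m)) t) = fd ψ φ₁ φ₂ I x := fd_congr ψ φ₁ φ₂ I hymem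
  simp only [build, hbase, hfd, ← hc, hidx, hmt, ht3]
  exact zp_cancel φ₂ m w

/-! ### agreement with ψ on I ∪ φ₁ I -/

lemma chain_pos {ψ φ₁ φ₂ : ℝ ≃o ℝ} {I : Set ℝ}
    (hstrong : ∀ x ∈ I, ψ (φ₁ x) = φ₂ (ψ x)) {x : ℝ} :
    ∀ n : ℕ, (∀ k : ℕ, k < n → (φ₁^(k:ℤ)) x ∈ I) →
      ψ ((φ₁^((n:ℕ):ℤ)) x) = (φ₂^((n:ℕ):ℤ)) (ψ x) := by
  intro n
  induction n with
  | zero => intro _; simp only [Nat.cast_zero, zp_zero]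
  | succ n ih =>
      intro hmem
      have hcast : ((n+1:ℕ):ℤ) = (n:ℤ)+1 := by push_cast; ring
      have h1 : ψ (φ₁ ((φ₁^((n:ℕ):ℤ)) x)) = φ₂ (ψ ((φ₁^((n:ℕ):ℤ)) x)) :=
        hstrong _ (hmem n (Nat.lt_succ_self n))
      rw [hcast, zp_succ φ₁, h1, ih (fun k hk => hmem k (Nat.lt_succ_of_lt hk)), ← zp_succ φ₂]

lemma chain_neg {ψ φ₁ φ₂ : ℝ ≃o ℝ} {I : Set ℝ}
    (hstrong : ∀ x ∈ I, ψ (φ₁ x) = φ₂ (ψ x)) {x : ℝ} :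
    ∀ n : ℕ, (∀ k : ℕ, k < n → (φ₁^(-(k:ℤ)-1)) x ∈ I) →
      ψ ((φ₁^(-((n:ℕ):ℤ))) x) = (φ₂^(-((n:ℕ):ℤ))) (ψ x) := by
  intro n
  induction n with
  | zero => intro _; simp only [Nat.cast_zero, neg_zero, zp_zero]
  | succ n ih =>
      intro hmem
      have hu : (φ₁^(-(n:ℤ)-1)) x ∈ I := hmem n (Nat.lt_succ_self n)
      have h1 : ψ (φ₁ ((φ₁^(-(n:ℤ)-1)) x)) = φ₂ (ψ ((φ₁^(-(n:ℤ)-1)) x)) := hstrong _ hu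
      have h2 : φ₁ ((φ₁^(-(n:ℤ)-1)) x) = (φ₁^(-(n:ℤ))) x := by
        rw [← zp_succ φ₁ (-(n:ℤ)-1) x, sub_add_cancel]
      rw [h2] at h1
      have h3 : ψ ((φ₁^(-(n:ℤ)-1)) x) = φ₂⁻¹ (ψ ((φ₁^(-(n:ℤ))) x)) := by
        rw [h1, inv_apply]
      have hcast : -((n+1:ℕ):ℤ) = -(n:ℤ)-1 := by push_cast; ring
      rw [hcast, h3, ih (fun k hk => hmem k (Nat.lt_succ_of_lt hk))]
      have h4 : φ₂ ((φ₂^(-(n:ℤ)-1)) (ψ x)) = (φ₂^(-(n:ℤ))) (ψ x) := by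
        rw [← zp_succ φ₂ (-(n:ℤ)-1), sub_add_cancel]
      rw [← h4, inv_apply]

lemma build_agree_I {ψ φ₁ φ₂ : ℝ ≃o ℝ} {I : Set ℝ} (hI : I.OrdConnected)
    (hstrong : ∀ x ∈ I, ψ (φ₁ x) = φ₂ (ψ x))
    {x : ℝ} (hx : x < φ₁ x) (hxI : x ∈ I) :
    build ψ φ₁ φ₂ I x = ψ x := by
  have hxU : x ∈ USet φ₁ := ne_of_gt hx
  have hmeets : (comp φ₁ x ∩ I).Nonempty := ⟨x, mem_comp_self φ₁ hxU, hxI⟩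
  have hfdψ : fd ψ φ₁ φ₂ I x = (ψ : ℝ → ℝ) := by unfold fd; rw [if_pos hmeets]
  set c := base φ₁ I x with hc
  have hcI : c ∈ I := base_mem_I φ₁ hmeets
  have hcmem : c ∈ comp φ₁ x := base_mem φ₁ I hxU
  obtain ⟨hs1, hs2⟩ := idx_spec φ₁ hx hcmem
  set n := idx φ₁ c x with hn
  have key : ψ ((φ₁^n) x) = (φ₂^n) (ψ x) := by
    rcases le_or_gt 0 n with hpos | hneg
    · obtain ⟨N, hNeq⟩ : ∃ N : ℕ, n = (N:ℤ) := ⟨n.toNat, (Int.toNat_of_nonneg hpos).symm⟩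
      rw [hNeq] at hs1 hs2 ⊢
      apply chain_pos hstrong N
      intro k hk
      have hxlek : x ≤ (φ₁^(k:ℤ)) x := by
        have h5 := (zp_orbit_strictMono φ₁ hx).monotone (show (0:ℤ) ≤ (k:ℤ) by omega)
        simpa [zp_zero] using h5
      have hkle : (φ₁^(k:ℤ)) x ≤ (φ₁^((N:ℤ)-1)) x :=
        (zp_orbit_strictMono φ₁ hx).monotone (by omega)
      have hlt : (φ₁^((N:ℤ)-1)) x < c := by
        have h5 : (φ₁^((N:ℤ))) x = φ₁ ((φ₁^((N:ℤ)-1)) x) := by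
          rw [← zp_succ φ₁, sub_add_cancel]
        rw [h5] at hs2
        exact φ₁.lt_iff_lt.mp hs2
      exact hI.out hxI hcI ⟨hxlek, le_trans hkle (le_of_lt hlt)⟩
    · obtain ⟨N, hN⟩ : ∃ N : ℕ, n = -((N:ℕ):ℤ) := by
        refine ⟨(-n).toNat, ?_⟩
        have := Int.toNat_of_nonneg (show (0:ℤ) ≤ -n by omega)
        omega
      rw [hN]
      apply chain_neg hstrong N
      intro k hk
      have h6 : (φ₁^n) x ≤ (φ₁^(-(k:ℤ)-1)) x :=
        (zp_orbit_strictMono φ₁ hx).monotone (by omega)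
      have h7 : (φ₁^(-(k:ℤ)-1)) x < x := by
        have h8 := zp_orbit_strictMono φ₁ hx (show (-(k:ℤ)-1) < 0 by omega)
        simpa [zp_zero] using h8
      exact hI.out hcI hxI ⟨le_trans hs1 h6, h7.le⟩
  simp only [build, ← hc, ← hn, hfdψ]
  rw [key]
  exact zp_cancel φ₂ n (ψ x)

lemma build_agree_phiI {ψ φ₁ φ₂ : ℝ ≃o ℝ} {I : Set ℝ} (hI : I.OrdConnected)
    (hstrong : ∀ x ∈ I, ψ (φ₁ x) = φ₂ (ψ x))
    {x : ℝ} (hx : x < φ₁ x) (hxI : x ∈ (φ₁ : ℝ → ℝ) '' I) :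
    build ψ φ₁ φ₂ I x = ψ x := by
  obtain ⟨u, huI, rfl⟩ := hxI
  have hu : u < φ₁ u := φ₁.lt_iff_lt.mp hx
  rw [build_equivariant ψ φ₁ φ₂ I hu, build_agree_I hI hstrong hu huI, ← hstrong u huI]

/-! ### inverse-instance hypotheses -/

lemma fix_inv_set (φ : ℝ ≃o ℝ) : {x : ℝ | φ⁻¹ x = x} = {x | φ x = x} := by
  ext x; exact inv_fix_iff φ x

lemma inc_inv_set (φ : ℝ ≃o ℝ) : {x : ℝ | φ⁻¹ x > x} = {x | φ x < x} := by
  ext x; exact lt_inv_iff φ x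

lemma hFix_inv {ψ φ₁ φ₂ : ℝ ≃o ℝ}
    (hFix : ψ '' {x | φ₁ x = x} = {x | φ₂ x = x}) :
    ψ '' {x | φ₁⁻¹ x = x} = {x | φ₂⁻¹ x = x} := by
  rw [fix_inv_set, fix_inv_set]; exact hFix

lemma hInc_inv {ψ φ₁ φ₂ : ℝ ≃o ℝ}
    (hFix : ψ '' {x | φ₁ x = x} = {x | φ₂ x = x})
    (hInc : ψ '' {x | φ₁ x > x} = {x | φ₂ x > x}) :
    ψ '' {x | φ₁⁻¹ x > x} = {x | φ₂⁻¹ x > x} := by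
  rw [inc_inv_set, inc_inv_set]; exact psi_dec hFix hInc

lemma hstrong_inv {ψ φ₁ φ₂ : ℝ ≃o ℝ} {I : Set ℝ}
    (hstrong : ∀ x ∈ I, ψ (φ₁ x) = φ₂ (ψ x)) :
    ∀ y ∈ (φ₁ : ℝ → ℝ) '' I, ψ (φ₁⁻¹ y) = φ₂⁻¹ (ψ y) := by
  rintro _ ⟨u, huI, rfl⟩
  rw [inv_apply φ₁, hstrong u huI, inv_apply φ₂]

lemma ordConnected_image (φ : ℝ ≃o ℝ) {I : Set ℝ} (hI : I.OrdConnected) :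
    ((φ : ℝ → ℝ) '' I).OrdConnected := by
  constructor
  rintro _ ⟨a, ha, rfl⟩ _ ⟨b, hb, rfl⟩ z hz
  refine ⟨φ.symm z, ?_, φ.apply_symm_apply z⟩
  apply hI.out ha hb
  constructor
  · have := φ.symm.monotone hz.1; simpa using this
  · have := φ.symm.monotone hz.2; simpa using this

lemma comp_inv (φ : ℝ ≃o ℝ) (x : ℝ) : comp φ⁻¹ x = comp φ x := by
  unfold comp; rw [USet_inv]

/-! ### the global map -/

noncomputable def psibar (ψ φ₁ φ₂ : ℝ ≃o ℝ) (I : Set ℝ) : ℝ → ℝ := fun x =>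
  if x < φ₁ x then build ψ φ₁ φ₂ I x
  else if φ₁ x < x then build ψ φ₁⁻¹ φ₂⁻¹ ((φ₁ : ℝ → ℝ) '' I) x
  else ψ x

lemma psibar_apply_inc {ψ φ₁ φ₂ : ℝ ≃o ℝ} {I : Set ℝ} {x : ℝ} (hx : x < φ₁ x) :
    psibar ψ φ₁ φ₂ I x = build ψ φ₁ φ₂ I x := by
  simp only [psibar]; rw [if_pos hx]

lemma psibar_apply_dec {ψ φ₁ φ₂ : ℝ ≃o ℝ} {I : Set ℝ} {x : ℝ} (hx : φ₁ x < x) :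
    psibar ψ φ₁ φ₂ I x = build ψ φ₁⁻¹ φ₂⁻¹ ((φ₁ : ℝ → ℝ) '' I) x := by
  simp only [psibar]; rw [if_neg (asymm hx), if_pos hx]

lemma psibar_apply_fix {ψ φ₁ φ₂ : ℝ ≃o ℝ} {I : Set ℝ} {x : ℝ} (hx : φ₁ x = x) :
    psibar ψ φ₁ φ₂ I x = ψ x := by
  simp only [psibar]
  rw [if_neg (by rw [hx]; exact lt_irrefl x), if_neg (by rw [hx]; exact lt_irrefl x)]

lemma psibar_mem_comp {ψ φ₁ φ₂ : ℝ ≃o ℝ} {I : Set ℝ}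
    (hFix : ψ '' {x | φ₁ x = x} = {x | φ₂ x = x})
    (hInc : ψ '' {x | φ₁ x > x} = {x | φ₂ x > x})
    (hstrong : ∀ x ∈ I, ψ (φ₁ x) = φ₂ (ψ x))
    {x : ℝ} (hxU : x ∈ USet φ₁) :
    psibar ψ φ₁ φ₂ I x ∈ comp φ₂ (ψ x) := by
  rcases lt_or_gt_of_ne hxU with hd | hi
  · rw [psibar_apply_dec hd]
    have hx2 : x < φ₁⁻¹ x := (lt_inv_iff φ₁ x).mpr hd
    have h := build_mem_comp (hFix_inv hFix) (hInc_inv hFix hInc) (hstrong_inv hstrong) hx2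
    rwa [comp_inv] at h
  · rw [psibar_apply_inc hi]
    exact build_mem_comp hFix hInc hstrong hi

lemma psibar_strictMono {ψ φ₁ φ₂ : ℝ ≃o ℝ} {I : Set ℝ} (hI : I.OrdConnected)
    (hFix : ψ '' {x | φ₁ x = x} = {x | φ₂ x = x})
    (hInc : ψ '' {x | φ₁ x > x} = {x | φ₂ x > x})
    (hstrong : ∀ x ∈ I, ψ (φ₁ x) = φ₂ (ψ x)) :
    StrictMono (psibar ψ φ₁ φ₂ I) := by
  intro x y hxy
  by_cases hx : x ∈ USet φ₁ <;> by_cases hy : y ∈ USet φ₁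
  · -- both moving
    by_cases hsame : y ∈ comp φ₁ x
    · rcases lt_or_gt_of_ne hx with hd | hi
      · have hx2 : x < φ₁⁻¹ x := (lt_inv_iff φ₁ x).mpr hd
        have hsame2 : y ∈ comp φ₁⁻¹ x := by rwa [comp_inv]
        have hy2 : y < φ₁⁻¹ y := comp_subset_inc φ₁⁻¹ hx2 hsame2
        have hyd : φ₁ y < y := (lt_inv_iff φ₁ y).mp hy2
        rw [psibar_apply_dec hd, psibar_apply_dec hyd]
        exact build_lt (hInc_inv hFix hInc) (hstrong_inv hstrong) hx2 hsame2 hxy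
      · have hyi : y < φ₁ y := comp_subset_inc φ₁ hi hsame
        rw [psibar_apply_inc hi, psibar_apply_inc hyi]
        exact build_lt hInc hstrong hi hsame hxy
    · have hz : ∃ z, x ≤ z ∧ z ≤ y ∧ φ₁ z = z := by
        by_contra hcon
        push_neg at hcon
        have hIcc : Icc x y ⊆ USet φ₁ := fun z hzm => hcon z hzm.1 hzm.2
        exact hsame (isPreconnected_Icc.subset_connectedComponentIn
          ⟨le_refl x, hxy.le⟩ hIcc ⟨hxy.le, le_refl y⟩)
      obtain ⟨z, hz1, hz2, hzf⟩ := hz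
      have hψz : φ₂ (ψ z) = ψ z := psi_fix hFix hzf
      have h1 : psibar ψ φ₁ φ₂ I x < ψ z := by
        by_contra hcon
        push_neg at hcon
        have hzx : x < z := lt_of_le_of_ne hz1 (fun he => hx (he ▸ hzf))
        have hmm := psibar_mem_comp hFix hInc hstrong (I := I) hx
        have hψxm : ψ x ∈ comp φ₂ (ψ x) := mem_comp_self φ₂ (psi_U hFix hx)
        have hmem : ψ z ∈ comp φ₂ (ψ x) :=
          (comp_ordConnected φ₂ (ψ x)).out hψxm hmm ⟨(ψ.strictMono hzx).le, hcon⟩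
        exact comp_subset φ₂ (ψ x) hmem hψz
      have h2 : ψ z < psibar ψ φ₁ φ₂ I y := by
        by_contra hcon
        push_neg at hcon
        have hzy : z < y := lt_of_le_of_ne hz2 (fun he => hy (he ▸ hzf))
        have hmm := psibar_mem_comp hFix hInc hstrong (I := I) hy
        have hψym : ψ y ∈ comp φ₂ (ψ y) := mem_comp_self φ₂ (psi_U hFix hy)
        have hmem : ψ z ∈ comp φ₂ (ψ y) :=
          (comp_ordConnected φ₂ (ψ y)).out hmm hψym ⟨hcon, (ψ.strictMono hzy).le⟩
        exact comp_subset φ₂ (ψ y) hmem hψz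
      exact lt_trans h1 h2
  · -- x moving, y fixed
    have hyf : φ₁ y = y := of_not_not hy
    rw [psibar_apply_fix hyf]
    by_contra hcon
    push_neg at hcon
    have hmm := psibar_mem_comp hFix hInc hstrong (I := I) hx
    have hψxm : ψ x ∈ comp φ₂ (ψ x) := mem_comp_self φ₂ (psi_U hFix hx)
    have hmem : ψ y ∈ comp φ₂ (ψ x) :=
      (comp_ordConnected φ₂ (ψ x)).out hψxm hmm ⟨(ψ.strictMono hxy).le, hcon⟩
    exact comp_subset φ₂ (ψ x) hmem (psi_fix hFix hyf)
  · -- x fixed, y moving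
    have hxf : φ₁ x = x := of_not_not hx
    rw [psibar_apply_fix hxf]
    by_contra hcon
    push_neg at hcon
    have hmm := psibar_mem_comp hFix hInc hstrong (I := I) hy
    have hψym : ψ y ∈ comp φ₂ (ψ y) := mem_comp_self φ₂ (psi_U hFix hy)
    have hmem : ψ x ∈ comp φ₂ (ψ y) :=
      (comp_ordConnected φ₂ (ψ y)).out hmm hψym ⟨hcon, (ψ.strictMono hxy).le⟩
    exact comp_subset φ₂ (ψ y) hmem (psi_fix hFix hxf)
  · -- both fixed
    rw [psibar_apply_fix (of_not_not hx), psibar_apply_fix (of_not_not hy)]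
    exact ψ.strictMono hxy

lemma psibar_surjective {ψ φ₁ φ₂ : ℝ ≃o ℝ} {I : Set ℝ}
    (hFix : ψ '' {x | φ₁ x = x} = {x | φ₂ x = x})
    (hInc : ψ '' {x | φ₁ x > x} = {x | φ₂ x > x})
    (hstrong : ∀ x ∈ I, ψ (φ₁ x) = φ₂ (ψ x)) :
    Function.Surjective (psibar ψ φ₁ φ₂ I) := by
  intro w
  by_cases hx : ψ.symm w ∈ USet φ₁
  · have hwU : w ∈ USet φ₂ := by
      have := psi_U hFix hx; rwa [ψ.apply_symm_apply] at this
    rcases lt_or_gt_of_ne hx with hd | hi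
    · have hx2 : ψ.symm w < φ₁⁻¹ (ψ.symm w) := (lt_inv_iff φ₁ _).mpr hd
      have hwU2 : w ∈ USet φ₂⁻¹ := by rwa [USet_inv]
      have hw : w ∈ comp φ₂⁻¹ (ψ (ψ.symm w)) := by
        rw [ψ.apply_symm_apply]; exact mem_comp_self φ₂⁻¹ hwU2
      obtain ⟨y, hy1, _, hy3⟩ :=
        build_surj (hFix_inv hFix) (hInc_inv hFix hInc) (hstrong_inv hstrong) hx2 hw
      have hyd : φ₁ y < y := (lt_inv_iff φ₁ y).mp hy1
      exact ⟨y, by rw [psibar_apply_dec hyd]; exact hy3⟩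
    · have hw : w ∈ comp φ₂ (ψ (ψ.symm w)) := by
        rw [ψ.apply_symm_apply]; exact mem_comp_self φ₂ hwU
      obtain ⟨y, hy1, _, hy3⟩ := build_surj hFix hInc hstrong hi hw
      exact ⟨y, by rw [psibar_apply_inc hy1]; exact hy3⟩
  · have hxf : φ₁ (ψ.symm w) = ψ.symm w := of_not_not hx
    exact ⟨ψ.symm w, by rw [psibar_apply_fix hxf, ψ.apply_symm_apply]⟩

lemma psibar_equivariant {ψ φ₁ φ₂ : ℝ ≃o ℝ} {I : Set ℝ}
    (hFix : ψ '' {x | φ₁ x = x} = {x | φ₂ x = x}) (x : ℝ) :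
    psibar ψ φ₁ φ₂ I (φ₁ x) = φ₂ (psibar ψ φ₁ φ₂ I x) := by
  rcases lt_trichotomy x (φ₁ x) with hi | he | hd
  · have hφi : φ₁ x < φ₁ (φ₁ x) := φ₁.strictMono hi
    rw [psibar_apply_inc hφi, psibar_apply_inc hi]
    exact build_equivariant ψ φ₁ φ₂ I hi
  · have hfix : φ₁ x = x := he.symm
    rw [hfix, psibar_apply_fix hfix, psi_fix hFix hfix]
  · have hφd : φ₁ (φ₁ x) < φ₁ x := φ₁.strictMono hd
    rw [psibar_apply_dec hφd, psibar_apply_dec hd]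
    have hsign : φ₁ x < φ₁⁻¹ (φ₁ x) := by rw [inv_apply]; exact hd
    have h := build_equivariant ψ φ₁⁻¹ φ₂⁻¹ ((φ₁ : ℝ → ℝ) '' I) hsign
    rw [inv_apply φ₁] at h
    rw [h, apply_inv φ₂]

lemma psibar_agree {ψ φ₁ φ₂ : ℝ ≃o ℝ} {I : Set ℝ} (hI : I.OrdConnected)
    (hstrong : ∀ x ∈ I, ψ (φ₁ x) = φ₂ (ψ x))
    (x : ℝ) (hxI : x ∈ I ∪ (φ₁ : ℝ → ℝ) '' I) :
    psibar ψ φ₁ φ₂ I x = ψ x := by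
  rcases lt_trichotomy x (φ₁ x) with hi | he | hd
  · rw [psibar_apply_inc hi]
    rcases hxI with h | h
    · exact build_agree_I hI hstrong hi h
    · exact build_agree_phiI hI hstrong hi h
  · exact psibar_apply_fix he.symm
  · rw [psibar_apply_dec hd]
    have hx2 : x < φ₁⁻¹ x := (lt_inv_iff φ₁ x).mpr hd
    rcases hxI with h | h
    · apply build_agree_phiI (ordConnected_image φ₁ hI) (hstrong_inv hstrong) hx2
      exact ⟨φ₁ x, ⟨x, h, rfl⟩, inv_apply φ₁ x⟩
    · exact build_agree_I (ordConnected_image φ₁ hI) (hstrong_inv hstrong) hx2 h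

end WCP

/-- Lemma 2.7 of [ABR]: a weak conjugation ψ from φ₁ to φ₂ that is strong on an
interval I can be promoted to a true conjugation ψ̄ from φ₁ to φ₂ agreeing with
ψ on I ∪ φ₁(I) and on Fix(φ₁). -/
theorem weak_conj_promotion (ψ φ₁ φ₂ : ℝ ≃o ℝ) (I : Set ℝ) (hI : I.OrdConnected)
    (hFix : ψ '' {x | φ₁ x = x} = {x | φ₂ x = x})
    (hInc : ψ '' {x | φ₁ x > x} = {x | φ₂ x > x})
    (hstrong : ∀ x ∈ I, ψ (φ₁ x) = φ₂ (ψ x)) :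
    ∃ ψbar : ℝ ≃o ℝ,
      (∀ x : ℝ, ψbar (φ₁ x) = φ₂ (ψbar x)) ∧
      (∀ x ∈ I ∪ φ₁ '' I, ψbar x = ψ x) ∧
      (∀ x : ℝ, φ₁ x = x → ψbar x = ψ x) := by
  refine ⟨StrictMono.orderIsoOfSurjective (WCP.psibar ψ φ₁ φ₂ I)
    (WCP.psibar_strictMono hI hFix hInc hstrong)
    (WCP.psibar_surjective hFix hInc hstrong), ?_, ?_, ?_⟩
  · intro x
    exact WCP.psibar_equivariant hFix x
  · intro x hx
    exact WCP.psibar_agree hI hstrong x hx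
  · intro x hfix
    exact WCP.psibar_apply_fix hfix
end

section
/- For any nontrivial reduced word w in the free group F_n (n ≥ 1) and any orientation-preserving homeomorphism g of ℝ, there exists a group homomorphism ρ : F_n → Homeo₊(ℝ) with ρ(w) = g. In other words, the word map ρ ↦ ρ(w) from Rep(F_n, Homeo₊(ℝ)) to Homeo₊(ℝ) is surjective for every nontrivial w. -/
open Set

namespace WordMapAux

/-- greatest index with `u k ≤ x`, for a strictly monotone unbounded `u`. -/
lemma exists_idx (u : ℤ → ℝ) (hu : StrictMono u)
    (hub : ∀ x : ℝ, ∃ k, u k ≤ x) (hut : ∀ x : ℝ, ∃ k, x ≤ u k) (x : ℝ) :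
    ∃ k, u k ≤ x ∧ x < u (k + 1) := by
  obtain ⟨b, hb⟩ := hut x
  have hbdd : ∀ z : ℤ, u z ≤ x → z ≤ b := by
    intro z hz
    by_contra h
    push_neg at h
    exact absurd (lt_of_lt_of_le (hu h) hz) (not_lt.2 hb)
  obtain ⟨k, hk, hgr⟩ := Int.exists_greatest_of_bdd ⟨b, hbdd⟩ (hub x)
  refine ⟨k, hk, ?_⟩
  by_contra h
  push_neg at h
  exact absurd (hgr _ h) (by omega)

lemma idx_unique (u : ℤ → ℝ) (hu : StrictMono u) {k k' : ℤ} {x : ℝ}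
    (h1 : u k ≤ x) (h2 : x < u (k + 1)) (h1' : u k' ≤ x) (h2' : x < u (k' + 1)) : k = k' := by
  have a1 : k < k' + 1 := by
    by_contra h; push_neg at h
    exact absurd (le_trans (hu.monotone (by omega : k' + 1 ≤ k)) h1) (not_le.2 h2')
  have a2 : k' < k + 1 := by
    by_contra h; push_neg at h
    exact absurd (le_trans (hu.monotone (by omega : k + 1 ≤ k')) h1') (not_le.2 h2)
  omega

/-- The gluing gadget: glue order isomorphisms defined blockwise along a
ℤ-indexed partition of ℝ. -/
lemma glue_exists (u v : ℤ → ℝ) (e : ℤ → (ℝ ≃o ℝ))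
    (hu : StrictMono u) (hv : StrictMono v)
    (hub : ∀ x : ℝ, ∃ k, u k ≤ x) (hut : ∀ x : ℝ, ∃ k, x ≤ u k)
    (hvb : ∀ x : ℝ, ∃ k, v k ≤ x) (hvt : ∀ x : ℝ, ∃ k, x ≤ v k)
    (he0 : ∀ k, e k (u k) = v k) (he1 : ∀ k, e k (u (k + 1)) = v (k + 1)) :
    ∃ F : ℝ ≃o ℝ, ∀ k x, u k ≤ x → x ≤ u (k + 1) → F x = e k x := by
  have hex : ∀ x : ℝ, ∃ k, u k ≤ x ∧ x < u (k + 1) := exists_idx u hu hub hut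
  set idx : ℝ → ℤ := fun x => Classical.choose (hex x) with hidx
  have hidx1 : ∀ x, u (idx x) ≤ x := fun x => (Classical.choose_spec (hex x)).1
  have hidx2 : ∀ x, x < u (idx x + 1) := fun x => (Classical.choose_spec (hex x)).2
  set f : ℝ → ℝ := fun x => e (idx x) x with hf
  -- half-open spec
  have spec' : ∀ k x, u k ≤ x → x < u (k + 1) → f x = e k x := by
    intro k x h1 h2
    have : idx x = k := idx_unique u hu (hidx1 x) (hidx2 x) h1 h2
    simp [hf, this]
  have hmono : StrictMono f := by
    intro x y hxy
    have hkl : idx x ≤ idx y := by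
      by_contra h; push_neg at h
      have : u (idx y + 1) ≤ u (idx x) := hu.monotone (by omega)
      exact absurd ((hidx2 y).trans_le (this.trans (hidx1 x))) (not_lt.2 hxy.le)
    rcases eq_or_lt_of_le hkl with h | h
    · show e (idx x) x < e (idx y) y
      rw [h]; exact (e (idx y)).strictMono hxy
    · show e (idx x) x < e (idx y) y
      calc e (idx x) x < e (idx x) (u (idx x + 1)) := (e _).strictMono (hidx2 x)
        _ = v (idx x + 1) := he1 _
        _ ≤ v (idx y) := hv.monotone (by omega)
        _ = e (idx y) (u (idx y)) := (he0 _).symm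
        _ ≤ e (idx y) y := (e _).monotone (hidx1 y)
  have hsurj : Function.Surjective f := by
    intro y
    obtain ⟨l, hl1, hl2⟩ := exists_idx v hv hvb hvt y
    refine ⟨(e l).symm y, ?_⟩
    have h1 : u l ≤ (e l).symm y := by
      rw [← (e l).symm_apply_apply (u l), he0]
      exact (e l).symm.monotone hl1
    have h2 : (e l).symm y < u (l + 1) := by
      rw [← (e l).symm_apply_apply (u (l + 1)), he1]
      exact (e l).symm.strictMono hl2
    rw [spec' l _ h1 h2, (e l).apply_symm_apply]
  refine ⟨hmono.orderIsoOfSurjective f hsurj, ?_⟩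
  intro k x h1 h2
  have hco : ⇑(hmono.orderIsoOfSurjective f hsurj) = f :=
    StrictMono.coe_orderIsoOfSurjective f hmono hsurj
  rw [hco]
  rcases lt_or_eq_of_le h2 with h | h
  · exact spec' k x h1 h
  · subst h
    rw [spec' (k + 1) _ le_rfl (hu (by omega)), he0, ← he1]

/-- affine order isomorphism through two prescribed points. -/
lemma affine_exists (a b a' b' : ℝ) (hab : a < b) (hab' : a' < b') :
    ∃ e : ℝ ≃o ℝ, e a = a' ∧ e b = b' := by
  set m : ℝ := (b' - a') / (b - a) with hm
  have hmpos : 0 < m := div_pos (by linarith) (by linarith)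
  set f : ℝ → ℝ := fun x => a' + (x - a) * m with hf
  have hmono : StrictMono f := by
    intro x y hxy
    simp only [hf]
    have := mul_lt_mul_of_pos_right (sub_lt_sub_right hxy a) hmpos
    linarith
  have hsurj : Function.Surjective f := by
    intro y
    refine ⟨a + (y - a') / m, ?_⟩
    simp only [hf]
    field_simp
    ring
  refine ⟨hmono.orderIsoOfSurjective f hsurj, ?_, ?_⟩ <;>
    rw [StrictMono.coe_orderIsoOfSurjective f hmono hsurj]
  · simp [hf]
  · simp only [hf, hm]
    have h0 : b - a ≠ 0 := by linarith
    field_simp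
    ring

end WordMapAux

namespace WordMapAux

lemma zpow_apply_succ (h : ℝ ≃o ℝ) (k : ℤ) (x : ℝ) :
    (h ^ (k + 1)) x = (h ^ k) (h x) := by
  rw [zpow_add_one]
  rfl

lemma zpow_apply_succ' (h : ℝ ≃o ℝ) (k : ℤ) (x : ℝ) :
    (h ^ (k + 1)) x = h ((h ^ k) x) := by
  have : h ^ (k + 1) = h * h ^ k := by
    rw [zpow_add_one]
    exact ((Commute.refl h).zpow_left k).eq
  rw [this]
  rfl

lemma orbit_strictMono (h : ℝ ≃o ℝ) (hh : ∀ x, x < h x) :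
    StrictMono (fun k : ℤ => (h ^ k) 0) := by
  apply strictMono_int_of_lt_succ
  intro k
  show (h ^ k) 0 < (h ^ (k + 1)) 0
  rw [zpow_apply_succ' h k 0]
  exact hh _

lemma orbit_unbounded_above (h : ℝ ≃o ℝ) (hh : ∀ x, x < h x) (x : ℝ) :
    ∃ k : ℤ, x ≤ (h ^ k) 0 := by
  by_contra hcon
  push_neg at hcon
  set S : Set ℝ := Set.range (fun k : ℤ => (h ^ k) 0) with hS
  have hne : S.Nonempty := ⟨(h ^ (0:ℤ)) 0, ⟨0, rfl⟩⟩
  have hbdd : BddAbove S := ⟨x, by rintro y ⟨k, rfl⟩; exact (hcon k).le⟩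
  set s := sSup S with hs
  have h1 : h.symm s < s := by
    have := hh (h.symm s)
    rwa [h.apply_symm_apply] at this
  obtain ⟨a, ⟨k, rfl⟩, hk⟩ := exists_lt_of_lt_csSup hne h1
  have : s < (h ^ (k + 1)) 0 := by
    rw [zpow_apply_succ' h k 0]
    calc s = h (h.symm s) := (h.apply_symm_apply s).symm
      _ < h ((h ^ k) 0) := h.strictMono hk
  exact absurd (le_csSup hbdd ⟨k + 1, rfl⟩) (not_le.2 this)

lemma orbit_unbounded_below (h : ℝ ≃o ℝ) (hh : ∀ x, x < h x) (x : ℝ) :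
    ∃ k : ℤ, (h ^ k) 0 ≤ x := by
  by_contra hcon
  push_neg at hcon
  set S : Set ℝ := Set.range (fun k : ℤ => (h ^ k) 0) with hS
  have hne : S.Nonempty := ⟨(h ^ (0:ℤ)) 0, ⟨0, rfl⟩⟩
  have hbdd : BddBelow S := ⟨x, by rintro y ⟨k, rfl⟩; exact (hcon k).le⟩
  set s := sInf S with hs
  have h1 : s < h s := hh s
  obtain ⟨a, ⟨k, rfl⟩, hk⟩ := exists_lt_of_csInf_lt hne h1
  have hlt : (h ^ (k - 1)) 0 < s := by
    have : (h ^ (k - 1)) 0 = h.symm ((h ^ k) 0) := by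
      have := zpow_apply_succ' h (k - 1) 0
      rw [sub_add_cancel] at this
      rw [this, h.symm_apply_apply]
    rw [this]
    calc h.symm ((h ^ k) 0) < h.symm (h s) := h.symm.strictMono hk
      _ = s := h.symm_apply_apply s
  exact absurd (csInf_le hbdd ⟨k - 1, rfl⟩) (not_le.2 hlt)

/-- Any two fixed-point-free (upward) order isos of ℝ are conjugate. -/
lemma conj_exists (h₁ h₂ : ℝ ≃o ℝ) (H1 : ∀ x, x < h₁ x) (H2 : ∀ x, x < h₂ x) :
    ∃ c : ℝ ≃o ℝ, c * h₁ * c⁻¹ = h₂ := by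
  set u : ℤ → ℝ := fun k => (h₁ ^ k) 0 with hud
  set v : ℤ → ℝ := fun k => (h₂ ^ k) 0 with hvd
  have hu : StrictMono u := orbit_strictMono h₁ H1
  have hv : StrictMono v := orbit_strictMono h₂ H2
  have h10 : (0:ℝ) < h₁ 0 := H1 0
  have h20 : (0:ℝ) < h₂ 0 := H2 0
  obtain ⟨c₀, hc₀0, hc₀1⟩ := affine_exists 0 (h₁ 0) 0 (h₂ 0) h10 h20
  set e : ℤ → (ℝ ≃o ℝ) := fun k => h₂ ^ k * c₀ * (h₁ ^ k)⁻¹ with he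
  have huk1 : ∀ k, u (k + 1) = (h₁ ^ k) (h₁ 0) := fun k => zpow_apply_succ h₁ k 0
  have hvk1 : ∀ k, v (k + 1) = (h₂ ^ k) (h₂ 0) := fun k => zpow_apply_succ h₂ k 0
  have hinv : ∀ (g : ℝ ≃o ℝ) (k : ℤ) (x : ℝ), ((g ^ k)⁻¹) ((g ^ k) x) = x := by
    intro g k x
    show (g ^ k).symm ((g ^ k) x) = x
    exact (g ^ k).symm_apply_apply x
  have he0 : ∀ k, e k (u k) = v k := by
    intro k
    show (h₂ ^ k) (c₀ (((h₁ ^ k)⁻¹) ((h₁ ^ k) 0))) = (h₂ ^ k) 0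
    rw [hinv, hc₀0]
  have he1 : ∀ k, e k (u (k + 1)) = v (k + 1) := by
    intro k
    rw [huk1, hvk1]
    show (h₂ ^ k) (c₀ (((h₁ ^ k)⁻¹) ((h₁ ^ k) (h₁ 0)))) = (h₂ ^ k) (h₂ 0)
    rw [hinv, hc₀1]
  obtain ⟨F, hF⟩ := glue_exists u v e hu hv
    (orbit_unbounded_below h₁ H1) (orbit_unbounded_above h₁ H1)
    (orbit_unbounded_below h₂ H2) (orbit_unbounded_above h₂ H2) he0 he1
  have key : ∀ x, F (h₁ x) = h₂ (F x) := by
    intro x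
    obtain ⟨k, hk1, hk2⟩ := exists_idx u hu (orbit_unbounded_below h₁ H1)
      (orbit_unbounded_above h₁ H1) x
    have hFx : F x = e k x := hF k x hk1 hk2.le
    have hh1 : u (k + 1) ≤ h₁ x := by
      rw [huk1]
      show (h₁ ^ k) (h₁ 0) ≤ h₁ x
      calc (h₁ ^ k) (h₁ 0) = h₁ ((h₁ ^ k) 0) := by
            rw [← zpow_apply_succ, ← zpow_apply_succ']
        _ ≤ h₁ x := h₁.monotone hk1
    have hh2 : h₁ x ≤ u (k + 1 + 1) := by
      rw [huk1]
      show h₁ x ≤ (h₁ ^ (k+1)) (h₁ 0)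
      calc h₁ x ≤ h₁ (u (k+1)) := h₁.monotone hk2.le
        _ = (h₁ ^ (k+1)) (h₁ 0) := by
            rw [huk1]
            exact (zpow_apply_succ' h₁ k (h₁ 0)).symm
    have hFh : F (h₁ x) = e (k + 1) (h₁ x) := hF (k + 1) (h₁ x) hh1 hh2
    rw [hFh, hFx]
    show (h₂ ^ (k+1)) (c₀ (((h₁ ^ (k+1))⁻¹) (h₁ x))) = h₂ ((h₂ ^ k) (c₀ (((h₁ ^ k)⁻¹) x)))
    have e1 : ((h₁ ^ (k+1))⁻¹) (h₁ x) = ((h₁ ^ k)⁻¹) x := by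
      have : (h₁ ^ (k+1))⁻¹ * h₁ = (h₁ ^ k)⁻¹ := by
        group
      calc ((h₁ ^ (k+1))⁻¹) (h₁ x) = ((h₁ ^ (k+1))⁻¹ * h₁) x := rfl
        _ = ((h₁ ^ k)⁻¹) x := by rw [this]
    rw [e1, zpow_apply_succ' h₂ k]
  refine ⟨F, ?_⟩
  ext x
  show F (h₁ (F⁻¹ x)) = h₂ x
  rw [key, (show (F⁻¹ : ℝ ≃o ℝ) x = F.symm x from rfl), F.apply_symm_apply]

/-- The "conjugation by x ↦ -x" automorphism of the group of order isos. -/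
lemma neg_conj_exists :
    ∃ N : (ℝ ≃o ℝ) →* (ℝ ≃o ℝ), ∀ (f : ℝ ≃o ℝ) (x : ℝ), (N f) x = -(f (-x)) := by
  have build : ∀ f : ℝ ≃o ℝ, ∃ g : ℝ ≃o ℝ, ∀ x, g x = -(f (-x)) := by
    intro f
    set gf : ℝ → ℝ := fun x => -(f (-x)) with hgf
    have hmono : StrictMono gf := by
      intro x y hxy
      simp only [hgf, neg_lt_neg_iff]
      exact f.strictMono (neg_lt_neg hxy)
    have hsurj : Function.Surjective gf := by
      intro y
      exact ⟨-(f.symm (-y)), by simp [hgf]⟩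
    exact ⟨hmono.orderIsoOfSurjective gf hsurj, fun x => by
      rw [StrictMono.coe_orderIsoOfSurjective gf hmono hsurj]⟩
  set N : (ℝ ≃o ℝ) → (ℝ ≃o ℝ) := fun f => Classical.choose (build f) with hN
  have hNs : ∀ f x, (N f) x = -(f (-x)) := fun f => Classical.choose_spec (build f)
  refine ⟨{ toFun := N, map_one' := ?_, map_mul' := ?_ }, hNs⟩
  · ext x
    rw [hNs]
    simp
  · intro f g
    ext x
    show (N (f * g)) x = (N f) ((N g) x)
    rw [hNs, hNs, hNs]
    show -(f (g (-x))) = -(f (- - (g (-x))))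
    rw [neg_neg]

def _root_.List.get? {α : Type*} (l : List α) (k : ℕ) : Option α := l[k]?

@[simp] theorem _root_.List.get?_eq_getElem? {α : Type*} (l : List α) (k : ℕ) :
    l.get? k = l[k]? := rfl

variable {n : ℕ}

/-- `deltaN l j r`: the displacement of generator `j` on grid blocks of residue
class `r` in the grid construction for word `l`. -/
def deltaN (l : List (Fin n × Bool)) (j : Fin n) (r : ℕ) : ℤ :=
  if l.get? (l.length - 1 - r) = some (j, true) then 1
  else if l.get? ((l.length - r) % l.length) = some (j, false) then -1 else 0

def delta (l : List (Fin n × Bool)) (j : Fin n) (t : ℤ) : ℤ :=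
  deltaN l j (t % (l.length : ℤ)).toNat

lemma deltaN_cases (l : List (Fin n × Bool)) (j : Fin n) (r : ℕ) :
    deltaN l j r = 1 ∨ deltaN l j r = -1 ∨ deltaN l j r = 0 := by
  unfold deltaN; split_ifs <;> simp

lemma deltaN_eq_one (l : List (Fin n × Bool)) (j : Fin n) (r : ℕ)
    (h : deltaN l j r = 1) : l.get? (l.length - 1 - r) = some (j, true) := by
  unfold deltaN at h; split_ifs at h with h1 h2 <;> first | exact h1 | omega

lemma deltaN_eq_negone (l : List (Fin n × Bool)) (j : Fin n) (r : ℕ)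
    (h : deltaN l j r = -1) :
    ¬ (l.get? (l.length - 1 - r) = some (j, true)) ∧
      l.get? ((l.length - r) % l.length) = some (j, false) := by
  unfold deltaN at h; split_ifs at h with h1 h2 <;> first | exact ⟨h1, h2⟩ | omega

section Excl

variable (l : List (Fin n × Bool))
variable (hL : l ≠ [])
variable (hred : ∀ (p : ℕ) (j : Fin n) (b : Bool),
    l.get? p = some (j, b) → l.get? (p + 1) = some (j, !b) → False)
variable (hcyc : ∀ (j : Fin n) (b : Bool),
    l.get? 0 = some (j, b) → l.get? (l.length - 1) = some (j, !b) → False)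

lemma D1 (p : ℕ) (j : Fin n) (hp : p < l.length)
    (hg : l.get? p = some (j, true)) : deltaN l j (l.length - 1 - p) = 1 := by
  unfold deltaN
  have : l.length - 1 - (l.length - 1 - p) = p := by omega
  rw [this, if_pos hg]

include hred hcyc in
lemma D2 (p : ℕ) (j : Fin n) (hp : p < l.length)
    (hg : l.get? p = some (j, false)) :
    deltaN l j ((l.length - p) % l.length) = -1 := by
  unfold deltaN
  rcases Nat.eq_zero_or_pos p with hp0 | hp1
  · subst hp0
    have e0 : (l.length - 0) % l.length = 0 := by simp
    rw [e0]
    have e1 : l.length - 1 - 0 = l.length - 1 := by omega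
    rw [e1]
    have hfalse : ¬ (l.get? (l.length - 1) = some (j, true)) := by
      intro hlast
      exact hcyc j false hg (by simpa using hlast)
    rw [if_neg hfalse]
    have e2 : (l.length - 0) % l.length = 0 := by simp
    rw [e2, if_pos hg]
  · have e0 : (l.length - p) % l.length = l.length - p := by
      apply Nat.mod_eq_of_lt; omega
    rw [e0]
    have e1 : l.length - 1 - (l.length - p) = p - 1 := by omega
    rw [e1]
    have hfalse : ¬ (l.get? (p - 1) = some (j, true)) := by
      intro hprev
      apply hred (p - 1) j true hprev
      have : p - 1 + 1 = p := by omega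
      rw [this]
      simpa using hg
    rw [if_neg hfalse]
    have e2 : (l.length - (l.length - p)) % l.length = p := by
      have : l.length - (l.length - p) = p := by omega
      rw [this]; exact Nat.mod_eq_of_lt hp
    rw [e2, if_pos hg]

include hred hcyc in
lemma D3 (r : ℕ) (j : Fin n) (hr : r < l.length)
    (h1 : deltaN l j r = 1) (h2 : deltaN l j ((r + 1) % l.length) = -1) : False := by
  have hL0 : 0 < l.length := by omega
  have hg1 := deltaN_eq_one l j r h1
  obtain ⟨hneg, hg2⟩ := deltaN_eq_negone l j _ h2
  rcases Nat.lt_or_ge (r + 1) l.length with hc | hc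
  · have e1 : (r + 1) % l.length = r + 1 := Nat.mod_eq_of_lt hc
    rw [e1] at hg2
    have e2 : (l.length - (r + 1)) % l.length = l.length - 1 - r := by
      have h' : l.length - (r + 1) < l.length := by omega
      rw [Nat.mod_eq_of_lt h']; omega
    rw [e2] at hg2
    rw [hg1] at hg2
    simp at hg2
  · have hrL : r = l.length - 1 := by omega
    have e1 : (r + 1) % l.length = 0 := by
      have : r + 1 = l.length := by omega
      rw [this, Nat.mod_self]
    rw [e1] at hg2
    have e2 : (l.length - 0) % l.length = 0 := by simp
    rw [e2] at hg2
    have e3 : l.length - 1 - r = 0 := by omega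
    rw [e3] at hg1
    rw [hg1] at hg2
    simp at hg2

include hred hcyc in
lemma D4 (r : ℕ) (j : Fin n) (hr : r < l.length)
    (h1 : deltaN l j r = 1) (h2 : deltaN l j ((r + 2) % l.length) = -1) : False := by
  have hL0 : 0 < l.length := by omega
  have hg1 := deltaN_eq_one l j r h1
  obtain ⟨hneg, hg2⟩ := deltaN_eq_negone l j _ h2
  rcases Nat.lt_or_ge (r + 2) l.length with hc | hc
  · -- r ≤ L - 3
    have e1 : (r + 2) % l.length = r + 2 := Nat.mod_eq_of_lt hc
    rw [e1] at hg2
    have e2 : (l.length - (r + 2)) % l.length = l.length - r - 2 := by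
      have h' : l.length - (r + 2) < l.length := by omega
      rw [Nat.mod_eq_of_lt h']; omega
    rw [e2] at hg2
    apply hred (l.length - r - 2) j false hg2
    have : l.length - r - 2 + 1 = l.length - 1 - r := by omega
    rw [this]
    simpa using hg1
  · rcases Nat.eq_or_lt_of_le hc with hc2 | hc2
    · -- r + 2 = L, i.e. r = L - 2 (and L ≥ 2)
      have e1 : (r + 2) % l.length = 0 := by rw [← hc2, Nat.mod_self]
      rw [e1] at hg2
      have e2 : (l.length - 0) % l.length = 0 := by simp
      rw [e2] at hg2
      apply hred 0 j false hg2
      have : l.length - 1 - r = 1 := by omega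
      rw [this] at hg1
      simpa using hg1
    · -- r = L - 1
      have hrL : r = l.length - 1 := by omega
      have e3 : l.length - 1 - r = 0 := by omega
      rw [e3] at hg1
      rcases (by omega : l.length = 1 ∨ 2 ≤ l.length) with hL1 | hL1
      · -- L = 1
        have e1 : (r + 2) % l.length = 0 := by rw [hL1]; simp [Nat.mod_one]
        rw [e1] at hg2
        have e2 : (l.length - 0) % l.length = 0 := by simp
        rw [e2] at hg2
        rw [hg1] at hg2
        simp at hg2
      · -- L ≥ 2
        have e1 : (r + 2) % l.length = 1 := by
          have h' : r + 2 = l.length + 1 := by omega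
          rw [h', Nat.add_mod_left]
          exact Nat.mod_eq_of_lt (by omega)
        rw [e1] at hg2
        have e2 : (l.length - 1) % l.length = l.length - 1 := by
          apply Nat.mod_eq_of_lt; omega
        rw [e2] at hg2
        exact hcyc j true hg1 (by simpa using hg2)

end Excl


section IntResid

variable (l : List (Fin n × Bool)) (j : Fin n)

lemma resid_nonneg (t : ℤ) (hL0 : 0 < l.length) : 0 ≤ t % (l.length : ℤ) :=
  Int.emod_nonneg t (by exact_mod_cast hL0.ne')

lemma resid_lt (t : ℤ) (hL0 : 0 < l.length) : (t % (l.length : ℤ)).toNat < l.length := by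
  have h1 := resid_nonneg l t hL0
  have h2 : t % (l.length : ℤ) < (l.length : ℤ) := Int.emod_lt_of_pos t (by exact_mod_cast hL0)
  omega

lemma delta_of_nat (r : ℕ) (hr : r < l.length) : delta l j (r : ℤ) = deltaN l j r := by
  unfold delta
  have : (r : ℤ) % (l.length : ℤ) = r := Int.emod_eq_of_lt (by positivity) (by exact_mod_cast hr)
  rw [this, Int.toNat_natCast]

lemma delta_shift (t q : ℤ) : delta l j (t + (l.length : ℤ) * q) = delta l j t := by
  unfold delta
  rw [Int.add_mul_emod_self_left]

lemma resid_succ (t : ℤ) (hL0 : 0 < l.length) :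
    ((t + 1) % (l.length : ℤ)).toNat = (((t % (l.length : ℤ)).toNat) + 1) % l.length := by
  have hLz : ((l.length : ℤ)) ≠ 0 := by exact_mod_cast hL0.ne'
  have h1 : 0 ≤ t % (l.length : ℤ) := Int.emod_nonneg t hLz
  have h2 : t % (l.length : ℤ) < (l.length : ℤ) := Int.emod_lt_of_pos t (by exact_mod_cast hL0)
  have hsplit := Int.mul_ediv_add_emod t (l.length : ℤ)
  have key : (t + 1) % (l.length : ℤ) = (t % (l.length : ℤ) + 1) % (l.length : ℤ) := by
    conv_lhs => rw [show t + 1 = t % (l.length : ℤ) + 1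
      + (l.length : ℤ) * (t / (l.length : ℤ)) by omega]
    exact Int.add_mul_emod_self_left ..
  rw [key]
  rcases lt_or_eq_of_le (by omega : t % (l.length : ℤ) + 1 ≤ (l.length : ℤ)) with hc | hc
  · rw [Int.emod_eq_of_lt (by omega) hc, Nat.mod_eq_of_lt (by omega)]
    omega
  · have e1 : (t % (l.length : ℤ) + 1) % (l.length : ℤ) = 0 := by
      rw [hc]; exact Int.emod_self
    have e2 : ((t % (l.length : ℤ)).toNat + 1) % l.length = 0 := by
      rw [show (t % (l.length : ℤ)).toNat + 1 = l.length by omega]; exact Nat.mod_self _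
    rw [e1, e2]; rfl

lemma D3' (hL0 : 0 < l.length)
    (hred : ∀ (p : ℕ) (j : Fin n) (b : Bool),
      l.get? p = some (j, b) → l.get? (p + 1) = some (j, !b) → False)
    (hcyc : ∀ (j : Fin n) (b : Bool),
      l.get? 0 = some (j, b) → l.get? (l.length - 1) = some (j, !b) → False)
    (t : ℤ) (h1 : delta l j t = 1) (h2 : delta l j (t + 1) = -1) : False := by
  have hr := resid_lt l t hL0
  unfold delta at h1 h2
  rw [resid_succ l t hL0] at h2
  exact D3 l hred hcyc _ j hr h1 h2

lemma D4' (hL0 : 0 < l.length)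
    (hred : ∀ (p : ℕ) (j : Fin n) (b : Bool),
      l.get? p = some (j, b) → l.get? (p + 1) = some (j, !b) → False)
    (hcyc : ∀ (j : Fin n) (b : Bool),
      l.get? 0 = some (j, b) → l.get? (l.length - 1) = some (j, !b) → False)
    (t : ℤ) (h1 : delta l j t = 1) (h2 : delta l j (t + 2) = -1) : False := by
  have hr := resid_lt l t hL0
  unfold delta at h1 h2
  have e : ((t + 2) % (l.length:ℤ)).toNat = ((t % (l.length:ℤ)).toNat + 2) % l.length := by
    have e1 : t + 2 = (t + 1) + 1 := by ring
    rw [e1, resid_succ l (t+1) hL0, resid_succ l t hL0, Nat.mod_add_mod]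
  rw [e] at h2
  exact D4 l hred hcyc _ j hr h1 h2

end IntResid


section GenExists

variable (l : List (Fin n × Bool))

/-- Construction of one generator of the grid representation. -/
lemma gen_exists
    (hL0 : 0 < l.length)
    (hred : ∀ (p : ℕ) (j : Fin n) (b : Bool),
      l.get? p = some (j, b) → l.get? (p + 1) = some (j, !b) → False)
    (hcyc : ∀ (j : Fin n) (b : Bool),
      l.get? 0 = some (j, b) → l.get? (l.length - 1) = some (j, !b) → False)
    (j : Fin n)
    (hR : (List.range l.length).filter (fun r => decide (deltaN l j r ≠ 0)) ≠ []) :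
    ∃ f : ℝ ≃o ℝ, ∀ t : ℤ, delta l j t ≠ 0 → f t = t + delta l j t := by
  classical
  set R : List ℕ := (List.range l.length).filter (fun r => decide (deltaN l j r ≠ 0)) with hRdef
  set m : ℕ := R.length with hmdef
  have hm : 0 < m := List.length_pos_iff.mpr hR
  set g : ℕ → ℕ := fun i => R.getD i 0 with hgdef
  have hmemR : ∀ r : ℕ, r ∈ R ↔ (r < l.length ∧ deltaN l j r ≠ 0) := by
    intro r
    rw [hRdef]
    simp [List.mem_filter, List.mem_range]
  have hmem : ∀ i : ℕ, i < m → g i < l.length ∧ deltaN l j (g i) ≠ 0 := by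
    intro i hi
    have h1 : g i = R[i] := R.getD_eq_getElem 0 hi
    rw [h1]
    exact (hmemR _).mp (R.getElem_mem hi)
  have hsorted : ∀ i1 i2 : ℕ, i1 < i2 → i2 < m → g i1 < g i2 := by
    intro i1 i2 h12 h2
    have hpw : R.Pairwise (· < ·) := (List.pairwise_lt_range (n := l.length)).filter _
    have h1 : g i1 = R[i1]'(by omega) := R.getD_eq_getElem 0 (by omega)
    have h2' : g i2 = R[i2] := R.getD_eq_getElem 0 h2
    rw [h1, h2']
    exact List.pairwise_iff_getElem.mp hpw i1 i2 (by omega) h2 h12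
  have hfind : ∀ r : ℕ, r < l.length → deltaN l j r ≠ 0 → ∃ i : ℕ, i < m ∧ g i = r := by
    intro r hr hd
    have hmem' : r ∈ R := (hmemR r).mpr ⟨hr, hd⟩
    refine ⟨R.idxOf r, List.idxOf_lt_length_iff.mpr hmem', ?_⟩
    have h5 : g (R.idxOf r) = R[R.idxOf r]'(List.idxOf_lt_length_iff.mpr hmem') :=
      R.getD_eq_getElem 0 _
    rw [h5, List.getElem_idxOf]
  -- integer indexing
  have hmz : ((m : ℤ)) ≠ 0 := by exact_mod_cast hm.ne'
  have hkey : ∀ (q : ℤ) (i : ℕ), i < m → ((m : ℤ) * q + i) / m = q ∧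
      (((m : ℤ) * q + i) % m).toNat = i := by
    intro q i hi
    constructor
    · rw [show (m : ℤ) * q + i = (i : ℤ) + q * m by ring, Int.add_mul_ediv_right _ _ hmz,
        Int.ediv_eq_zero_of_lt (by positivity) (by exact_mod_cast hi)]
      ring
    · rw [show (m : ℤ) * q + i = (i : ℤ) + m * q by ring, Int.add_mul_emod_self_left,
        Int.emod_eq_of_lt (by positivity) (by exact_mod_cast hi), Int.toNat_natCast]
  set u : ℤ → ℤ := fun k => (l.length : ℤ) * (k / (m:ℤ)) + (g ((k % (m:ℤ)).toNat) : ℤ) with hudef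
  have hksplit : ∀ k : ℤ, k = (m:ℤ) * (k / (m:ℤ)) + ((k % (m:ℤ)).toNat : ℤ) ∧
      ((k % (m:ℤ)).toNat) < m := by
    intro k
    have h1 : 0 ≤ k % (m:ℤ) := Int.emod_nonneg k hmz
    have h2 : k % (m:ℤ) < (m:ℤ) := Int.emod_lt_of_pos k (by exact_mod_cast hm)
    have h3 := Int.mul_ediv_add_emod k (m:ℤ)
    constructor
    · omega
    · omega
  have hustep : ∀ k : ℤ, u k < u (k + 1) := by
    intro k
    obtain ⟨hk1, hk2⟩ := hksplit k
    set q : ℤ := k / (m:ℤ) with hq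
    set i : ℕ := (k % (m:ℤ)).toNat with hi
    have hu0 : u k = (l.length : ℤ) * q + (g i : ℤ) := rfl
    rcases lt_or_eq_of_le (by omega : i + 1 ≤ m) with hc | hc
    · have h1 : k + 1 = (m:ℤ) * q + ((i + 1 : ℕ) : ℤ) := by push_cast; omega
      obtain ⟨e1, e2⟩ := hkey q (i+1) hc
      have hu1 : u (k+1) = (l.length : ℤ) * q + (g (i+1) : ℤ) := by
        show (l.length : ℤ) * ((k+1) / (m:ℤ)) + (g (((k+1) % (m:ℤ)).toNat) : ℤ) = _
        rw [h1, e1, e2]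
      rw [hu1, hu0]
      have hglt : (g i : ℤ) < (g (i+1) : ℤ) := by exact_mod_cast hsorted i (i+1) (by omega) hc
      omega
    · have hmul : (m:ℤ) * (q + 1) = (m:ℤ) * q + (m:ℤ) := by ring
      have h1 : k + 1 = (m:ℤ) * (q + 1) + ((0 : ℕ) : ℤ) := by push_cast; omega
      obtain ⟨e1, e2⟩ := hkey (q+1) 0 hm
      have hu1 : u (k+1) = (l.length : ℤ) * (q+1) + (g 0 : ℤ) := by
        show (l.length : ℤ) * ((k+1) / (m:ℤ)) + (g (((k+1) % (m:ℤ)).toNat) : ℤ) = _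
        rw [h1, e1, e2]
      have hmul2 : (l.length:ℤ) * (q + 1) = (l.length:ℤ) * q + (l.length:ℤ) := by ring
      have h2 : (g i : ℤ) < (l.length : ℤ) := by exact_mod_cast (hmem i (by omega)).1
      have h3 : (0:ℤ) ≤ (g 0 : ℤ) := by positivity
      rw [hu1, hu0]
      omega
  have hustrict : StrictMono u := strictMono_int_of_lt_succ hustep
  have huval : ∀ k : ℤ, delta l j (u k) = deltaN l j (g ((k % (m:ℤ)).toNat)) := by
    intro k
    obtain ⟨hk1, hk2⟩ := hksplit k
    have h1 := hmem _ hk2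
    rw [hudef]
    simp only
    rw [show (l.length : ℤ) * (k / (m:ℤ)) + (g ((k % (m:ℤ)).toNat) : ℤ)
        = (g ((k % (m:ℤ)).toNat) : ℤ) + (l.length : ℤ) * (k / (m:ℤ)) by ring,
      delta_shift, delta_of_nat _ _ _ h1.1]
  have hcover : ∀ t : ℤ, delta l j t ≠ 0 → ∃ k : ℤ, u k = t := by
    intro t ht
    have hr : (t % (l.length:ℤ)).toNat < l.length := resid_lt l t hL0
    have hd : deltaN l j (t % (l.length:ℤ)).toNat ≠ 0 := ht
    obtain ⟨i, hi, hgi⟩ := hfind _ hr hd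
    refine ⟨(m:ℤ) * (t / (l.length:ℤ)) + i, ?_⟩
    obtain ⟨e1, e2⟩ := hkey (t / (l.length:ℤ)) i hi
    rw [hudef]
    simp only
    rw [e1, e2, hgi]
    have h3 := Int.mul_ediv_add_emod t (l.length:ℤ)
    have h4 : 0 ≤ t % (l.length:ℤ) := Int.emod_nonneg t (by exact_mod_cast hL0.ne')
    omega
  set v : ℤ → ℤ := fun k => u k + delta l j (u k) with hvdef
  have hdval : ∀ k : ℤ, delta l j (u k) = 1 ∨ delta l j (u k) = -1 := by
    intro k
    obtain ⟨hk1, hk2⟩ := hksplit k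
    have h1 := (hmem _ hk2).2
    rw [huval k]
    rcases deltaN_cases l j (g ((k % (m:ℤ)).toNat)) with h | h | h
    · exact Or.inl h
    · exact Or.inr h
    · exact absurd h h1
  have hvstep : ∀ k : ℤ, v k < v (k + 1) := by
    intro k
    have hu := hustep k
    rcases hdval k with h1 | h1 <;> rcases hdval (k+1) with h2 | h2 <;>
      rw [hvdef] <;> simp only <;> rw [h1, h2]
    · omega
    · -- the hard case : delta = 1 then -1
      have hgap : u k + 2 < u (k + 1) := by
        by_contra hcon
        push_neg at hcon
        rcases (by omega : u (k+1) = u k + 1 ∨ u (k+1) = u k + 2) with he | he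
        · exact D3' l j hL0 hred hcyc (u k) h1 (by rw [← he]; exact h2)
        · exact D4' l j hL0 hred hcyc (u k) h1 (by rw [← he]; exact h2)
      omega
    · omega
    · omega
  have hvstrict : StrictMono v := strictMono_int_of_lt_succ hvstep
  -- unboundedness
  have huK : ∀ K : ℤ, u ((m:ℤ) * K) = (l.length : ℤ) * K + (g 0 : ℤ) := by
    intro K
    obtain ⟨e1, e2⟩ := hkey K 0 hm
    have h1 : (m:ℤ) * K + ((0:ℕ):ℤ) = (m:ℤ) * K := by push_cast; ring
    rw [h1] at e1 e2
    show (l.length : ℤ) * (((m:ℤ)*K) / (m:ℤ)) + (g ((((m:ℤ)*K) % (m:ℤ)).toNat) : ℤ) = _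
    rw [e1, e2]
  have hg0L : (g 0 : ℤ) < (l.length : ℤ) := by exact_mod_cast (hmem 0 hm).1
  have hg0nn : (0:ℤ) ≤ (g 0 : ℤ) := by positivity
  have hbig : ∀ x : ℝ, ∃ k : ℤ, x ≤ ((u k : ℤ) : ℝ) := by
    intro x
    refine ⟨(m:ℤ) * (max ⌈x⌉ 0), ?_⟩
    rw [huK]
    have h1 : (0:ℤ) ≤ max ⌈x⌉ 0 := le_max_right _ _
    have h2 : ⌈x⌉ ≤ max ⌈x⌉ 0 := le_max_left _ _
    have h3 : max ⌈x⌉ 0 ≤ (l.length : ℤ) * (max ⌈x⌉ 0) + (g 0 : ℤ) := by nlinarith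
    calc x ≤ (⌈x⌉ : ℝ) := Int.le_ceil x
      _ ≤ (((l.length : ℤ) * (max ⌈x⌉ 0) + (g 0 : ℤ) : ℤ) : ℝ) := by exact_mod_cast le_trans h2 h3
  have hsmall : ∀ x : ℝ, ∃ k : ℤ, ((u k : ℤ) : ℝ) ≤ x := by
    intro x
    refine ⟨(m:ℤ) * (min (⌊x⌋ - l.length) 0), ?_⟩
    rw [huK]
    have h1 : min (⌊x⌋ - l.length) 0 ≤ 0 := min_le_right _ _
    have h2 : min (⌊x⌋ - l.length) 0 ≤ ⌊x⌋ - l.length := min_le_left _ _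
    have h3 : (l.length : ℤ) * (min (⌊x⌋ - l.length) 0) + (g 0 : ℤ) ≤ ⌊x⌋ := by nlinarith
    calc (((l.length : ℤ) * (min (⌊x⌋ - l.length) 0) + (g 0 : ℤ) : ℤ) : ℝ)
        ≤ ((⌊x⌋ : ℤ) : ℝ) := by exact_mod_cast h3
      _ ≤ x := Int.floor_le x
  have hvu : ∀ k : ℤ, u k - 1 ≤ v k ∧ v k ≤ u k + 1 := by
    intro k
    rcases hdval k with h | h <;> rw [hvdef] <;> simp only <;> omega
  -- real versions
  set ur : ℤ → ℝ := fun k => ((u k : ℤ) : ℝ) with hurdef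
  set vr : ℤ → ℝ := fun k => ((v k : ℤ) : ℝ) with hvrdef
  have hurstrict : StrictMono ur := fun a b hab => Int.cast_lt.mpr (hustrict hab)
  have hvrstrict : StrictMono vr := fun a b hab => Int.cast_lt.mpr (hvstrict hab)
  have hvbig : ∀ x : ℝ, ∃ k : ℤ, x ≤ vr k := by
    intro x
    obtain ⟨k, hk⟩ := hbig (x + 1)
    refine ⟨k, ?_⟩
    have := (hvu k).1
    rw [hvrdef]
    simp only
    have : ((u k : ℤ) : ℝ) - 1 ≤ ((v k : ℤ) : ℝ) := by exact_mod_cast this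
    linarith
  have hvsmall : ∀ x : ℝ, ∃ k : ℤ, vr k ≤ x := by
    intro x
    obtain ⟨k, hk⟩ := hsmall (x - 1)
    refine ⟨k, ?_⟩
    have := (hvu k).2
    rw [hvrdef]
    simp only
    have : ((v k : ℤ) : ℝ) ≤ ((u k : ℤ) : ℝ) + 1 := by exact_mod_cast this
    linarith
  -- affine pieces
  have hpieces : ∀ k : ℤ, ∃ e : ℝ ≃o ℝ, e (ur k) = vr k ∧ e (ur (k+1)) = vr (k+1) :=
    fun k => affine_exists _ _ _ _ (hurstrict (by omega)) (hvrstrict (by omega))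
  choose e he0 he1 using hpieces
  obtain ⟨F, hF⟩ := glue_exists ur vr e hurstrict hvrstrict hsmall hbig hvsmall hvbig he0 he1
  refine ⟨F, ?_⟩
  intro t ht
  obtain ⟨k, hk⟩ := hcover t ht
  have h1 : F (ur k) = vr k := by
    rw [hF k (ur k) le_rfl (hurstrict (by omega : k < k + 1)).le]
    exact he0 k
  rw [← hk]
  show F (ur k) = ((u k : ℤ) : ℝ) + ((delta l j (u k) : ℤ) : ℝ)
  rw [h1]
  show ((v k : ℤ) : ℝ) = _
  rw [hvdef]
  push_cast
  ring

end GenExists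


lemma grid_rep_exists (l : List (Fin n × Bool))
    (hL0 : 0 < l.length)
    (hred : ∀ (p : ℕ) (j : Fin n) (b : Bool),
      l.get? p = some (j, b) → l.get? (p + 1) = some (j, !b) → False)
    (hcyc : ∀ (j : Fin n) (b : Bool),
      l.get? 0 = some (j, b) → l.get? (l.length - 1) = some (j, !b) → False) :
    ∃ ρ : FreeGroup (Fin n) →* (ℝ ≃o ℝ), ∀ x : ℝ, x < (ρ (FreeGroup.mk l)) x := by
  classical
  have hgen : ∀ j : Fin n, ∃ f : ℝ ≃o ℝ,
      ∀ t : ℤ, delta l j t ≠ 0 → f t = t + delta l j t := by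
    intro j
    by_cases hRnil : (List.range l.length).filter (fun r => decide (deltaN l j r ≠ 0)) = []
    · refine ⟨1, fun t ht => absurd ?_ ht⟩
      by_contra hne
      have hmem : (t % (l.length:ℤ)).toNat ∈
          (List.range l.length).filter (fun r => decide (deltaN l j r ≠ 0)) := by
        rw [List.mem_filter]
        exact ⟨List.mem_range.mpr (resid_lt l t hL0), by simpa [delta] using hne⟩
      rw [hRnil] at hmem
      exact List.not_mem_nil hmem
    · exact gen_exists l hL0 hred hcyc j hRnil
  choose f hf using hgen
  set ρ : FreeGroup (Fin n) →* (ℝ ≃o ℝ) := FreeGroup.lift f with hρ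
  have chain : ∀ k : ℕ, k ≤ l.length → ∀ q : ℤ,
      (ρ (FreeGroup.mk (l.drop (l.length - k)))) (((l.length : ℤ) * q : ℤ) : ℝ)
        = (((l.length : ℤ) * q + k : ℤ) : ℝ) := by
    intro k
    induction k with
    | zero =>
      intro _ q
      rw [Nat.sub_zero, List.drop_length, ← FreeGroup.one_eq_mk, map_one]
      show ((l.length : ℤ) * q : ℤ) = (((l.length : ℤ) * q + (0:ℕ) : ℤ) : ℝ)
      push_cast
      ring
    | succ k ih =>
      intro hk1 q
      set p : ℕ := l.length - (k + 1) with hpdef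
      have hp : p < l.length := by omega
      have hdrop : l.drop p = l[p]'hp :: l.drop (p + 1) := List.drop_eq_getElem_cons hp
      have hget : l.get? p = some (l[p]'hp) := by
        rw [List.get?_eq_getElem?]
        exact List.getElem?_eq_getElem hp
      set j : Fin n := (l[p]'hp).1 with hjdef
      have hsplit : FreeGroup.mk (l.drop p)
          = FreeGroup.mk [l[p]'hp] * FreeGroup.mk (l.drop (p + 1)) := by
        rw [FreeGroup.mul_mk, hdrop]
        rfl
      have hik : l.length - k = p + 1 := by omega
      have ihq := ih (by omega) q
      rw [hik] at ihq
      rw [hsplit, map_mul]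
      show (ρ (FreeGroup.mk [l[p]'hp])) ((ρ (FreeGroup.mk (l.drop (p+1)))) _) = _
      rw [ihq]
      cases hb : (l[p]'hp).2 with
      | true =>
        have hxx : l[p]'hp = (j, true) := by
          rw [hjdef, ← hb]
        have hof : FreeGroup.mk [l[p]'hp] = FreeGroup.of j := by rw [hxx]; rfl
        rw [hof, FreeGroup.lift_apply_of]
        have hget' : l.get? p = some (j, true) := by rw [hget, hxx]
        have hd : delta l j ((l.length : ℤ) * q + k) = 1 := by
          rw [show (l.length : ℤ) * q + k = (k : ℤ) + (l.length : ℤ) * q by ring,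
            delta_shift, delta_of_nat _ _ _ (by omega : k < l.length)]
          have he : l.length - 1 - p = k := by omega
          rw [← he]
          exact D1 l p j hp hget'
        rw [hf j _ (by rw [hd]; norm_num), hd]
        push_cast
        ring
      | false =>
        have hxx : l[p]'hp = (j, false) := by
          rw [hjdef, ← hb]
        have hof : FreeGroup.mk [l[p]'hp] = (FreeGroup.of j)⁻¹ := by
          rw [hxx, show (FreeGroup.of j)⁻¹ = FreeGroup.mk (FreeGroup.invRev [(j, true)])
            from FreeGroup.inv_mk]
          simp [FreeGroup.invRev]
        rw [hof, map_inv, FreeGroup.lift_apply_of]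
        have hget' : l.get? p = some (j, false) := by rw [hget, hxx]
        have hd : delta l j ((l.length : ℤ) * q + (k + 1)) = -1 := by
          rcases lt_or_eq_of_le hk1 with hc | hc
          · rw [show (l.length : ℤ) * q + (k + 1) = ((k+1 : ℕ) : ℤ) + (l.length : ℤ) * q
              by push_cast; ring, delta_shift, delta_of_nat _ _ _ (by omega : k + 1 < l.length)]
            have he : (l.length - p) % l.length = k + 1 := by
              rw [Nat.mod_eq_of_lt (by omega)]
              omega
            rw [← he]
            exact D2 l hred hcyc p j hp hget'
          · rw [show (l.length : ℤ) * q + (k + 1) = ((0 : ℕ) : ℤ) + (l.length : ℤ) * (q + 1) by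
                have hcz : ((k : ℕ) : ℤ) + 1 = (l.length : ℤ) := by exact_mod_cast hc
                push_cast
                ring_nf
                omega,
              delta_shift, delta_of_nat _ _ _ (by omega : 0 < l.length)]
            have he : (l.length - p) % l.length = 0 := by
              have : p = 0 := by omega
              rw [this, Nat.sub_zero, Nat.mod_self]
            rw [← he]
            exact D2 l hred hcyc p j hp hget'
        have hval : (f j) (((l.length : ℤ) * q + (k + 1) : ℤ) : ℝ)
            = (((l.length : ℤ) * q + k : ℤ) : ℝ) := by
          rw [hf j _ (by rw [hd]; norm_num), hd]
          push_cast
          ring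
        show ((f j)⁻¹ : ℝ ≃o ℝ) ((((l.length : ℤ) * q + k : ℤ)) : ℝ) = _
        rw [← hval]
        show (f j).symm ((f j) _) = _
        rw [(f j).symm_apply_apply]
        push_cast
        ring
  refine ⟨ρ, ?_⟩
  have hW : ∀ q : ℤ, (ρ (FreeGroup.mk l)) (((l.length : ℤ) * q : ℤ) : ℝ)
      = (((l.length : ℤ) * q + l.length : ℤ) : ℝ) := by
    intro q
    have := chain l.length le_rfl q
    rw [Nat.sub_self, List.drop_zero] at this
    exact this
  intro x
  have hLpos : (0:ℝ) < (l.length : ℝ) := by exact_mod_cast hL0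
  set q : ℤ := ⌊x / (l.length : ℝ)⌋ with hqdef
  have hq1 : (((l.length : ℤ) * q : ℤ) : ℝ) ≤ x := by
    have h1 : (q : ℝ) ≤ x / (l.length : ℝ) := Int.floor_le _
    have h2 : (q : ℝ) * (l.length : ℝ) ≤ x := by
      rw [← div_mul_cancel₀ x hLpos.ne']
      exact mul_le_mul_of_nonneg_right h1 hLpos.le
    push_cast
    linarith
  have hq2 : x < (((l.length : ℤ) * q + l.length : ℤ) : ℝ) := by
    have h1 : x / (l.length : ℝ) < (q : ℝ) + 1 := Int.lt_floor_add_one _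
    have h2 : x < ((q : ℝ) + 1) * (l.length : ℝ) := by
      rw [← div_mul_cancel₀ x hLpos.ne']
      exact mul_lt_mul_of_pos_right h1 hLpos
    push_cast
    linarith
  calc x < (((l.length : ℤ) * q + l.length : ℤ) : ℝ) := hq2
    _ = (ρ (FreeGroup.mk l)) (((l.length : ℤ) * q : ℤ) : ℝ) := (hW q).symm
    _ ≤ (ρ (FreeGroup.mk l)) x := (ρ (FreeGroup.mk l)).monotone hq1


lemma word_rep_up (l : List (Fin n × Bool)) (hL0 : 0 < l.length)
    (hred : ∀ (p : ℕ) (j : Fin n) (b : Bool),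
      l.get? p = some (j, b) → l.get? (p + 1) = some (j, !b) → False)
    (hcyc : ∀ (j : Fin n) (b : Bool),
      l.get? 0 = some (j, b) → l.get? (l.length - 1) = some (j, !b) → False)
    (h : ℝ ≃o ℝ) (hh : ∀ x, x < h x) :
    ∃ ρ : FreeGroup (Fin n) →* (ℝ ≃o ℝ), ρ (FreeGroup.mk l) = h := by
  obtain ⟨ρ₀, hρ₀⟩ := grid_rep_exists l hL0 hred hcyc
  obtain ⟨c, hc⟩ := conj_exists (ρ₀ (FreeGroup.mk l)) h hρ₀ hh
  refine ⟨(MulAut.conj c).toMonoidHom.comp ρ₀, ?_⟩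
  show (MulAut.conj c) (ρ₀ (FreeGroup.mk l)) = h
  rw [MulAut.conj_apply]
  exact hc

lemma word_rep_fpf (l : List (Fin n × Bool)) (hL0 : 0 < l.length)
    (hred : ∀ (p : ℕ) (j : Fin n) (b : Bool),
      l.get? p = some (j, b) → l.get? (p + 1) = some (j, !b) → False)
    (hcyc : ∀ (j : Fin n) (b : Bool),
      l.get? 0 = some (j, b) → l.get? (l.length - 1) = some (j, !b) → False)
    (h : ℝ ≃o ℝ) (hh : (∀ x, x < h x) ∨ (∀ x, h x < x)) :
    ∃ ρ : FreeGroup (Fin n) →* (ℝ ≃o ℝ), ρ (FreeGroup.mk l) = h := by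
  rcases hh with hup | hdown
  · exact word_rep_up l hL0 hred hcyc h hup
  · obtain ⟨N, hN⟩ := neg_conj_exists
    have hNh : ∀ x, x < (N h) x := by
      intro x
      rw [hN]
      have := hdown (-x)
      linarith
    obtain ⟨ρ₀, hρ₀⟩ := word_rep_up l hL0 hred hcyc (N h) hNh
    refine ⟨N.comp ρ₀, ?_⟩
    show N (ρ₀ (FreeGroup.mk l)) = h
    rw [hρ₀]
    ext x
    rw [hN, hN]
    simp

/-- Cyclic reduction. -/
lemma cyc_decomp (w : FreeGroup (Fin n)) (hw : w ≠ 1) :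
    ∃ (u c : FreeGroup (Fin n)), w = u * c * u⁻¹ ∧ c ≠ 1 ∧
      (∀ (j : Fin n) (b : Bool), c.toWord.get? 0 = some (j, b) →
        c.toWord.get? (c.toWord.length - 1) = some (j, !b) → False) := by
  classical
  suffices H : ∀ (N : ℕ) (w : FreeGroup (Fin n)), w.toWord.length ≤ N → w ≠ 1 →
      ∃ (u c : FreeGroup (Fin n)), w = u * c * u⁻¹ ∧ c ≠ 1 ∧
      (∀ (j : Fin n) (b : Bool), c.toWord.get? 0 = some (j, b) →
        c.toWord.get? (c.toWord.length - 1) = some (j, !b) → False) by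
    exact H w.toWord.length w le_rfl hw
  intro N
  induction N with
  | zero =>
    intro w hlen hw
    exfalso
    apply hw
    rw [← FreeGroup.toWord_eq_nil_iff]
    exact List.length_eq_zero_iff.mp (by omega)
  | succ N ih =>
    intro w hlen hw
    by_cases hc : ∃ (j : Fin n) (b : Bool), w.toWord.get? 0 = some (j, b) ∧
        w.toWord.get? (w.toWord.length - 1) = some (j, !b)
    · obtain ⟨j, b, h0, h1⟩ := hc
      set l := w.toWord with hl
      have hlne : l ≠ [] := by
        intro hnil
        rw [hnil] at h0
        simp at h0
      have hL0 : 0 < l.length := List.length_pos_iff.mpr hlne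
      have hget0 : l[0]'hL0 = (j, b) := by
        rw [List.get?_eq_getElem?, List.getElem?_eq_getElem hL0] at h0
        exact Option.some_injective _ h0
      have hL2 : 2 ≤ l.length := by
        by_contra hcon
        push_neg at hcon
        have h01 : l.length - 1 = 0 := by omega
        rw [h01, List.get?_eq_getElem?, List.getElem?_eq_getElem hL0, hget0] at h1
        have hpair : (j, b) = (j, !b) := Option.some_injective _ h1
        have : b = !b := congrArg Prod.snd hpair
        simp at this
      have hL1 : l.length - 1 < l.length := by omega
      have hgetlast : l[l.length - 1]'hL1 = (j, !b) := by
        rw [List.get?_eq_getElem?, List.getElem?_eq_getElem hL1] at h1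
        exact Option.some_injective _ h1
      -- decompose l
      set mid : List (Fin n × Bool) := (l.take (l.length - 1)).drop 1 with hmid
      have hdecomp : l = (j, b) :: (mid ++ [(j, !b)]) := by
        have e1 : l.take (l.length - 1) ++ l.drop (l.length - 1) = l :=
          List.take_append_drop _ l
        have e2 : l.drop (l.length - 1) = [(j, !b)] := by
          rw [List.drop_eq_getElem_cons hL1, hgetlast]
          have h3 : l.drop (l.length - 1 + 1) = [] := by
            apply List.drop_eq_nil_of_le
            omega
          rw [h3]
        have htklen : 0 < (l.take (l.length - 1)).length := by
          rw [List.length_take]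
          omega
        have e3 : l.take (l.length - 1) = (j, b) :: mid := by
          conv_lhs => rw [← List.drop_zero (l := l.take (l.length - 1)),
            List.drop_eq_getElem_cons (i := 0) htklen]
          rw [List.getElem_take, hget0]
        rw [← e1, e2, e3]
        rfl
      have hinv : (FreeGroup.mk [(j, b)])⁻¹ = FreeGroup.mk [(j, !b)] := by
        rw [FreeGroup.inv_mk]
        simp [FreeGroup.invRev]
      have hw_eq : w = FreeGroup.mk [(j, b)] * FreeGroup.mk mid * (FreeGroup.mk [(j, b)])⁻¹ := by
        rw [hinv, FreeGroup.mul_mk, FreeGroup.mul_mk]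
        conv_lhs => rw [← FreeGroup.mk_toWord (x := w), ← hl, hdecomp]
        congr 1
      have hc1len : (FreeGroup.mk mid).toWord.length ≤ N := by
        rw [FreeGroup.toWord_mk]
        have h4 : (FreeGroup.reduce mid).length ≤ mid.length :=
          FreeGroup.Red.length_le FreeGroup.reduce.red
        have h5 : mid.length = l.length - 2 := by
          rw [hmid, List.length_drop, List.length_take]
          omega
        omega
      have hc1ne : FreeGroup.mk mid ≠ 1 := by
        intro hone
        apply hw
        rw [hw_eq, hone]
        group
      obtain ⟨u', c', heq', hne', hcyc'⟩ := ih (FreeGroup.mk mid) hc1len hc1ne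
      refine ⟨FreeGroup.mk [(j, b)] * u', c', ?_, hne', hcyc'⟩
      rw [hw_eq, heq']
      group
    · push_neg at hc
      refine ⟨1, w, by simp, hw, ?_⟩
      intro j b hb0 hb1
      exact absurd hb1 (hc j b hb0)


lemma toWord_no_cancel (w : FreeGroup (Fin n)) (p : ℕ) (j : Fin n) (b : Bool)
    (h0 : w.toWord.get? p = some (j, b)) (h1 : w.toWord.get? (p + 1) = some (j, !b)) :
    False := by
  classical
  have hp1 : p + 1 < w.toWord.length := by
    by_contra hcon
    push_neg at hcon
    rw [List.get?_eq_getElem?, List.getElem?_eq_none (by omega)] at h1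
    cases h1
  have hp : p < w.toWord.length := by omega
  have hv0 : w.toWord[p]'hp = (j, b) := by
    rw [List.get?_eq_getElem?, List.getElem?_eq_getElem hp] at h0
    exact Option.some_injective _ h0
  have hv1 : w.toWord[p+1]'hp1 = (j, !b) := by
    rw [List.get?_eq_getElem?, List.getElem?_eq_getElem hp1] at h1
    exact Option.some_injective _ h1
  have hdecomp : FreeGroup.reduce w.toWord
      = w.toWord.take p ++ (j, b) :: (j, !b) :: w.toWord.drop (p + 2) := by
    rw [FreeGroup.reduce_toWord]
    conv_lhs => rw [← List.take_append_drop p w.toWord,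
      List.drop_eq_getElem_cons hp, List.drop_eq_getElem_cons hp1, hv0, hv1]
  exact FreeGroup.reduce.not hdecomp

lemma rep_exists_fpf (w : FreeGroup (Fin n)) (hw : w ≠ 1) (h : ℝ ≃o ℝ)
    (hh : (∀ x, x < h x) ∨ (∀ x, h x < x)) :
    ∃ ρ : FreeGroup (Fin n) →* (ℝ ≃o ℝ), ρ w = h := by
  classical
  obtain ⟨u, c, hwuc, hc1, hcyc⟩ := cyc_decomp w hw
  have hL0 : 0 < c.toWord.length :=
    List.length_pos_iff.mpr (fun hnil => hc1 (FreeGroup.toWord_eq_nil_iff.mp hnil))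
  obtain ⟨ρ₀, hρ₀⟩ := word_rep_fpf c.toWord hL0 (toWord_no_cancel c) hcyc h hh
  rw [FreeGroup.mk_toWord] at hρ₀
  refine ⟨ρ₀.comp (MulAut.conj u⁻¹).toMonoidHom, ?_⟩
  show ρ₀ (u⁻¹ * w * u⁻¹⁻¹) = h
  rw [hwuc]
  have hsimp : u⁻¹ * (u * c * u⁻¹) * u⁻¹⁻¹ = c := by group
  rw [hsimp]
  exact hρ₀


noncomputable def sfun (t : ℝ) : ℝ := (1 + t / (1 + |t|)) / 2

noncomputable def rfun (s : ℝ) : ℝ := (2 * s - 1) / (1 - |2 * s - 1|)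

noncomputable def phi (a b t : ℝ) : ℝ := a + (b - a) * sfun t

noncomputable def psi (a b x : ℝ) : ℝ := rfun ((x - a) / (b - a))

lemma core_strictMono : StrictMono (fun t : ℝ => t / (1 + |t|)) := by
  intro t u htu
  have h1 : 0 < 1 + |t| := by positivity
  have h2 : 0 < 1 + |u| := by positivity
  rw [div_lt_div_iff₀ h1 h2]
  rcases le_or_gt 0 t with ht | ht <;> rcases le_or_gt 0 u with hu | hu
  · rw [abs_of_nonneg ht, abs_of_nonneg hu]; nlinarith
  · linarith
  · rw [abs_of_neg ht, abs_of_nonneg hu]; nlinarith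
  · rw [abs_of_neg ht, abs_of_neg hu]; nlinarith

lemma core_mem (t : ℝ) : t / (1 + |t|) ∈ Set.Ioo (-1 : ℝ) 1 := by
  have h1 : 0 < 1 + |t| := by positivity
  constructor
  · rw [lt_div_iff₀ h1]
    cases abs_cases t with
    | inl h => nlinarith [h.2]
    | inr h => nlinarith [h.1]
  · rw [div_lt_iff₀ h1]
    cases abs_cases t with
    | inl h => nlinarith [h.1]
    | inr h => nlinarith [h.2]

lemma rfun_core (t : ℝ) : rfun (sfun t) = t := by
  unfold rfun sfun
  have h1 : 0 < 1 + |t| := by positivity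
  have h2 : 2 * ((1 + t / (1 + |t|)) / 2) - 1 = t / (1 + |t|) := by ring
  rw [h2]
  have h3 : |t / (1 + |t|)| = |t| / (1 + |t|) := by
    rw [abs_div, abs_of_pos h1]
  rw [h3]
  have h4 : 1 - |t| / (1 + |t|) = 1 / (1 + |t|) := by
    field_simp
    ring
  rw [h4]
  field_simp

lemma sfun_mem (t : ℝ) : sfun t ∈ Set.Ioo (0 : ℝ) 1 := by
  obtain ⟨h1, h2⟩ := core_mem t
  unfold sfun
  constructor <;> [linarith; linarith]

lemma sfun_strictMono : StrictMono sfun := by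
  intro t u htu
  have := core_strictMono htu
  unfold sfun
  simp only at this ⊢
  linarith

lemma sfun_rfun (s : ℝ) (hs : s ∈ Set.Ioo (0 : ℝ) 1) : sfun (rfun s) = s := by
  obtain ⟨h0, h1⟩ := hs
  unfold sfun rfun
  set r : ℝ := 2 * s - 1 with hr
  have hrmem : -1 < r ∧ r < 1 := by constructor <;> [linarith; linarith]
  have habs : |r| < 1 := abs_lt.mpr hrmem
  have hpos : 0 < 1 - |r| := by linarith
  have h2 : |r / (1 - |r|)| = |r| / (1 - |r|) := by
    rw [abs_div, abs_of_pos hpos]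
  rw [h2]
  have h3 : 1 + |r| / (1 - |r|) = 1 / (1 - |r|) := by field_simp; ring
  rw [h3]
  have h5 : r / (1 - |r|) / (1 / (1 - |r|)) = r := by field_simp
  rw [h5, hr]
  ring

section PhiPsi

variable {a b : ℝ} (hab : a < b)

include hab

lemma phi_mem (t : ℝ) : phi a b t ∈ Set.Ioo a b := by
  obtain ⟨h1, h2⟩ := sfun_mem t
  unfold phi
  constructor <;> nlinarith

lemma phi_strictMono : StrictMono (phi a b) := by
  intro t u htu
  have := sfun_strictMono htu
  unfold phi
  nlinarith

lemma psi_phi (t : ℝ) : psi a b (phi a b t) = t := by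
  unfold psi phi
  have h1 : (a + (b - a) * sfun t - a) / (b - a) = sfun t := by
    have h2 : a + (b - a) * sfun t - a = (b - a) * sfun t := by ring
    rw [h2, mul_comm, mul_div_assoc, div_self (by linarith : b - a ≠ 0), mul_one]
  rw [h1, rfun_core]

lemma phi_psi (x : ℝ) (hx : x ∈ Set.Ioo a b) : phi a b (psi a b x) = x := by
  unfold psi phi
  have h1 : (x - a) / (b - a) ∈ Set.Ioo (0 : ℝ) 1 := by
    constructor
    · apply div_pos <;> linarith [hx.1, hx.2]
    · rw [div_lt_one (by linarith)]
      linarith [hx.2]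
  rw [sfun_rfun _ h1, mul_comm (b - a) ((x - a) / (b - a)), div_mul_cancel₀ _
    (by linarith : b - a ≠ 0)]
  ring

lemma psi_lt_psi (x y : ℝ) (hx : x ∈ Set.Ioo a b) (hy : y ∈ Set.Ioo a b) (hxy : x < y) :
    psi a b x < psi a b y := by
  by_contra hcon
  push_neg at hcon
  rcases lt_or_eq_of_le hcon with h | h
  · have := phi_strictMono hab h
    rw [phi_psi hab x hx, phi_psi hab y hy] at this
    linarith
  · have : phi a b (psi a b y) = phi a b (psi a b x) := by rw [h]
    rw [phi_psi hab x hx, phi_psi hab y hy] at this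
    linarith

lemma psi_mem_of_ne (x : ℝ) : True := trivial

end PhiPsi

/-- transporting an order iso fixing `a`, `b` to an order iso of all of ℝ. -/
lemma transport_exists (a b : ℝ) (hab : a < b) (G : ℝ ≃o ℝ) (ha : G a = a) (hb : G b = b) :
    ∃ H : ℝ ≃o ℝ, ∀ t, H t = psi a b (G (phi a b t)) := by
  have hGmem : ∀ x ∈ Set.Ioo a b, G x ∈ Set.Ioo a b := by
    rintro x ⟨h1, h2⟩
    constructor
    · rw [← ha]; exact G.strictMono h1
    · rw [← hb]; exact G.strictMono h2
  have hGmem' : ∀ x ∈ Set.Ioo a b, G.symm x ∈ Set.Ioo a b := by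
    rintro x ⟨h1, h2⟩
    constructor
    · rw [← G.symm_apply_apply a, ha]
      exact G.symm.strictMono h1
    · rw [← G.symm_apply_apply b, hb]
      exact G.symm.strictMono h2
  set f : ℝ → ℝ := fun t => psi a b (G (phi a b t)) with hf
  have hmono : StrictMono f := by
    intro t u htu
    apply psi_lt_psi hab _ _ (hGmem _ (phi_mem hab t)) (hGmem _ (phi_mem hab u))
    exact G.strictMono (phi_strictMono hab htu)
  have hsurj : Function.Surjective f := by
    intro t
    refine ⟨psi a b (G.symm (phi a b t)), ?_⟩
    rw [hf]
    simp only
    rw [phi_psi hab _ (hGmem' _ (phi_mem hab t)), G.apply_symm_apply, psi_phi hab]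
  exact ⟨hmono.orderIsoOfSurjective f hsurj, fun t => by
    rw [StrictMono.coe_orderIsoOfSurjective f hmono hsurj]⟩

/-- extending an order iso of ℝ to one supported on `(a,b)` via `phi`. -/
lemma extend_exists (a b : ℝ) (hab : a < b) (h : ℝ ≃o ℝ) :
    ∃ G : ℝ ≃o ℝ, (∀ t, G (phi a b t) = phi a b (h t)) ∧
      (∀ x, x ∉ Set.Ioo a b → G x = x) := by
  classical
  set f : ℝ → ℝ := fun x => if x ∈ Set.Ioo a b then phi a b (h (psi a b x)) else x with hf
  have hval : ∀ x ∈ Set.Ioo a b, f x = phi a b (h (psi a b x)) := by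
    intro x hx
    rw [hf]
    simp only [if_pos hx]
  have hvalout : ∀ x, x ∉ Set.Ioo a b → f x = x := by
    intro x hx
    rw [hf]
    simp only [if_neg hx]
  have hmem : ∀ x ∈ Set.Ioo a b, f x ∈ Set.Ioo a b := by
    intro x hx
    rw [hval x hx]
    exact phi_mem hab _
  have hmono : StrictMono f := by
    intro x y hxy
    by_cases hx : x ∈ Set.Ioo a b <;> by_cases hy : y ∈ Set.Ioo a b
    · rw [hval x hx, hval y hy]
      exact phi_strictMono hab (h.strictMono (psi_lt_psi hab x y hx hy hxy))
    · rw [hval x hx, hvalout y hy]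
      have h1 : (phi a b (h (psi a b x))) < b := (phi_mem hab _).2
      have h2 : b ≤ y := by
        by_contra hcon
        push_neg at hcon
        exact hy ⟨lt_trans hx.1 hxy, hcon⟩
      linarith
    · rw [hvalout x hx, hval y hy]
      have h1 : a < phi a b (h (psi a b y)) := (phi_mem hab _).1
      have h2 : x ≤ a := by
        by_contra hcon
        push_neg at hcon
        exact hx ⟨hcon, lt_trans hxy hy.2⟩
      linarith
    · rw [hvalout x hx, hvalout y hy]
      exact hxy
  have hsurj : Function.Surjective f := by
    intro y
    by_cases hy : y ∈ Set.Ioo a b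
    · refine ⟨phi a b (h.symm (psi a b y)), ?_⟩
      rw [hval _ (phi_mem hab _), psi_phi hab, h.apply_symm_apply, phi_psi hab _ hy]
    · exact ⟨y, hvalout y hy⟩
  refine ⟨hmono.orderIsoOfSurjective f hsurj, ?_, ?_⟩ <;>
    rw [StrictMono.coe_orderIsoOfSurjective f hmono hsurj]
  · intro t
    rw [hval _ (phi_mem hab t), psi_phi hab]
  · exact hvalout


section Components

variable {n : ℕ}

lemma rep_exists_fixing (w : FreeGroup (Fin n)) (hw : w ≠ 1) (G : ℝ ≃o ℝ)
    (hout : ∀ x, x ∉ Set.Ioo (0:ℝ) 1 → G x = x) :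
    ∃ ρ : FreeGroup (Fin n) →* (ℝ ≃o ℝ), ρ w = G ∧ ∀ v x, G x = x → (ρ v) x = x := by
  classical
  set IsComp : ℝ × ℝ → Prop := fun p =>
    p.1 < p.2 ∧ G p.1 = p.1 ∧ G p.2 = p.2 ∧ ∀ y, p.1 < y → y < p.2 → G y ≠ y with hIsComp
  have hGcont : Continuous G := OrderIso.continuous G
  have hG0 : G 0 = 0 := hout 0 (by simp)
  have hG1 : G 1 = 1 := hout 1 (by simp)
  -- membership of non-fixed points in (0,1)
  have hmemU : ∀ x : ℝ, G x ≠ x → x ∈ Set.Ioo (0:ℝ) 1 := by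
    intro x hx
    by_contra hcon
    exact hx (hout x hcon)
  -- sign dichotomy on components
  have hsign : ∀ p : ℝ × ℝ, IsComp p →
      (∀ y, p.1 < y → y < p.2 → y < G y) ∨ (∀ y, p.1 < y → y < p.2 → G y < y) := by
    rintro ⟨α, β⟩ ⟨hab, ha, hb, hnofix⟩
    by_contra hcon
    push_neg at hcon
    obtain ⟨⟨y₁, hy₁a, hy₁b, hy₁⟩, ⟨y₂, hy₂a, hy₂b, hy₂⟩⟩ := hcon
    have hy₁' : G y₁ < y₁ := lt_of_le_of_ne hy₁ (hnofix y₁ hy₁a hy₁b)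
    have hy₂' : y₂ < G y₂ := lt_of_le_of_ne hy₂ (fun h => (hnofix y₂ hy₂a hy₂b) h.symm)
    have hy12 : y₁ ≠ y₂ := by
      intro h
      rw [h] at hy₁'
      linarith
    rcases lt_or_gt_of_ne hy12 with hlt | hgt
    · obtain ⟨z, hz, hfz⟩ := intermediate_value_Icc hlt.le
        ((hGcont.sub continuous_id).continuousOn)
        (show (0:ℝ) ∈ Set.Icc (G y₁ - y₁) (G y₂ - y₂) from ⟨by linarith, by linarith⟩)
      have hzfix : G z = z := by
        have h5 : G z - z = 0 := hfz
        linarith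
      exact hnofix z (lt_of_lt_of_le hy₁a hz.1) (lt_of_le_of_lt hz.2 hy₂b) hzfix
    · obtain ⟨z, hz, hfz⟩ := intermediate_value_Icc' hgt.le
        ((hGcont.sub continuous_id).continuousOn)
        (show (0:ℝ) ∈ Set.Icc (G y₁ - y₁) (G y₂ - y₂) from ⟨by linarith, by linarith⟩)
      have hzfix : G z = z := by
        have h5 : G z - z = 0 := hfz
        linarith
      exact hnofix z (lt_of_lt_of_le hy₂a hz.1) (lt_of_le_of_lt hz.2 hy₁b) hzfix
  -- per-pair transported homeomorphism and representation
  have hmain : ∀ p : ℝ × ℝ, ∃ (H : ℝ ≃o ℝ) (σ : FreeGroup (Fin n) →* (ℝ ≃o ℝ)),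
      IsComp p → ((∀ t, H t = psi p.1 p.2 (G (phi p.1 p.2 t))) ∧ σ w = H) := by
    intro p
    by_cases hp : IsComp p
    · obtain ⟨hab, ha, hb, hnofix⟩ := hp
      obtain ⟨H, hH⟩ := transport_exists p.1 p.2 hab G ha hb
      have hGmem : ∀ x ∈ Set.Ioo p.1 p.2, G x ∈ Set.Ioo p.1 p.2 := by
        rintro x ⟨h1, h2⟩
        exact ⟨ha ▸ G.strictMono h1, hb ▸ G.strictMono h2⟩
      have hsgn : (∀ t, t < H t) ∨ (∀ t, H t < t) := by
        rcases hsign p ⟨hab, ha, hb, hnofix⟩ with hup | hdown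
        · left
          intro t
          rw [hH t]
          have hmem := phi_mem hab t
          have h2 : phi p.1 p.2 t < G (phi p.1 p.2 t) := hup _ hmem.1 hmem.2
          have := psi_lt_psi hab _ _ hmem (hGmem _ hmem) h2
          rwa [psi_phi hab] at this
        · right
          intro t
          rw [hH t]
          have hmem := phi_mem hab t
          have h2 : G (phi p.1 p.2 t) < phi p.1 p.2 t := hdown _ hmem.1 hmem.2
          have := psi_lt_psi hab _ _ (hGmem _ hmem) hmem h2
          rwa [psi_phi hab] at this
      obtain ⟨σ, hσ⟩ := rep_exists_fpf w hw H hsgn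
      exact ⟨H, σ, fun _ => ⟨hH, hσ⟩⟩
    · exact ⟨1, 1, fun h => absurd h hp⟩
  choose Hp σp hps using hmain
  -- the component pair of a non-fixed point
  have hA : ∀ x : ℝ, G x ≠ x → ∃ p : ℝ × ℝ, IsComp p ∧ p.1 < x ∧ x < p.2 ∧
      (∀ y, G y = y → y < x → y ≤ p.1) ∧ (∀ y, G y = y → x < y → p.2 ≤ y) := by
    intro x hx
    obtain ⟨hx0, hx1⟩ := hmemU x hx
    set A : Set ℝ := {y | G y = y ∧ y ≤ x} with hAd
    set B : Set ℝ := {y | G y = y ∧ x ≤ y} with hBd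
    have hAne : A.Nonempty := ⟨0, hG0, hx0.le⟩
    have hBne : B.Nonempty := ⟨1, hG1, hx1.le⟩
    have hAbdd : BddAbove A := ⟨x, fun y hy => hy.2⟩
    have hBbdd : BddBelow B := ⟨x, fun y hy => hy.2⟩
    have hAc : IsClosed A := by
      have : A = {y | G y = y} ∩ Set.Iic x := rfl
      rw [this]
      exact (isClosed_eq hGcont continuous_id).inter isClosed_Iic
    have hBc : IsClosed B := by
      have : B = {y | G y = y} ∩ Set.Ici x := rfl
      rw [this]
      exact (isClosed_eq hGcont continuous_id).inter isClosed_Ici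
    set α := sSup A with hα
    set β := sInf B with hβ
    have hαmem : α ∈ A := hAc.csSup_mem hAne hAbdd
    have hβmem : β ∈ B := hBc.csInf_mem hBne hBbdd
    have hαx : α < x := lt_of_le_of_ne hαmem.2 (fun h => hx (h ▸ hαmem.1))
    have hxβ : x < β := lt_of_le_of_ne hβmem.2 (fun h => hx (by rw [h]; exact hβmem.1))
    refine ⟨(α, β), ⟨lt_trans hαx hxβ, hαmem.1, hβmem.1, ?_⟩, hαx, hxβ, ?_, ?_⟩
    · intro y hy1 hy2 hyfix
      rcases le_or_gt y x with hc | hc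
      · exact absurd (le_csSup hAbdd ⟨hyfix, hc⟩) (not_le.2 hy1)
      · exact absurd (csInf_le hBbdd ⟨hyfix, hc.le⟩) (not_le.2 hy2)
    · intro y hyfix hyx
      exact le_csSup hAbdd ⟨hyfix, hyx.le⟩
    · intro y hyfix hxy
      exact csInf_le hBbdd ⟨hyfix, hxy.le⟩
  choose cp hcp using hA
  -- uniqueness / same-component lemma
  have hsame : ∀ (x : ℝ) (hx : G x ≠ x) (x' : ℝ) (hx' : G x' ≠ x'),
      (cp x hx).1 < x' → x' < (cp x hx).2 → cp x' hx' = cp x hx := by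
    intro x hx x' hx' h1 h2
    obtain ⟨⟨hab, ha, hb, hnofix⟩, hax, hxb, hmax, hmin⟩ := hcp x hx
    obtain ⟨⟨hab', ha', hb', hnofix'⟩, hax', hxb', hmax', hmin'⟩ := hcp x' hx'
    have e1 : (cp x' hx').1 = (cp x hx).1 := by
      apply le_antisymm
      · by_contra hcon
        push_neg at hcon
        exact hnofix _ hcon (lt_trans hax' h2) ha'
      · exact hmax' _ ha h1
    have e2 : (cp x' hx').2 = (cp x hx).2 := by
      apply le_antisymm
      · exact hmin' _ hb h2
      · by_contra hcon
        push_neg at hcon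
        exact hnofix _ (lt_trans h1 hxb') hcon hb'
    exact Prod.ext e1 e2
  -- convenient accessors
  have hcomp1 : ∀ x (hx : G x ≠ x), IsComp (cp x hx) := fun x hx => (hcp x hx).1
  have habC : ∀ x (hx : G x ≠ x), (cp x hx).1 < (cp x hx).2 := fun x hx => (hcomp1 x hx).1
  have hfix1 : ∀ x (hx : G x ≠ x), G (cp x hx).1 = (cp x hx).1 := fun x hx => (hcomp1 x hx).2.1
  have hfix2 : ∀ x (hx : G x ≠ x), G (cp x hx).2 = (cp x hx).2 := fun x hx => (hcomp1 x hx).2.2.1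
  have hnofixC : ∀ x (hx : G x ≠ x), ∀ y, (cp x hx).1 < y → y < (cp x hx).2 → G y ≠ y :=
    fun x hx => (hcomp1 x hx).2.2.2
  have hlt1 : ∀ x (hx : G x ≠ x), (cp x hx).1 < x := fun x hx => (hcp x hx).2.1
  have hlt2 : ∀ x (hx : G x ≠ x), x < (cp x hx).2 := fun x hx => (hcp x hx).2.2.1
  have hmax : ∀ x (hx : G x ≠ x), ∀ y, G y = y → y < x → y ≤ (cp x hx).1 :=
    fun x hx => (hcp x hx).2.2.2.1
  have hmin : ∀ x (hx : G x ≠ x), ∀ y, G y = y → x < y → (cp x hx).2 ≤ y :=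
    fun x hx => (hcp x hx).2.2.2.2
  have hxmemC : ∀ x (hx : G x ≠ x), x ∈ Set.Ioo (cp x hx).1 (cp x hx).2 :=
    fun x hx => ⟨hlt1 x hx, hlt2 x hx⟩
  have hGmemC : ∀ x (hx : G x ≠ x), G x ∈ Set.Ioo (cp x hx).1 (cp x hx).2 := by
    intro x hx
    constructor
    · rw [← hfix1 x hx]
      exact G.strictMono (hlt1 x hx)
    · rw [← hfix2 x hx]
      exact G.strictMono (hlt2 x hx)
  -- ordering between distinct components
  have horder : ∀ x (hx : G x ≠ x) y (hy : G y ≠ y), x < y → (cp x hx).2 ≤ y →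
      (cp x hx).2 ≤ (cp y hy).1 := by
    intro x hx y hy hxy h2
    apply hmax y hy _ (hfix2 x hx)
    rcases lt_or_eq_of_le h2 with h | h
    · exact h
    · exact absurd (h ▸ hfix2 x hx) hy
  -- glued generators
  have hFex : ∀ i : Fin n, ∃ Fi : ℝ ≃o ℝ,
      (∀ x (hx : G x ≠ x), Fi x = phi (cp x hx).1 (cp x hx).2
        ((σp (cp x hx) (FreeGroup.of i)) (psi (cp x hx).1 (cp x hx).2 x))) ∧
      (∀ x, G x = x → Fi x = x) := by
    intro i
    set Fr : ℝ → ℝ := fun x => if hx : G x ≠ x then phi (cp x hx).1 (cp x hx).2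
        ((σp (cp x hx) (FreeGroup.of i)) (psi (cp x hx).1 (cp x hx).2 x)) else x with hFr
    have hval : ∀ x (hx : G x ≠ x), Fr x = phi (cp x hx).1 (cp x hx).2
        ((σp (cp x hx) (FreeGroup.of i)) (psi (cp x hx).1 (cp x hx).2 x)) :=
      fun x hx => dif_pos hx
    have hvalout : ∀ x, G x = x → Fr x = x := fun x hx => dif_neg (not_not.mpr hx)
    have hvmem : ∀ x (hx : G x ≠ x), Fr x ∈ Set.Ioo (cp x hx).1 (cp x hx).2 := by
      intro x hx
      rw [hval x hx]
      exact phi_mem (habC x hx) _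
    have hmono : StrictMono Fr := by
      intro x y hxy
      by_cases hx : G x ≠ x <;> by_cases hy : G y ≠ y
      · rcases lt_or_ge y (cp x hx).2 with hyC | hyC
        · have hcpeq : cp y hy = cp x hx :=
            hsame x hx y hy (lt_trans (hlt1 x hx) hxy) hyC
          rw [hval x hx, hval y hy, hcpeq]
          apply phi_strictMono (habC x hx)
          apply (σp (cp x hx) (FreeGroup.of i)).strictMono
          exact psi_lt_psi (habC x hx) x y (hxmemC x hx)
            ⟨lt_trans (hlt1 x hx) hxy, hyC⟩ hxy
        · have h1 : Fr x < (cp x hx).2 := (hvmem x hx).2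
          have h2 : (cp y hy).1 < Fr y := (hvmem y hy).1
          have h3 := horder x hx y hy hxy hyC
          linarith
      · push_neg at hy
        rw [hvalout y hy]
        have h1 : Fr x < (cp x hx).2 := (hvmem x hx).2
        have h2 : (cp x hx).2 ≤ y := hmin x hx y hy hxy
        linarith
      · push_neg at hx
        rw [hvalout x hx]
        have h1 : (cp y hy).1 < Fr y := (hvmem y hy).1
        have h2 : x ≤ (cp y hy).1 := hmax y hy x hx hxy
        linarith
      · push_neg at hx hy
        rw [hvalout x hx, hvalout y hy]
        exact hxy
    have hsurj : Function.Surjective Fr := by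
      intro z
      by_cases hz : G z ≠ z
      · set x := phi (cp z hz).1 (cp z hz).2
          (((σp (cp z hz) (FreeGroup.of i)).symm) (psi (cp z hz).1 (cp z hz).2 z)) with hxd
        have hxmem : x ∈ Set.Ioo (cp z hz).1 (cp z hz).2 := phi_mem (habC z hz) _
        have hxU : G x ≠ x := hnofixC z hz x hxmem.1 hxmem.2
        have hcpeq : cp x hxU = cp z hz := hsame z hz x hxU hxmem.1 hxmem.2
        refine ⟨x, ?_⟩
        rw [hval x hxU, hcpeq, hxd, psi_phi (habC z hz),
          OrderIso.apply_symm_apply, phi_psi (habC z hz) z (hxmemC z hz)]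
      · push_neg at hz
        exact ⟨z, hvalout z hz⟩
    have hcoe : ⇑(hmono.orderIsoOfSurjective Fr hsurj) = Fr :=
      StrictMono.coe_orderIsoOfSurjective Fr hmono hsurj
    refine ⟨hmono.orderIsoOfSurjective Fr hsurj, ?_, ?_⟩
    · intro x hx
      rw [hcoe]
      exact hval x hx
    · intro x hx
      rw [hcoe]
      exact hvalout x hx
  choose F hFin hFout using hFex
  -- fixed points are fixed by the whole representation
  have Pfix : ∀ v : FreeGroup (Fin n), ∀ x, G x = x → ((FreeGroup.lift F) v) x = x := by
    intro v
    refine FreeGroup.induction_on v ?_ ?_ ?_ ?_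
    · intro x hx
      rw [map_one]
      rfl
    · intro i x hx
      rw [FreeGroup.lift_apply_of]
      exact hFout i x hx
    · intro i ih x hx
      rw [map_inv]
      show ((FreeGroup.lift F) (pure i)).symm x = x
      conv_lhs => rw [← ih x hx]
      exact OrderIso.symm_apply_apply _ _
    · intro v₁ v₂ ih₁ ih₂ x hx
      rw [map_mul]
      show ((FreeGroup.lift F) v₁) (((FreeGroup.lift F) v₂) x) = x
      rw [ih₂ x hx, ih₁ x hx]
  -- value of the representation on components
  have Pcomp : ∀ v : FreeGroup (Fin n), ∀ x (hx : G x ≠ x),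
      ((FreeGroup.lift F) v) x = phi (cp x hx).1 (cp x hx).2
        ((σp (cp x hx) v) (psi (cp x hx).1 (cp x hx).2 x)) := by
    intro v
    refine FreeGroup.induction_on v ?_ ?_ ?_ ?_
    · intro x hx
      rw [map_one, map_one]
      show x = phi (cp x hx).1 (cp x hx).2 (psi (cp x hx).1 (cp x hx).2 x)
      rw [phi_psi (habC x hx) x (hxmemC x hx)]
    · intro i x hx
      rw [FreeGroup.lift_apply_of]
      exact hFin i x hx
    · intro i ih x hx
      rw [map_inv, map_inv]
      set x₀ := phi (cp x hx).1 (cp x hx).2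
        ((σp (cp x hx) (FreeGroup.of i)).symm (psi (cp x hx).1 (cp x hx).2 x)) with hx₀d
      have hmem₀ : x₀ ∈ Set.Ioo (cp x hx).1 (cp x hx).2 := phi_mem (habC x hx) _
      have hx₀U : G x₀ ≠ x₀ := hnofixC x hx x₀ hmem₀.1 hmem₀.2
      have hcpeq : cp x₀ hx₀U = cp x hx := hsame x hx x₀ hx₀U hmem₀.1 hmem₀.2
      have hFi : ((FreeGroup.lift F) (FreeGroup.of i)) x₀ = x := by
        rw [ih x₀ hx₀U, hcpeq, hx₀d, psi_phi (habC x hx),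
          OrderIso.apply_symm_apply, phi_psi (habC x hx) x (hxmemC x hx)]
      show ((FreeGroup.lift F) (FreeGroup.of i)).symm x = _
      conv_lhs => rw [← hFi, OrderIso.symm_apply_apply]
      rw [hx₀d]
      rfl
    · intro v₁ v₂ ih₁ ih₂ x hx
      rw [map_mul, map_mul]
      show ((FreeGroup.lift F) v₁) (((FreeGroup.lift F) v₂) x) = _
      rw [ih₂ x hx]
      set x₂ := phi (cp x hx).1 (cp x hx).2
        ((σp (cp x hx) v₂) (psi (cp x hx).1 (cp x hx).2 x)) with hx₂d
      have hmem₂ : x₂ ∈ Set.Ioo (cp x hx).1 (cp x hx).2 := phi_mem (habC x hx) _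
      have hx₂U : G x₂ ≠ x₂ := hnofixC x hx x₂ hmem₂.1 hmem₂.2
      have hcpeq : cp x₂ hx₂U = cp x hx := hsame x hx x₂ hx₂U hmem₂.1 hmem₂.2
      rw [ih₁ x₂ hx₂U, hcpeq, hx₂d, psi_phi (habC x hx)]
      rfl
  refine ⟨FreeGroup.lift F, ?_, fun v x hx => Pfix v x hx⟩
  ext x
  by_cases hx : G x ≠ x
  · rw [Pcomp w x hx]
    obtain ⟨hHspec, hσw⟩ := hps (cp x hx) (hcomp1 x hx)
    rw [hσw, hHspec (psi (cp x hx).1 (cp x hx).2 x),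
      phi_psi (habC x hx) x (hxmemC x hx),
      phi_psi (habC x hx) (G x) (hGmemC x hx)]
  · push_neg at hx
    rw [Pfix w x hx, hx]

end Components

end WordMapAux

open WordMapAux in
/-- Surjectivity of the word map: for every nontrivial word w in the free group
Fₙ and every g ∈ Homeo₊(ℝ) there is a representation ρ : Fₙ → Homeo₊(ℝ) with
ρ(w) = g. -/
theorem word_map_surjective (n : ℕ) (hn : 1 ≤ n) (w : FreeGroup (Fin n)) (hw : w ≠ 1)
    (g : ℝ ≃o ℝ) :
    ∃ ρ : FreeGroup (Fin n) →* (ℝ ≃o ℝ), ρ w = g := by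
  classical
  obtain ⟨G, hGphi, hGout⟩ := extend_exists 0 1 one_pos g
  obtain ⟨ρG, hρGw, hρGfix⟩ := rep_exists_fixing w hw G hGout
  have hfix01 : ∀ v : FreeGroup (Fin n), (ρG v) 0 = 0 ∧ (ρG v) 1 = 1 := fun v =>
    ⟨hρGfix v 0 (hGout 0 (by simp)), hρGfix v 1 (hGout 1 (by simp))⟩
  have hTex : ∀ v, ∃ H : ℝ ≃o ℝ, ∀ t, H t = psi 0 1 ((ρG v) (phi 0 1 t)) := fun v =>
    transport_exists 0 1 one_pos (ρG v) (hfix01 v).1 (hfix01 v).2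
  choose T hT using hTex
  have hpres : ∀ v x, x ∈ Set.Ioo (0:ℝ) 1 → (ρG v) x ∈ Set.Ioo (0:ℝ) 1 := by
    intro v x hx
    constructor
    · rw [← (hfix01 v).1]
      exact (ρG v).strictMono hx.1
    · rw [← (hfix01 v).2]
      exact (ρG v).strictMono hx.2
  have hmul : ∀ v₁ v₂, T (v₁ * v₂) = T v₁ * T v₂ := by
    intro v₁ v₂
    ext t
    show T (v₁ * v₂) t = T v₁ (T v₂ t)
    rw [hT, hT, hT, map_mul]
    rw [phi_psi one_pos _ (hpres v₂ _ (phi_mem one_pos t))]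
    rfl
  refine ⟨MonoidHom.mk' T hmul, ?_⟩
  show T w = g
  ext t
  rw [hT w t, hρGw, hGphi t, psi_phi one_pos]
end
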